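/- arXiv:0804.3104 — 4 statements merged into one kernel-verified Lean document; each statement's English description precedes it below -/
import Mathlib

section
/- Let d ≥ 2 and let F, G : ℝ → ℝ be increasing homeomorphisms with F(x+1) = F(x) + d, G(x+1) = G(x) + d for all x and F(0) = G(0) = 0, and suppose both F and G are uniformly symmetric. Then there exists an increasing homeomorphism H : ℝ → ℝ with H(x+1) = H(x) + 1 and F ∘ H = H ∘ G, and moreover H is quasisymmetric: there exists M ≥ 1 such that M⁻¹ ≤ (H(x+t) − H(x))/(H(x) − H(x−t)) ≤ M for all x ∈ ℝ and t > 0. -/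
open Filter

/-- `Finv F n` is the inverse of the `n`-th iterate `F^[n]`. -/
noncomputable def Finv (F : ℝ → ℝ) (n : ℕ) : ℝ → ℝ := Function.invFun (F^[n])

/-- Uniform symmetry of a lifted circle endomorphism. -/
def UnifSymm (F : ℝ → ℝ) : Prop :=
  ∃ ε : ℝ → ℝ, (∀ t : ℝ, 0 < t → 0 < ε t) ∧ (∃ B : ℝ, ∀ t : ℝ, 0 < t → ε t ≤ B) ∧
    Tendsto ε (nhdsWithin 0 (Set.Ioi 0)) (nhds 0) ∧
    ∀ x t : ℝ, 0 < t → ∀ n : ℕ, 1 ≤ n →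
      1 / (1 + ε t) ≤ (Finv F n (x + t) - Finv F n x) / (Finv F n x - Finv F n (x - t)) ∧
      (Finv F n (x + t) - Finv F n x) / (Finv F n x - Finv F n (x - t)) ≤ 1 + ε t

namespace Stmt7

structure Nice (d : ℕ) (E : ℝ → ℝ) (K : ℝ) : Prop where
  mono : StrictMono E
  bij : Function.Bijective E
  deg : ∀ x : ℝ, E (x + 1) = E x + d
  zero : E 0 = 0
  hK : 1 < K
  qs : ∀ (n : ℕ) (x t : ℝ), 0 < t →
      Finv E n x - Finv E n (x - t) ≤ K * (Finv E n (x + t) - Finv E n x) ∧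
      Finv E n (x + t) - Finv E n x ≤ K * (Finv E n x - Finv E n (x - t))

variable {d : ℕ} {E : ℝ → ℝ} {K : ℝ}

section Basic

variable (h : Nice d E K) (hd : 2 ≤ d)
include h

theorem iter_mono (n : ℕ) : StrictMono (E^[n]) := h.mono.iterate n

theorem iter_bij (n : ℕ) : Function.Bijective (E^[n]) := h.bij.iterate n

theorem finv_iter (n : ℕ) (y : ℝ) : E^[n] (Finv E n y) = y :=
  Function.invFun_eq ((iter_bij h n).surjective y)

theorem iter_finv (n : ℕ) (x : ℝ) : Finv E n (E^[n] x) = x :=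
  Function.leftInverse_invFun (iter_bij h n).injective x

theorem finv_mono (n : ℕ) : StrictMono (Finv E n) := by
  intro a b hab
  by_contra hc
  push_neg at hc
  have := (iter_mono h n).monotone hc
  rw [finv_iter h, finv_iter h] at this
  exact absurd this (not_le.2 hab)

theorem finv_zero (y : ℝ) : Finv E 0 y = y := by
  have := finv_iter h 0 y
  simpa using this

theorem deg_int (x : ℝ) (m : ℤ) : E (x + m) = E x + m * d := by
  induction m using Int.induction_on with
  | zero => simp
  | succ k ih =>
      have : x + ((k : ℤ) + 1 : ℤ) = (x + (k : ℤ)) + 1 := by push_cast; ring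
      rw [this, h.deg, ih]; push_cast; ring
  | pred k ih =>
      have h2 : E ((x + (-(k : ℤ) - 1 : ℤ)) + 1) = E (x + (-(k : ℤ) - 1 : ℤ)) + d := h.deg _
      have h3 : (x + (-(k : ℤ) - 1 : ℤ)) + 1 = x + (-(k : ℤ) : ℤ) := by push_cast; ring
      rw [h3, ih] at h2
      have := h2.symm
      push_cast
      push_cast at this
      linarith

theorem iter_deg_int (n : ℕ) (x : ℝ) (m : ℤ) :
    E^[n] (x + m) = E^[n] x + m * (d : ℝ) ^ n := by
  induction n generalizing m with
  | zero => simp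
  | succ n ih =>
      rw [Function.iterate_succ_apply', Function.iterate_succ_apply']
      have h1 : E^[n] (x + m) = E^[n] x + ((m * (d:ℤ)^n : ℤ) : ℝ) := by
        rw [ih m]; push_cast; ring
      rw [h1, deg_int h]
      push_cast; ring

theorem iter_int (n : ℕ) (m : ℤ) : E^[n] (m : ℝ) = ((d : ℝ) ^ n * m : ℝ) := by
  have h0 : E^[n] (0 : ℝ) = 0 := by
    induction n with
    | zero => simp
    | succ n ih => rw [Function.iterate_succ_apply', ih, h.zero]
  have := iter_deg_int h n 0 m
  rw [zero_add, h0] at this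
  rw [this]; ring

theorem finv_shift (n : ℕ) (y : ℝ) (m : ℤ) :
    Finv E n (y + m * (d : ℝ) ^ n) = Finv E n y + m := by
  apply (iter_bij h n).injective
  rw [finv_iter h, iter_deg_int h, finv_iter h]

theorem finv_step (n : ℕ) (m : ℤ) :
    Finv E (n + 1) ((((d : ℤ) * m : ℤ) : ℝ)) = Finv E n (m : ℝ) := by
  apply (iter_bij h (n + 1)).injective
  rw [finv_iter h]
  rw [Function.iterate_succ_apply', finv_iter h]
  have : E ((m : ℤ) : ℝ) = (((d : ℤ) * m : ℤ) : ℝ) := by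
    have := deg_int h 0 m
    rw [zero_add, h.zero, zero_add] at this
    rw [this]; push_cast; ring
  exact this.symm

theorem finv_deep (n k : ℕ) (m : ℤ) :
    Finv E (n + k) ((((d : ℤ) ^ k * m : ℤ) : ℝ)) = Finv E n (m : ℝ) := by
  induction k with
  | zero => simp
  | succ k ih =>
      have h1 : ((d : ℤ) ^ (k + 1) * m : ℤ) = (d : ℤ) * ((d : ℤ) ^ k * m) := by ring
      rw [h1]
      have := finv_step h (n + k) ((d : ℤ) ^ k * m)
      rw [show n + (k + 1) = (n + k) + 1 from rfl, this, ih]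

end Basic

end Stmt7

set_option linter.unusedSectionVars false
namespace Stmt7

/-- partition point -/
noncomputable def pt (E : ℝ → ℝ) (n : ℕ) (m : ℤ) : ℝ := Finv E n (m : ℝ)

/-- length of partition interval `[pt n m, pt n (m+1)]` -/
noncomputable def len (E : ℝ → ℝ) (n : ℕ) (m : ℤ) : ℝ := pt E n (m + 1) - pt E n m

variable {d : ℕ} {E : ℝ → ℝ} {K : ℝ}

section Part2

variable (h : Nice d E K) (hd : 2 ≤ d)
include h

theorem pt_strictMono (n : ℕ) : StrictMono (pt E n) := by
  intro a b hab
  exact finv_mono h n (by exact_mod_cast hab)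

theorem len_pos (n : ℕ) (m : ℤ) : 0 < len E n m :=
  sub_pos.2 (pt_strictMono h n (lt_add_one m))

theorem K_pos : (0:ℝ) < K := lt_trans one_pos h.hK

theorem K_one_le : (1:ℝ) ≤ K := le_of_lt h.hK

theorem len_zero (m : ℤ) : len E 0 m = 1 := by
  simp [len, pt, finv_zero h]

/-- block quasisymmetry at partition points, stated at real center/scale -/
theorem qs_blocks (n : ℕ) (x t : ℝ) (ht : 0 < t) :
    Finv E n x - Finv E n (x - t) ≤ K * (Finv E n (x + t) - Finv E n x) ∧
    Finv E n (x + t) - Finv E n x ≤ K * (Finv E n x - Finv E n (x - t)) :=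
  h.qs n x t ht

theorem len_adj_right (n : ℕ) (m : ℤ) : len E n (m + 1) ≤ K * len E n m := by
  have := (h.qs n (((m : ℤ) + 1 : ℤ) : ℝ) 1 one_pos).2
  have e1 : (((m : ℤ) + 1 : ℤ) : ℝ) + 1 = (((m : ℤ) + 2 : ℤ) : ℝ) := by push_cast; ring
  have e2 : (((m : ℤ) + 1 : ℤ) : ℝ) - 1 = ((m : ℤ) : ℝ) := by push_cast; ring
  rw [e1, e2] at this
  simpa [len, pt, show m + 1 + 1 = m + 2 from by ring] using this

theorem len_adj_left (n : ℕ) (m : ℤ) : len E n m ≤ K * len E n (m + 1) := by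
  have := (h.qs n (((m : ℤ) + 1 : ℤ) : ℝ) 1 one_pos).1
  have e1 : (((m : ℤ) + 1 : ℤ) : ℝ) + 1 = (((m : ℤ) + 2 : ℤ) : ℝ) := by push_cast; ring
  have e2 : (((m : ℤ) + 1 : ℤ) : ℝ) - 1 = ((m : ℤ) : ℝ) := by push_cast; ring
  rw [e1, e2] at this
  simpa [len, pt, show m + 1 + 1 = m + 2 from by ring] using this

theorem len_far_right (n : ℕ) (m : ℤ) (j : ℕ) :
    len E n (m + j) ≤ K ^ j * len E n m := by
  induction j with
  | zero => simp
  | succ j ih =>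
      have h1 : len E n (m + (j + 1 : ℕ)) ≤ K * len E n (m + j) := by
        have := len_adj_right h n (m + j)
        have e : m + ((j : ℤ) + 1) = m + j + 1 := by ring
        simpa [e] using this
      calc len E n (m + (j + 1 : ℕ)) ≤ K * len E n (m + j) := h1
        _ ≤ K * (K ^ j * len E n m) := by
            apply mul_le_mul_of_nonneg_left ih (le_of_lt (K_pos h))
        _ = K ^ (j + 1) * len E n m := by ring

theorem len_far_left (n : ℕ) (m : ℤ) (j : ℕ) :
    len E n (m - j) ≤ K ^ j * len E n m := by
  induction j with
  | zero => simp
  | succ j ih =>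
      have h1 : len E n (m - (j + 1 : ℕ)) ≤ K * len E n (m - j) := by
        have := len_adj_left h n (m - j - 1)
        have e : m - j - 1 + 1 = m - j := by ring
        have e2 : m - ((j : ℤ) + 1) = m - j - 1 := by ring
        rw [e] at this
        simpa [e2] using this
      calc len E n (m - (j + 1 : ℕ)) ≤ K * len E n (m - j) := h1
        _ ≤ K * (K ^ j * len E n m) := by
            apply mul_le_mul_of_nonneg_left ih (le_of_lt (K_pos h))
        _ = K ^ (j + 1) * len E n m := by ring

theorem len_near (n : ℕ) (a b : ℤ) (r : ℕ) (hr : (a - b).natAbs ≤ r) :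
    len E n a ≤ K ^ r * len E n b := by
  set j := (a - b).natAbs with hj
  have hKj : K ^ j * len E n b ≤ K ^ r * len E n b := by
    apply mul_le_mul_of_nonneg_right (pow_le_pow_right₀ (K_one_le h) hr)
      (le_of_lt (len_pos h n b))
  rcases le_or_gt b a with hba | hba
  · have : a = b + j := by omega
    rw [this]
    exact le_trans (len_far_right h n b j) hKj
  · have : a = b - j := by omega
    rw [this]
    exact le_trans (len_far_left h n b j) hKj

theorem tele (n : ℕ) (a : ℤ) (j : ℕ) :
    pt E n (a + j) - pt E n a = ∑ i ∈ Finset.range j, len E n (a + i) := by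
  induction j with
  | zero => simp
  | succ j ih =>
      rw [Finset.sum_range_succ, ← ih]
      have e : a + ((j + 1 : ℕ) : ℤ) = (a + (j:ℤ)) + 1 := by push_cast; ring
      rw [e]
      simp only [len]
      ring

end Part2

end Stmt7

namespace Stmt7

noncomputable def rho (d : ℕ) (K : ℝ) : ℝ := 1 / (d * K ^ (d - 1))

variable {d : ℕ} {E : ℝ → ℝ} {K : ℝ}

section Part3

variable (h : Nice d E K) (hd : 2 ≤ d)
include h hd

theorem rho_pos : 0 < rho d K := by
  apply div_pos one_pos
  apply mul_pos (by positivity) (pow_pos (K_pos h) _)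

theorem rho_le_half : rho d K ≤ 1 / 2 := by
  apply div_le_div_of_nonneg_left one_pos.le two_pos
  have h1 : (2:ℝ) ≤ d := by exact_mod_cast hd
  have h2 : (1:ℝ) ≤ K ^ (d - 1) := one_le_pow₀ (K_one_le h)
  nlinarith

theorem rho_lt_one : rho d K < 1 := lt_of_le_of_lt (rho_le_half h hd) (by norm_num)

theorem one_minus_rho_lt_one : 1 - rho d K < 1 := by linarith [rho_pos h hd]

theorem one_minus_rho_pos : 0 < 1 - rho d K := by linarith [rho_lt_one h hd]

/-- A level `n` interval is the union of its `d` children at level `n+1`. -/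
theorem child_sum (n : ℕ) (m : ℤ) :
    len E n m = ∑ i ∈ Finset.range d, len E (n + 1) ((d : ℤ) * m + i) := by
  have t := tele h (n + 1) ((d : ℤ) * m) d
  have e1 : pt E (n + 1) ((d : ℤ) * m) = pt E n m := finv_step h n m
  have e2 : pt E (n + 1) ((d : ℤ) * m + d) = pt E n (m + 1) := by
    have : (d : ℤ) * m + d = (d : ℤ) * (m + 1) := by ring
    rw [this]
    exact finv_step h n (m + 1)
  rw [e1, e2] at t
  simpa [len] using t

theorem child_lb {n : ℕ} {m c : ℤ} (hc1 : (d : ℤ) * m ≤ c) (hc2 : c < (d : ℤ) * m + d) :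
    rho d K * len E n m ≤ len E (n + 1) c := by
  have hsum := child_sum h hd n m
  have hb : ∀ i ∈ Finset.range d, len E (n + 1) ((d : ℤ) * m + i) ≤
      K ^ (d - 1) * len E (n + 1) c := by
    intro i hi
    simp only [Finset.mem_range] at hi
    apply len_near h (n + 1) _ c (d - 1)
    omega
  have hs : len E n m ≤ (d : ℝ) * (K ^ (d - 1) * len E (n + 1) c) := by
    rw [hsum]
    calc ∑ i ∈ Finset.range d, len E (n + 1) ((d : ℤ) * m + i)
        ≤ ∑ _i ∈ Finset.range d, K ^ (d - 1) * len E (n + 1) c := Finset.sum_le_sum hb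
      _ = (d : ℝ) * (K ^ (d - 1) * len E (n + 1) c) := by
          rw [Finset.sum_const, Finset.card_range]; simp [nsmul_eq_mul]
  have hdK : (0:ℝ) < (d : ℝ) * K ^ (d - 1) := by
    apply mul_pos (by positivity) (pow_pos (K_pos h) _)
  rw [rho, div_mul_eq_mul_div, div_le_iff₀ hdK]
  nlinarith [hs]

theorem child_ub {n : ℕ} {m c : ℤ} (hc1 : (d : ℤ) * m ≤ c) (hc2 : c < (d : ℤ) * m + d) :
    len E (n + 1) c ≤ (1 - rho d K) * len E n m := by
  have hlen : len E n m = pt E n (m+1) - pt E n m := rfl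
  have e1 : pt E (n + 1) ((d : ℤ) * m) = pt E n m := finv_step h n m
  have e2 : pt E (n + 1) ((d : ℤ) * m + d) = pt E n (m + 1) := by
    rw [show (d : ℤ) * m + d = (d : ℤ) * (m + 1) from by ring]
    exact finv_step h n (m + 1)
  have mono := (pt_strictMono h (n + 1)).monotone
  rcases lt_or_eq_of_le (show c ≤ (d:ℤ) * m + d - 1 from by omega) with hlt | heq
  · -- sibling c+1 exists
    have hsib : rho d K * len E n m ≤ len E (n + 1) (c + 1) :=
      child_lb h hd (by omega) (by omega)
    have hord : pt E (n+1) ((d:ℤ)*m) ≤ pt E (n+1) c := mono (by exact_mod_cast hc1)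
    have hord2 : pt E (n+1) (c + 2) ≤ pt E (n+1) ((d:ℤ)*m + d) := mono (by omega)
    have : len E (n+1) c + len E (n+1) (c+1) ≤ len E n m := by
      simp only [len, hlen]
      rw [← e1, ← e2]
      have : c + 1 + 1 = c + 2 := by ring
      rw [this]
      linarith
    linarith
  · -- c is the last child, sibling c-1
    have hsib : rho d K * len E n m ≤ len E (n + 1) (c - 1) :=
      child_lb h hd (by omega) (by omega)
    have hord : pt E (n+1) ((d:ℤ)*m) ≤ pt E (n+1) (c - 1) := mono (by omega)
    have hord2 : pt E (n+1) (c + 1) ≤ pt E (n+1) ((d:ℤ)*m + d) := mono (by omega)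
    have : len E (n+1) (c-1) + len E (n+1) c ≤ len E n m := by
      simp only [len, hlen]
      rw [← e1, ← e2]
      have : c - 1 + 1 = c := by ring
      rw [this]
      linarith
    linarith

theorem len_le (n : ℕ) (m : ℤ) : len E n m ≤ (1 - rho d K) ^ n := by
  induction n generalizing m with
  | zero => rw [len_zero h]; simp
  | succ n ih =>
      have hm : m = (d : ℤ) * (m / d) + (m % d) := by
        rw [Int.mul_ediv_add_emod]
      have h1 : (d:ℤ) * (m / d) ≤ m := by
        have := Int.emod_nonneg m (show (d:ℤ) ≠ 0 from by omega)
        omega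
      have h2 : m < (d:ℤ) * (m / d) + d := by
        have := Int.emod_lt_of_pos m (show (0:ℤ) < d from by omega)
        omega
      calc len E (n+1) m ≤ (1 - rho d K) * len E n (m / d) := child_ub h hd h1 h2
        _ ≤ (1 - rho d K) * (1 - rho d K) ^ n := by
            apply mul_le_mul_of_nonneg_left (ih _) (one_minus_rho_pos h hd).le
        _ = (1 - rho d K) ^ (n + 1) := by ring

/-- leftmost descendant: left endpoint `pt n m` preserved -/
theorem right_desc_ub (n : ℕ) (m : ℤ) (k : ℕ) :
    len E (n + k) ((d : ℤ) ^ k * m) ≤ (1 - rho d K) ^ k * len E n m := by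
  induction k with
  | zero => simp
  | succ k ih =>
      have e : (d:ℤ) ^ (k+1) * m = (d:ℤ) * ((d:ℤ)^k * m) + 0 := by ring
      have step : len E ((n + k) + 1) ((d:ℤ) ^ (k+1) * m) ≤
          (1 - rho d K) * len E (n + k) ((d:ℤ)^k * m) := by
        rw [e]
        exact child_ub h hd (by omega) (by omega)
      calc len E (n + (k+1)) ((d:ℤ)^(k+1) * m)
          = len E ((n + k) + 1) ((d:ℤ)^(k+1) * m) := by ring_nf
        _ ≤ (1 - rho d K) * len E (n + k) ((d:ℤ)^k * m) := step
        _ ≤ (1 - rho d K) * ((1 - rho d K) ^ k * len E n m) := by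
            apply mul_le_mul_of_nonneg_left ih (one_minus_rho_pos h hd).le
        _ = (1 - rho d K) ^ (k+1) * len E n m := by ring

theorem right_desc_lb (n : ℕ) (m : ℤ) (k : ℕ) :
    rho d K ^ k * len E n m ≤ len E (n + k) ((d : ℤ) ^ k * m) := by
  induction k with
  | zero => simp
  | succ k ih =>
      have e : (d:ℤ) ^ (k+1) * m = (d:ℤ) * ((d:ℤ)^k * m) + 0 := by ring
      have step : rho d K * len E (n + k) ((d:ℤ)^k * m) ≤
          len E ((n + k) + 1) ((d:ℤ) ^ (k+1) * m) := by
        rw [e]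
        exact child_lb h hd (by omega) (by omega)
      calc rho d K ^ (k+1) * len E n m
          = rho d K * (rho d K ^ k * len E n m) := by ring
        _ ≤ rho d K * len E (n + k) ((d:ℤ)^k * m) := by
            apply mul_le_mul_of_nonneg_left ih (rho_pos h hd).le
        _ ≤ len E ((n + k) + 1) ((d:ℤ)^(k+1) * m) := step
        _ = len E (n + (k+1)) ((d:ℤ)^(k+1) * m) := by ring_nf

/-- rightmost descendant of `(n, m-1)`: right endpoint `pt n m` preserved -/
theorem left_desc_ub (n : ℕ) (m : ℤ) (k : ℕ) :
    len E (n + k) ((d : ℤ) ^ k * m - 1) ≤ (1 - rho d K) ^ k * len E n (m - 1) := by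
  induction k with
  | zero => simp
  | succ k ih =>
      have e : (d:ℤ) ^ (k+1) * m - 1 = (d:ℤ) * ((d:ℤ)^k * m - 1) + (d - 1) := by ring
      have step : len E ((n + k) + 1) ((d:ℤ) ^ (k+1) * m - 1) ≤
          (1 - rho d K) * len E (n + k) ((d:ℤ)^k * m - 1) := by
        rw [e]
        exact child_ub h hd (by omega) (by omega)
      calc len E (n + (k+1)) ((d:ℤ)^(k+1) * m - 1)
          = len E ((n + k) + 1) ((d:ℤ)^(k+1) * m - 1) := by ring_nf
        _ ≤ (1 - rho d K) * len E (n + k) ((d:ℤ)^k * m - 1) := step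
        _ ≤ (1 - rho d K) * ((1 - rho d K) ^ k * len E n (m-1)) := by
            apply mul_le_mul_of_nonneg_left ih (one_minus_rho_pos h hd).le
        _ = (1 - rho d K) ^ (k+1) * len E n (m-1) := by ring

theorem left_desc_lb (n : ℕ) (m : ℤ) (k : ℕ) :
    rho d K ^ k * len E n (m - 1) ≤ len E (n + k) ((d : ℤ) ^ k * m - 1) := by
  induction k with
  | zero => simp
  | succ k ih =>
      have e : (d:ℤ) ^ (k+1) * m - 1 = (d:ℤ) * ((d:ℤ)^k * m - 1) + (d - 1) := by ring
      have step : rho d K * len E (n + k) ((d:ℤ)^k * m - 1) ≤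
          len E ((n + k) + 1) ((d:ℤ) ^ (k+1) * m - 1) := by
        rw [e]
        exact child_lb h hd (by omega) (by omega)
      calc rho d K ^ (k+1) * len E n (m-1)
          = rho d K * (rho d K ^ k * len E n (m-1)) := by ring
        _ ≤ rho d K * len E (n + k) ((d:ℤ)^k * m - 1) := by
            apply mul_le_mul_of_nonneg_left ih (rho_pos h hd).le
        _ ≤ len E ((n + k) + 1) ((d:ℤ)^(k+1) * m - 1) := step
        _ = len E (n + (k+1)) ((d:ℤ)^(k+1) * m - 1) := by ring_nf

end Part3

section Part4

variable (h : Nice d E K)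
include h

theorem grow_right (n : ℕ) (m : ℤ) (i : ℕ) :
    (1 + K⁻¹) ^ i * len E n m ≤ pt E n (m + 2 ^ i) - pt E n m := by
  induction i with
  | zero => simp [len]
  | succ i ih =>
      have hq := (h.qs n ((m + 2 ^ i : ℤ) : ℝ) ((2:ℝ) ^ i) (by positivity)).1
      have e1 : ((m + 2 ^ i : ℤ) : ℝ) + (2:ℝ) ^ i = ((m + 2 ^ (i+1) : ℤ) : ℝ) := by
        push_cast; ring
      have e2 : ((m + 2 ^ i : ℤ) : ℝ) - (2:ℝ) ^ i = ((m : ℤ) : ℝ) := by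
        push_cast; ring
      rw [e1, e2] at hq
      -- hq : pt (m+2^i) - pt m ≤ K * (pt (m+2^(i+1)) - pt (m+2^i))
      have hK0 : (0:ℝ) < K := K_pos h
      have step : K⁻¹ * (pt E n (m + 2^i) - pt E n m) ≤
          pt E n (m + 2^(i+1)) - pt E n (m + 2^i) := by
        rw [inv_mul_le_iff₀ hK0]
        exact hq
      have hKinv : (0:ℝ) < 1 + K⁻¹ := by positivity
      calc (1 + K⁻¹) ^ (i+1) * len E n m
          = (1 + K⁻¹) * ((1 + K⁻¹) ^ i * len E n m) := by ring
        _ ≤ (1 + K⁻¹) * (pt E n (m + 2^i) - pt E n m) := by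
            apply mul_le_mul_of_nonneg_left ih hKinv.le
        _ = (pt E n (m + 2^i) - pt E n m) + K⁻¹ * (pt E n (m + 2^i) - pt E n m) := by ring
        _ ≤ (pt E n (m + 2^i) - pt E n m) + (pt E n (m + 2^(i+1)) - pt E n (m + 2^i)) := by
            linarith [step]
        _ = pt E n (m + 2^(i+1)) - pt E n m := by ring

theorem grow_left (n : ℕ) (m : ℤ) (i : ℕ) :
    (1 + K⁻¹) ^ i * len E n (m - 1) ≤ pt E n m - pt E n (m - 2 ^ i) := by
  induction i with
  | zero => simp [len]
  | succ i ih =>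
      have hq := (h.qs n ((m - 2 ^ i : ℤ) : ℝ) ((2:ℝ) ^ i) (by positivity)).2
      have e1 : ((m - 2 ^ i : ℤ) : ℝ) + (2:ℝ) ^ i = ((m : ℤ) : ℝ) := by
        push_cast; ring
      have e2 : ((m - 2 ^ i : ℤ) : ℝ) - (2:ℝ) ^ i = ((m - 2 ^ (i+1) : ℤ) : ℝ) := by
        push_cast; ring
      rw [e1, e2] at hq
      have hK0 : (0:ℝ) < K := K_pos h
      have step : K⁻¹ * (pt E n m - pt E n (m - 2^i)) ≤
          pt E n (m - 2^i) - pt E n (m - 2^(i+1)) := by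
        rw [inv_mul_le_iff₀ hK0]
        exact hq
      have hKinv : (0:ℝ) < 1 + K⁻¹ := by positivity
      calc (1 + K⁻¹) ^ (i+1) * len E n (m - 1)
          = (1 + K⁻¹) * ((1 + K⁻¹) ^ i * len E n (m - 1)) := by ring
        _ ≤ (1 + K⁻¹) * (pt E n m - pt E n (m - 2^i)) := by
            apply mul_le_mul_of_nonneg_left ih hKinv.le
        _ = (pt E n m - pt E n (m - 2^i)) + K⁻¹ * (pt E n m - pt E n (m - 2^i)) := by ring
        _ ≤ (pt E n m - pt E n (m - 2^i)) + (pt E n (m - 2^i) - pt E n (m - 2^(i+1))) := by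
            linarith [step]
        _ = pt E n m - pt E n (m - 2^(i+1)) := by ring

theorem sum_right (n : ℕ) (m : ℤ) (r : ℕ) :
    pt E n (m + r) - pt E n m ≤ r * K ^ r * len E n m := by
  rw [tele h]
  have hb : ∀ i ∈ Finset.range r, len E n (m + i) ≤ K ^ r * len E n m := by
    intro i hi
    simp only [Finset.mem_range] at hi
    apply len_near h n _ m r
    omega
  calc ∑ i ∈ Finset.range r, len E n (m + i)
      ≤ ∑ _i ∈ Finset.range r, K ^ r * len E n m := Finset.sum_le_sum hb
    _ = r * K ^ r * len E n m := by
        rw [Finset.sum_const, Finset.card_range]; simp [nsmul_eq_mul]; ring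

theorem sum_left (n : ℕ) (m : ℤ) (r : ℕ) :
    pt E n m - pt E n (m - r) ≤ r * K ^ r * len E n (m - 1) := by
  have t := tele h n (m - r) r
  have e : m - (r:ℤ) + (r:ℤ) = m := by ring
  rw [e] at t
  rw [t]
  have hb : ∀ i ∈ Finset.range r, len E n (m - r + i) ≤ K ^ r * len E n (m - 1) := by
    intro i hi
    simp only [Finset.mem_range] at hi
    apply len_near h n _ (m - 1) r
    omega
  calc ∑ i ∈ Finset.range r, len E n (m - r + i)
      ≤ ∑ _i ∈ Finset.range r, K ^ r * len E n (m - 1) := Finset.sum_le_sum hb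
    _ = r * K ^ r * len E n (m - 1) := by
        rw [Finset.sum_const, Finset.card_range]; simp [nsmul_eq_mul]; ring

end Part4

end Stmt7

namespace Stmt7

noncomputable def aa (F G : ℝ → ℝ) (k : ℕ) (x : ℝ) : ℝ := pt F k ⌊G^[k] x⌋

noncomputable def HH (F G : ℝ → ℝ) (x : ℝ) : ℝ := ⨆ k, aa F G k x

variable {d : ℕ} {F G : ℝ → ℝ} {K : ℝ}

section Part5

variable (hF : Nice d F K) (hG : Nice d G K)
include hF hG

theorem pt_zero (m : ℤ) : pt F 0 m = m := by simp [pt, finv_zero hF]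

theorem pt_deep (n k : ℕ) (m : ℤ) : pt F (n + k) ((d:ℤ) ^ k * m) = pt F n m := by
  simpa [pt] using finv_deep hF n k m

omit hF in
theorem floor_iter_lb (n j : ℕ) (x : ℝ) :
    (d:ℤ) ^ j * ⌊G^[n] x⌋ ≤ ⌊G^[n + j] x⌋ := by
  rw [Int.le_floor]
  have e : G^[n + j] x = G^[j] (G^[n] x) := by
    rw [add_comm]; exact Function.iterate_add_apply G j n x
  rw [e]
  have h1 : G^[j] ((⌊G^[n] x⌋ : ℤ) : ℝ) ≤ G^[j] (G^[n] x) :=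
    (iter_mono hG j).monotone (Int.floor_le _)
  rw [iter_int hG] at h1
  calc (((d:ℤ) ^ j * ⌊G^[n] x⌋ : ℤ) : ℝ) = (d:ℝ) ^ j * (⌊G^[n] x⌋ : ℝ) := by push_cast; ring
    _ ≤ G^[j] (G^[n] x) := h1

omit hF in
theorem floor_iter_ub (n j : ℕ) (x : ℝ) :
    ⌊G^[n + j] x⌋ < (d:ℤ) ^ j * (⌊G^[n] x⌋ + 1) := by
  rw [Int.floor_lt]
  have e : G^[n + j] x = G^[j] (G^[n] x) := by
    rw [add_comm]; exact Function.iterate_add_apply G j n x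
  rw [e]
  have h1 : G^[j] (G^[n] x) < G^[j] (((⌊G^[n] x⌋ + 1 : ℤ) : ℝ)) :=
    iter_mono hG j (by push_cast; exact Int.lt_floor_add_one _)
  rw [iter_int hG] at h1
  calc G^[j] (G^[n] x) < (d:ℝ) ^ j * ((⌊G^[n] x⌋ + 1 : ℤ) : ℝ) := h1
    _ = (((d:ℤ) ^ j * (⌊G^[n] x⌋ + 1) : ℤ) : ℝ) := by push_cast; ring

theorem aa_mono_k (x : ℝ) : Monotone (fun k => aa F G k x) := by
  apply monotone_nat_of_le_succ
  intro k
  have h1 : (d:ℤ) ^ 1 * ⌊G^[k] x⌋ ≤ ⌊G^[k + 1] x⌋ := floor_iter_lb hG k 1 x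
  calc aa F G k x = pt F (k + 1) ((d:ℤ) ^ 1 * ⌊G^[k] x⌋) := (pt_deep hF hG k 1 _).symm
    _ ≤ pt F (k + 1) ⌊G^[k+1] x⌋ := (pt_strictMono hF (k+1)).monotone h1
    _ = aa F G (k+1) x := rfl

theorem aa_le_pt (n j : ℕ) (x : ℝ) :
    aa F G (n + j) x ≤ pt F n (⌊G^[n] x⌋ + 1) := by
  have h1 : ⌊G^[n + j] x⌋ ≤ (d:ℤ) ^ j * (⌊G^[n] x⌋ + 1) :=
    le_of_lt (floor_iter_ub hG n j x)
  calc aa F G (n + j) x ≤ pt F (n + j) ((d:ℤ) ^ j * (⌊G^[n] x⌋ + 1)) :=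
        (pt_strictMono hF (n+j)).monotone h1
    _ = pt F n (⌊G^[n] x⌋ + 1) := pt_deep hF hG n j _

theorem aa_bddAbove (x : ℝ) : BddAbove (Set.range (fun k => aa F G k x)) := by
  refine ⟨pt F 0 (⌊x⌋ + 1), ?_⟩
  rintro y ⟨k, rfl⟩
  have := aa_le_pt hF hG 0 k x
  simpa using this

theorem HH_ge (n : ℕ) (x : ℝ) : pt F n ⌊G^[n] x⌋ ≤ HH F G x :=
  le_ciSup (aa_bddAbove hF hG x) n

theorem HH_le (n : ℕ) (x : ℝ) : HH F G x ≤ pt F n (⌊G^[n] x⌋ + 1) := by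
  apply ciSup_le
  intro k
  calc aa F G k x ≤ aa F G (max k n) x := aa_mono_k hF hG x (le_max_left k n)
    _ = aa F G (n + (max k n - n)) x := by
        congr 1; omega
    _ ≤ pt F n (⌊G^[n] x⌋ + 1) := aa_le_pt hF hG n _ x

theorem floor_iter_pt (n j : ℕ) (m : ℤ) :
    ⌊G^[n + j] (pt G n m)⌋ = (d:ℤ) ^ j * m := by
  have e : G^[n + j] (pt G n m) = G^[j] (G^[n] (pt G n m)) := by
    rw [add_comm]; exact Function.iterate_add_apply G j n _
  have e2 : G^[n] (pt G n m) = (m : ℝ) := finv_iter hG n _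
  rw [e, e2, iter_int hG]
  have : (d:ℝ) ^ j * (m:ℝ) = (((d:ℤ)^j * m : ℤ) : ℝ) := by push_cast; ring
  rw [this, Int.floor_intCast]

theorem HH_pt (n : ℕ) (m : ℤ) : HH F G (pt G n m) = pt F n m := by
  have key : ∀ j, aa F G (n + j) (pt G n m) = pt F n m := by
    intro j
    unfold aa
    rw [floor_iter_pt hF hG, pt_deep hF hG]
  apply le_antisymm
  · apply ciSup_le
    intro k
    calc aa F G k (pt G n m) ≤ aa F G (max k n) (pt G n m) :=
          aa_mono_k hF hG _ (le_max_left k n)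
      _ = aa F G (n + (max k n - n)) (pt G n m) := by congr 1; omega
      _ = pt F n m := key _
  · have := key 0
    rw [← this]
    exact le_ciSup (aa_bddAbove hF hG _) (n + 0)

omit hF in
theorem pt_floor_le (n : ℕ) (x : ℝ) : pt G n ⌊G^[n] x⌋ ≤ x := by
  have h1 : Finv G n ((⌊G^[n] x⌋ : ℤ) : ℝ) ≤ Finv G n (G^[n] x) :=
    (finv_mono hG n).monotone (Int.floor_le _)
  rwa [iter_finv hG] at h1

omit hF in
theorem lt_pt_floor (n : ℕ) (x : ℝ) : x < pt G n (⌊G^[n] x⌋ + 1) := by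
  have h1 : Finv G n (G^[n] x) < Finv G n (((⌊G^[n] x⌋ + 1 : ℤ)) : ℝ) :=
    finv_mono hG n (by push_cast; exact Int.lt_floor_add_one _)
  rwa [iter_finv hG] at h1

theorem aa_mono_x (k : ℕ) : Monotone (aa F G k) := by
  intro x y hxy
  unfold aa
  apply (pt_strictMono hF k).monotone
  exact Int.floor_le_floor ((iter_mono hG k).monotone hxy)

theorem HH_mono : Monotone (HH F G) := by
  intro x y hxy
  exact ciSup_mono (aa_bddAbove hF hG y) (fun k => aa_mono_x hF hG k hxy)

theorem HH_floor_bounds (x : ℝ) : (⌊x⌋ : ℝ) ≤ HH F G x ∧ HH F G x ≤ (⌊x⌋ : ℝ) + 1 := by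
  constructor
  · have := HH_ge hF hG 0 x
    simpa [pt_zero hF hG] using this
  · have := HH_le hF hG 0 x
    simp only [Function.iterate_zero_apply] at this
    calc HH F G x ≤ pt F 0 (⌊x⌋ + 1) := this
      _ = ((⌊x⌋ + 1 : ℤ) : ℝ) := pt_zero hF hG _
      _ = (⌊x⌋ : ℝ) + 1 := by push_cast; ring

theorem aa_add_one (k : ℕ) (x : ℝ) : aa F G k (x + 1) = aa F G k x + 1 := by
  unfold aa
  have h1 : G^[k] (x + 1) = G^[k] x + ((1:ℤ) : ℝ) * (d:ℝ)^k := by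
    have := iter_deg_int hG k x 1
    simpa using this
  have h2 : ⌊G^[k] (x+1)⌋ = ⌊G^[k] x⌋ + (d:ℤ)^k := by
    rw [h1]
    have : ((1:ℤ) : ℝ) * (d:ℝ)^k = (((d:ℤ)^k : ℤ) : ℝ) := by push_cast; ring
    rw [this, Int.floor_add_intCast]
  rw [h2]
  have h3 : ((⌊G^[k] x⌋ + (d:ℤ)^k : ℤ) : ℝ) = (⌊G^[k] x⌋ : ℝ) + ((1:ℤ):ℝ) * (d:ℝ)^k := by
    push_cast; ring
  unfold pt
  rw [h3, finv_shift hF]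
  push_cast; ring

theorem HH_add_one (x : ℝ) : HH F G (x + 1) = HH F G x + 1 := by
  apply le_antisymm
  · apply ciSup_le
    intro k
    rw [aa_add_one hF hG]
    have : aa F G k x ≤ HH F G x := le_ciSup (aa_bddAbove hF hG x) k
    linarith
  · have : HH F G x ≤ HH F G (x + 1) - 1 := by
      apply ciSup_le
      intro k
      have h1 : aa F G k (x + 1) ≤ HH F G (x+1) := le_ciSup (aa_bddAbove hF hG (x+1)) k
      rw [aa_add_one hF hG] at h1
      linarith
    linarith

theorem HH_conj (x : ℝ) : F (HH F G x) = HH F G (G x) := by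
  have hFc : Continuous F := by
    have e : ℝ ≃o ℝ := StrictMono.orderIsoOfSurjective F hF.mono hF.bij.2
    have : F = ⇑(StrictMono.orderIsoOfSurjective F hF.mono hF.bij.2) := rfl
    rw [this]
    exact OrderIso.continuous _
  have h1 : F (HH F G x) = ⨆ k, F (aa F G k x) := by
    apply Monotone.map_ciSup_of_continuousAt (hFc.continuousAt) hF.mono.monotone
      (aa_bddAbove hF hG x)
  rw [h1]
  have key : ∀ k, F (aa F G (k + 1) x) = aa F G k (G x) := by
    intro k
    unfold aa pt
    have h2 : F (Finv F (k + 1) ((⌊G^[k+1] x⌋ : ℤ) : ℝ)) = Finv F k ((⌊G^[k+1] x⌋ : ℤ) : ℝ) := by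
      apply (iter_bij hF k).injective
      rw [finv_iter hF]
      have : F^[k] (F (Finv F (k+1) ((⌊G^[k+1] x⌋ : ℤ) : ℝ))) =
          F^[k+1] (Finv F (k+1) ((⌊G^[k+1] x⌋ : ℤ) : ℝ)) :=
        (Function.iterate_succ_apply F k _).symm
      rw [this, finv_iter hF]
    rw [h2, Function.iterate_succ_apply]
  -- the sequence k ↦ F (aa k x) is monotone; its sup equals sup of the shift
  have hmono : Monotone (fun k => F (aa F G k x)) :=
    fun a b hab => hF.mono.monotone (aa_mono_k hF hG x hab)
  have hbdd : BddAbove (Set.range (fun k => F (aa F G k x))) := by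
    refine ⟨F (pt F 0 (⌊x⌋ + 1)), ?_⟩
    rintro y ⟨k, rfl⟩
    apply hF.mono.monotone
    have := aa_le_pt hF hG 0 k x
    simpa using this
  apply le_antisymm
  · apply ciSup_le
    intro k
    calc F (aa F G k x) ≤ F (aa F G (k+1) x) := hmono (Nat.le_succ k)
      _ = aa F G k (G x) := key k
      _ ≤ HH F G (G x) := le_ciSup (aa_bddAbove hF hG (G x)) k
  · apply ciSup_le
    intro k
    rw [← key k]
    exact le_ciSup hbdd (k + 1)

end Part5

end Stmt7

namespace Stmt7

variable {d : ℕ} {F G : ℝ → ℝ} {K : ℝ}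

section Part6

variable (hF : Nice d F K) (hG : Nice d G K) (hd : 2 ≤ d)
include hF hG hd

theorem three_len (n : ℕ) (m : ℤ) :
    pt G n (m + 3) - pt G n m ≤ 3 * (1 - rho d K) ^ n := by
  have l0 := len_le hG hd n m
  have l1 := len_le hG hd n (m + 1)
  have l2 := len_le hG hd n (m + 2)
  have e0 : len G n m = pt G n (m+1) - pt G n m := rfl
  have e1 : len G n (m+1) = pt G n (m+2) - pt G n (m+1) := by
    simp [len]; ring_nf
  have e2 : len G n (m+2) = pt G n (m+3) - pt G n (m+2) := by
    simp [len]; ring_nf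
  rw [e0] at l0; rw [e1] at l1; rw [e2] at l2
  linarith

theorem HH_strictMono : StrictMono (HH F G) := by
  intro x y hxy
  obtain ⟨n, hn⟩ := exists_pow_lt_of_lt_one (show (0:ℝ) < (y - x)/3 by linarith)
    (one_minus_rho_lt_one hG hd)
  have hfloor : ⌊G^[n] x⌋ + 3 ≤ ⌊G^[n] y⌋ := by
    by_contra hc
    push_neg at hc
    have hy : y < pt G n (⌊G^[n] x⌋ + 3) := by
      calc y < pt G n (⌊G^[n] y⌋ + 1) := lt_pt_floor hG n y
        _ ≤ pt G n (⌊G^[n] x⌋ + 3) := (pt_strictMono hG n).monotone (by omega)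
    have hx : pt G n ⌊G^[n] x⌋ ≤ x := pt_floor_le hG n x
    have := three_len hF hG hd n ⌊G^[n] x⌋
    nlinarith [hn]
  calc HH F G x ≤ pt F n (⌊G^[n] x⌋ + 1) := HH_le hF hG n x
    _ < pt F n (⌊G^[n] x⌋ + 3) := pt_strictMono hF n (by omega)
    _ ≤ pt F n ⌊G^[n] y⌋ := (pt_strictMono hF n).monotone hfloor
    _ ≤ HH F G y := HH_ge hF hG n y

theorem HH_continuous : Continuous (HH F G) := by
  rw [continuous_iff_continuousAt]
  intro x
  rw [Metric.continuousAt_iff]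
  intro ε hε
  obtain ⟨n, hn⟩ := exists_pow_lt_of_lt_one (show (0:ℝ) < ε/2 by linarith)
    (one_minus_rho_lt_one hF hd)
  set m := ⌊G^[n] x⌋ with hm
  have hx1 : pt G n (m - 1) < x := by
    calc pt G n (m - 1) < pt G n m := pt_strictMono hG n (by omega)
      _ ≤ x := pt_floor_le hG n x
  have hx2 : x < pt G n (m + 1) := lt_pt_floor hG n x
  refine ⟨min (x - pt G n (m - 1)) (pt G n (m + 1) - x), by
    apply lt_min <;> linarith, ?_⟩
  intro y hy
  rw [Real.dist_eq] at hy
  rw [Real.dist_eq]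
  have hy1 : pt G n (m - 1) < y := by
    have := abs_lt.1 (lt_of_lt_of_le hy (min_le_left _ _))
    linarith [this.1]
  have hy2 : y < pt G n (m + 1) := by
    have := abs_lt.1 (lt_of_lt_of_le hy (min_le_right _ _))
    linarith [this.2]
  -- floor of G^[n] y is m-1 or m
  have hfy1 : m - 1 ≤ ⌊G^[n] y⌋ := by
    by_contra hc
    push_neg at hc
    have : y < pt G n (m - 1) := by
      calc y < pt G n (⌊G^[n] y⌋ + 1) := lt_pt_floor hG n y
        _ ≤ pt G n (m - 1) := (pt_strictMono hG n).monotone (by omega)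
    linarith
  have hfy2 : ⌊G^[n] y⌋ ≤ m := by
    by_contra hc
    push_neg at hc
    have : pt G n (m + 1) ≤ y := by
      calc pt G n (m + 1) ≤ pt G n ⌊G^[n] y⌋ := (pt_strictMono hG n).monotone (by omega)
        _ ≤ y := pt_floor_le hG n y
    linarith
  -- both HH x and HH y lie in [pt F n (m-1), pt F n (m+1)]
  have bx1 : pt F n (m - 1) ≤ HH F G x := by
    calc pt F n (m - 1) ≤ pt F n m := (pt_strictMono hF n).monotone (by omega)
      _ ≤ HH F G x := HH_ge hF hG n x
  have bx2 : HH F G x ≤ pt F n (m + 1) := HH_le hF hG n x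
  have by1 : pt F n (m - 1) ≤ HH F G y := by
    calc pt F n (m - 1) ≤ pt F n ⌊G^[n] y⌋ := (pt_strictMono hF n).monotone hfy1
      _ ≤ HH F G y := HH_ge hF hG n y
  have by2 : HH F G y ≤ pt F n (m + 1) := by
    calc HH F G y ≤ pt F n (⌊G^[n] y⌋ + 1) := HH_le hF hG n y
      _ ≤ pt F n (m + 1) := (pt_strictMono hF n).monotone (by omega)
  have hgap : pt F n (m + 1) - pt F n (m - 1) ≤ 2 * (1 - rho d K)^n := by
    have l0 := len_le hF hd n (m - 1)
    have l1 := len_le hF hd n m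
    have e0 : len F n (m - 1) = pt F n m - pt F n (m-1) := by
      simp [len]
    have e1 : len F n m = pt F n (m+1) - pt F n m := rfl
    rw [e0] at l0; rw [e1] at l1
    linarith
  rw [abs_lt]
  constructor <;> nlinarith

theorem HH_bijective : Function.Bijective (HH F G) := by
  constructor
  · exact (HH_strictMono hF hG hd).injective
  · apply Continuous.surjective (HH_continuous hF hG hd)
    · apply tendsto_atTop_mono (fun x => ?_) 
        (tendsto_atTop_add_const_right atTop (-1 : ℝ) tendsto_id)
      have := (HH_floor_bounds hF hG x).1
      have := Int.sub_one_lt_floor x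
      simp only [id]
      linarith
    · apply tendsto_atBot_mono (fun x => ?_)
        (tendsto_atBot_add_const_right atBot (1 : ℝ) tendsto_id)
      have := (HH_floor_bounds hF hG x).2
      have := Int.floor_le x
      simp only [id]
      linarith

theorem HH_add_nat (x : ℝ) (r : ℕ) : HH F G (x + r) = HH F G x + r := by
  induction r with
  | zero => simp
  | succ r ih =>
      have : x + ((r:ℝ) + 1) = (x + r) + 1 := by ring
      push_cast
      rw [this, HH_add_one hF hG, ih]
      ring

end Part6

end Stmt7

namespace Stmt7

variable {d : ℕ} {F G : ℝ → ℝ} {K : ℝ}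

section Part7

variable (hF : Nice d F K) (hG : Nice d G K) (hd : 2 ≤ d)
include hF hG hd

theorem HH_qs : ∃ M : ℝ, 1 ≤ M ∧ ∀ x t : ℝ, 0 < t →
    HH F G (x + t) - HH F G x ≤ M * (HH F G x - HH F G (x - t)) ∧
    HH F G x - HH F G (x - t) ≤ M * (HH F G (x + t) - HH F G x) := by
  classical
  have hK0 : (0:ℝ) < K := K_pos hF
  have hK1 : (1:ℝ) ≤ K := K_one_le hF
  set ρ : ℝ := rho d K with hρdef
  have hρ0 : 0 < ρ := rho_pos hF hd
  have hρ1 : 1 - ρ < 1 := one_minus_rho_lt_one hF hd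
  have hρp : 0 < 1 - ρ := one_minus_rho_pos hF hd
  -- depth k2 : descendants at depth k2 are ≤ (1/(2K)) of the ancestor
  obtain ⟨k2, hk2⟩ := exists_pow_lt_of_lt_one (show (0:ℝ) < 1/(2*K) by positivity) hρ1
  have hk2' : (1 - ρ) ^ k2 * K ≤ 1/2 := by
    have := mul_lt_mul_of_pos_right hk2 hK0
    rw [div_mul_eq_mul_div] at this
    calc (1-ρ)^k2 * K ≤ 1 * K / (2*K) := this.le
      _ = 1/2 := by field_simp; try ring
  -- i1 : blocks of 2^i1 consecutive intervals at a level are ≥ 2K × one interval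
  obtain ⟨i1, hi1⟩ := pow_unbounded_of_one_lt (2*K)
    (show (1:ℝ) < 1 + K⁻¹ by have h0 : (0:ℝ) < K⁻¹ := inv_pos.2 hK0; linarith)
  set q : ℕ := 2 ^ i1 with hqdef
  set CL : ℝ := ρ ^ k2 / K with hCLdef
  set CU : ℝ := ((q:ℝ) + 1) * K ^ (q+1) / ρ with hCUdef
  have hCL0 : 0 < CL := by positivity
  have hCU0 : 0 < CU := by positivity
  set M1 : ℝ := CU / CL with hM1def
  have hM10 : 0 < M1 := by positivity
  refine ⟨max 3 M1, le_trans (by norm_num) (le_max_left _ _), ?_⟩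
  have key : ∀ x t : ℝ, 0 < t → t < 1 →
      HH F G (x + t) - HH F G x ≤ M1 * (HH F G x - HH F G (x - t)) ∧
      HH F G x - HH F G (x - t) ≤ M1 * (HH F G (x + t) - HH F G x) := by
    intro x t ht ht1
    have hex : ∃ n : ℕ, len G n ⌊G^[n] x⌋ ≤ t/2 := by
      obtain ⟨N, hN⟩ := exists_pow_lt_of_lt_one (show (0:ℝ) < t/2 by linarith) hρ1
      exact ⟨N, le_trans (len_le hG hd N _) hN.le⟩
    set n : ℕ := Nat.find hex with hndef
    have hn : len G n ⌊G^[n] x⌋ ≤ t/2 := Nat.find_spec hex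
    have hn0 : n ≠ 0 := by
      intro hc
      rw [hc, len_zero hG] at hn
      linarith
    set n' : ℕ := n - 1 with hn'def
    have hsucc : n' + 1 = n := by omega
    have hmin : t/2 < len G n' ⌊G^[n'] x⌋ := by
      have := Nat.find_min hex (show n' < n by omega)
      push_neg at this
      exact this
    set mn : ℤ := ⌊G^[n] x⌋ with hmndef
    set mn' : ℤ := ⌊G^[n'] x⌋ with hmn'def
    have hch1 : (d:ℤ) * mn' ≤ mn := by
      have := floor_iter_lb hG n' 1 x
      rw [hsucc] at this
      simpa using this
    have hch2 : mn < (d:ℤ) * mn' + d := by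
      have := floor_iter_ub hG n' 1 x
      rw [hsucc] at this
      have e : (d:ℤ)^1 * (mn' + 1) = (d:ℤ) * mn' + d := by ring
      rw [e] at this
      exact this
    set LF : ℝ := len F n mn with hLFdef
    set LG : ℝ := len G n mn with hLGdef
    have hLF : 0 < LF := len_pos hF n mn
    have hLG : 0 < LG := len_pos hG n mn
    have hx1 : pt G n mn ≤ x := pt_floor_le hG n x
    have hx2 : x < pt G n (mn + 1) := lt_pt_floor hG n x
    have hx1' : pt G n' mn' ≤ x := pt_floor_le hG n' x
    have hx2' : x < pt G n' (mn' + 1) := lt_pt_floor hG n' x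
    have hLGeq : LG = pt G n (mn + 1) - pt G n mn := rfl
    have hLG2 : LG ≤ t/2 := hn
    -- ===== (1) lower bound for Num =====
    have hNumLB : CL * LF ≤ HH F G (x + t) - HH F G x := by
      set s' : ℤ := (d:ℤ)^k2 * (mn + 1) with hs'def
      have hv : pt G (n + k2) s' = pt G n (mn + 1) := pt_deep hG hF n k2 (mn + 1)
      have hℓub : len G (n + k2) s' ≤ (1-ρ)^k2 * len G n (mn + 1) :=
        right_desc_ub hG hd n (mn + 1) k2
      have hlen1 : len G n (mn + 1) ≤ K * LG := len_adj_right hG n mn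
      have hℓ : len G (n + k2) s' ≤ t/4 := by
        have h1 : len G (n + k2) s' ≤ (1-ρ)^k2 * (K * LG) := by
          calc len G (n + k2) s' ≤ (1-ρ)^k2 * len G n (mn + 1) := hℓub
            _ ≤ (1-ρ)^k2 * (K * LG) := by
                apply mul_le_mul_of_nonneg_left hlen1 (by positivity)
        calc len G (n + k2) s' ≤ (1-ρ)^k2 * K * LG := by linarith [h1]
          _ ≤ (1/2) * LG := mul_le_mul_of_nonneg_right hk2' hLG.le
          _ ≤ (1/2) * (t/2) := by linarith
          _ = t/4 := by ring
      have hincl : pt G (n + k2) (s' + 1) ≤ x + t := by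
        have e1 : pt G (n + k2) (s' + 1) = pt G n (mn + 1) + len G (n + k2) s' := by
          have : len G (n + k2) s' = pt G (n+k2) (s'+1) - pt G (n+k2) s' := rfl
          rw [this, hv]; ring
        rw [e1]
        have : pt G n (mn + 1) = pt G n mn + LG := by rw [hLGeq]; ring
        rw [this]
        linarith
      have hup : HH F G (pt G (n+k2) (s'+1)) ≤ HH F G (x + t) :=
        HH_mono hF hG hincl
      rw [HH_pt hF hG] at hup
      have hdown : HH F G x ≤ pt F (n+k2) s' := by
        have := HH_le hF hG n x
        rw [← hmndef] at this
        rw [pt_deep hF hG n k2 (mn + 1)]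
        exact this
      have hflen : ρ^k2 * len F n (mn + 1) ≤ len F (n+k2) s' :=
        right_desc_lb hF hd n (mn + 1) k2
      have hflen2 : LF ≤ K * len F n (mn + 1) := len_adj_left hF n mn
      have hlenF : len F (n+k2) s' = pt F (n+k2) (s'+1) - pt F (n+k2) s' := rfl
      have : CL * LF ≤ len F (n+k2) s' := by
        rw [hCLdef]
        calc ρ^k2 / K * LF ≤ ρ^k2 / K * (K * len F n (mn + 1)) := by
              apply mul_le_mul_of_nonneg_left hflen2 (by positivity)
          _ = ρ^k2 * len F n (mn + 1) := by field_simp; try ring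
          _ ≤ len F (n+k2) s' := hflen
      linarith [hup, hdown, this, hlenF.symm.le]
    -- ===== (2) lower bound for Den =====
    have hDenLB : CL * LF ≤ HH F G x - HH F G (x - t) := by
      set s : ℤ := (d:ℤ)^k2 * mn with hsdef
      have hu : pt G (n + k2) s = pt G n mn := pt_deep hG hF n k2 mn
      have hℓub : len G (n + k2) (s - 1) ≤ (1-ρ)^k2 * len G n (mn - 1) :=
        left_desc_ub hG hd n mn k2
      have hlen1 : len G n (mn - 1) ≤ K * LG := by
        have := len_adj_left hG n (mn - 1)
        have e : mn - 1 + 1 = mn := by ring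
        rw [e] at this
        exact this
      have hℓ : len G (n + k2) (s - 1) ≤ t/4 := by
        have h1 : len G (n + k2) (s-1) ≤ (1-ρ)^k2 * (K * LG) := by
          calc len G (n + k2) (s-1) ≤ (1-ρ)^k2 * len G n (mn - 1) := hℓub
            _ ≤ (1-ρ)^k2 * (K * LG) := by
                apply mul_le_mul_of_nonneg_left hlen1 (by positivity)
        calc len G (n + k2) (s-1) ≤ (1-ρ)^k2 * K * LG := by linarith [h1]
          _ ≤ (1/2) * LG := mul_le_mul_of_nonneg_right hk2' hLG.le
          _ ≤ (1/2) * (t/2) := by linarith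
          _ = t/4 := by ring
      have hincl : x - t ≤ pt G (n + k2) (s - 1) := by
        have e1 : pt G (n + k2) (s - 1) = pt G n mn - len G (n + k2) (s - 1) := by
          have : len G (n + k2) (s-1) = pt G (n+k2) (s-1+1) - pt G (n+k2) (s-1) := rfl
          have e2 : s - 1 + 1 = s := by ring
          rw [e2] at this
          rw [this, hu]; ring
        rw [e1]
        linarith
      have hup : HH F G (x - t) ≤ pt F (n+k2) (s-1) := by
        have := HH_mono hF hG hincl
        rwa [HH_pt hF hG] at this
      have hdown : pt F (n+k2) s ≤ HH F G x := by
        have := HH_ge hF hG n x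
        rw [← hmndef] at this
        rw [pt_deep hF hG n k2 mn]
        exact this
      have hflen : ρ^k2 * len F n (mn - 1) ≤ len F (n+k2) ((d:ℤ)^k2 * mn - 1) :=
        left_desc_lb hF hd n mn k2
      have hflen2 : LF ≤ K * len F n (mn - 1) := by
        have := len_adj_right hF n (mn - 1)
        have e : mn - 1 + 1 = mn := by ring
        rw [e] at this
        exact this
      have hlenF : len F (n+k2) (s-1) = pt F (n+k2) s - pt F (n+k2) (s-1) := by
        have : len F (n+k2) (s-1) = pt F (n+k2) (s-1+1) - pt F (n+k2) (s-1) := rfl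
        have e2 : s - 1 + 1 = s := by ring
        rwa [e2] at this
      have : CL * LF ≤ len F (n+k2) (s - 1) := by
        rw [hCLdef]
        calc ρ^k2 / K * LF ≤ ρ^k2 / K * (K * len F n (mn - 1)) := by
              apply mul_le_mul_of_nonneg_left hflen2 (by positivity)
          _ = ρ^k2 * len F n (mn - 1) := by field_simp; try ring
          _ ≤ len F (n+k2) ((d:ℤ)^k2 * mn - 1) := hflen
          _ = len F (n+k2) (s - 1) := by rw [hsdef]
      linarith [hup, hdown, this, hlenF.symm.le]
    -- ===== (3) upper bound for Num =====
    have hNumUB : HH F G (x + t) - HH F G x ≤ CU * LF := by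
      have hgrow := grow_right hG n' (mn' + 1) i1
      have hlen1 : len G n' mn' ≤ K * len G n' (mn' + 1) := len_adj_left hG n' mn'
      have hgap : t < pt G n' (mn' + 1 + (q:ℤ)) - pt G n' (mn' + 1) := by
        have h1 : (1 + K⁻¹)^i1 * len G n' (mn' + 1) ≥ (2*K) * (len G n' mn' / K) := by
          have hl : len G n' mn' / K ≤ len G n' (mn' + 1) := by
            rw [div_le_iff₀ hK0]
            linarith [hlen1]
          calc (2*K) * (len G n' mn' / K) ≤ (2*K) * len G n' (mn' + 1) := by
                apply mul_le_mul_of_nonneg_left hl (by positivity)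
            _ ≤ (1 + K⁻¹)^i1 * len G n' (mn' + 1) := by
                apply mul_le_mul_of_nonneg_right hi1.le (len_pos hG n' _).le
        have h2 : (2*K) * (len G n' mn' / K) = 2 * len G n' mn' := by field_simp
        have hq2 : (q:ℤ) = 2 ^ i1 := by rw [hqdef]; push_cast; ring
        rw [hq2]
        calc t < 2 * len G n' mn' := by linarith [hmin]
          _ ≤ (1 + K⁻¹)^i1 * len G n' (mn' + 1) := by linarith [h1, h2]
          _ ≤ pt G n' (mn' + 1 + 2^i1) - pt G n' (mn' + 1) := hgrow
      have hincl : x + t < pt G n' (mn' + 1 + (q:ℤ)) := by linarith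
      have hup : HH F G (x + t) ≤ pt F n' (mn' + 1 + (q:ℤ)) := by
        have := HH_mono hF hG hincl.le
        rwa [HH_pt hF hG] at this
      have hdown : pt F n' mn' ≤ HH F G x := by
        have h1 : pt F n' mn' = pt F n ((d:ℤ) * mn') := by
          have := pt_deep hF hG n' 1 mn'
          rw [hsucc] at this
          simpa using this.symm
        rw [h1]
        calc pt F n ((d:ℤ) * mn') ≤ pt F n mn := (pt_strictMono hF n).monotone hch1
          _ ≤ HH F G x := by
              have := HH_ge hF hG n x
              rwa [← hmndef] at this
      have hsum : pt F n' (mn' + (q+1:ℕ)) - pt F n' mn' ≤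
          ((q+1:ℕ):ℝ) * K^(q+1) * len F n' mn' := sum_right hF n' mn' (q+1)
      have hLFn' : len F n' mn' ≤ LF / ρ := by
        have hcl : ρ * len F n' mn' ≤ len F (n'+1) mn := child_lb hF hd hch1 hch2
        rw [hsucc] at hcl
        rw [le_div_iff₀ hρ0]
        calc len F n' mn' * ρ = ρ * len F n' mn' := by ring
          _ ≤ LF := hcl
      have e : mn' + ((q+1:ℕ):ℤ) = mn' + 1 + (q:ℤ) := by push_cast; ring
      rw [e] at hsum
      calc HH F G (x + t) - HH F G x ≤ pt F n' (mn' + 1 + (q:ℤ)) - pt F n' mn' := by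
            linarith
        _ ≤ ((q+1:ℕ):ℝ) * K^(q+1) * len F n' mn' := hsum
        _ ≤ ((q+1:ℕ):ℝ) * K^(q+1) * (LF / ρ) := by
            apply mul_le_mul_of_nonneg_left hLFn' (by positivity)
        _ = CU * LF := by rw [hCUdef]; push_cast; field_simp; try ring
    -- ===== (4) upper bound for Den =====
    have hDenUB : HH F G x - HH F G (x - t) ≤ CU * LF := by
      have hgrow := grow_left hG n' mn' i1
      have hlen1 : len G n' mn' ≤ K * len G n' (mn' - 1) := by
        have := len_adj_right hG n' (mn' - 1)
        have e : mn' - 1 + 1 = mn' := by ring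
        rwa [e] at this
      have hgap : t < pt G n' mn' - pt G n' (mn' - (q:ℤ)) := by
        have h1 : (1 + K⁻¹)^i1 * len G n' (mn' - 1) ≥ (2*K) * (len G n' mn' / K) := by
          have hl : len G n' mn' / K ≤ len G n' (mn' - 1) := by
            rw [div_le_iff₀ hK0]
            linarith [hlen1]
          calc (2*K) * (len G n' mn' / K) ≤ (2*K) * len G n' (mn' - 1) := by
                apply mul_le_mul_of_nonneg_left hl (by positivity)
            _ ≤ (1 + K⁻¹)^i1 * len G n' (mn' - 1) := by
                apply mul_le_mul_of_nonneg_right hi1.le (len_pos hG n' _).le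
        have h2 : (2*K) * (len G n' mn' / K) = 2 * len G n' mn' := by field_simp
        have hq2 : (q:ℤ) = 2 ^ i1 := by rw [hqdef]; push_cast; ring
        rw [hq2]
        calc t < 2 * len G n' mn' := by linarith [hmin]
          _ ≤ (1 + K⁻¹)^i1 * len G n' (mn' - 1) := by linarith [h1, h2]
          _ ≤ pt G n' mn' - pt G n' (mn' - 2^i1) := hgrow
      have hincl : pt G n' (mn' - (q:ℤ)) < x - t := by linarith
      have hlow : pt F n' (mn' - (q:ℤ)) ≤ HH F G (x - t) := by
        have := HH_mono hF hG hincl.le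
        rwa [HH_pt hF hG] at this
      have hup : HH F G x ≤ pt F n' (mn' + 1) := by
        have h1 : pt F n' (mn' + 1) = pt F n ((d:ℤ) * mn' + d) := by
          have := pt_deep hF hG n' 1 (mn' + 1)
          rw [hsucc] at this
          have e : (d:ℤ)^1 * (mn' + 1) = (d:ℤ) * mn' + d := by ring
          rw [e] at this
          exact this.symm
        rw [h1]
        calc HH F G x ≤ pt F n (mn + 1) := by
              have := HH_le hF hG n x
              rwa [← hmndef] at this
          _ ≤ pt F n ((d:ℤ) * mn' + d) := (pt_strictMono hF n).monotone (by omega)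
      have hsum : pt F n' (mn' + 1) - pt F n' (mn' + 1 - (q+1:ℕ)) ≤
          ((q+1:ℕ):ℝ) * K^(q+1) * len F n' (mn' + 1 - 1) := sum_left hF n' (mn' + 1) (q+1)
      have e : mn' + 1 - ((q+1:ℕ):ℤ) = mn' - (q:ℤ) := by push_cast; ring
      have e2 : mn' + 1 - 1 = mn' := by ring
      rw [e, e2] at hsum
      have hLFn' : len F n' mn' ≤ LF / ρ := by
        have hcl : ρ * len F n' mn' ≤ len F (n'+1) mn := child_lb hF hd hch1 hch2
        rw [hsucc] at hcl
        rw [le_div_iff₀ hρ0]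
        calc len F n' mn' * ρ = ρ * len F n' mn' := by ring
          _ ≤ LF := hcl
      calc HH F G x - HH F G (x - t) ≤ pt F n' (mn' + 1) - pt F n' (mn' - (q:ℤ)) := by
            linarith
        _ ≤ ((q+1:ℕ):ℝ) * K^(q+1) * len F n' mn' := hsum
        _ ≤ ((q+1:ℕ):ℝ) * K^(q+1) * (LF / ρ) := by
            apply mul_le_mul_of_nonneg_left hLFn' (by positivity)
        _ = CU * LF := by rw [hCUdef]; push_cast; field_simp; try ring
    -- combine
    have hM1CL : M1 * CL = CU := by
      rw [hM1def]; field_simp; try ring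
    constructor
    · calc HH F G (x + t) - HH F G x ≤ CU * LF := hNumUB
        _ = M1 * (CL * LF) := by rw [← hM1CL]; ring
        _ ≤ M1 * (HH F G x - HH F G (x - t)) := by
            apply mul_le_mul_of_nonneg_left hDenLB hM10.le
    · calc HH F G x - HH F G (x - t) ≤ CU * LF := hDenUB
        _ = M1 * (CL * LF) := by rw [← hM1CL]; ring
        _ ≤ M1 * (HH F G (x + t) - HH F G x) := by
            apply mul_le_mul_of_nonneg_left hNumLB hM10.le
  -- main: all t > 0
  intro x t ht
  have hDpos : 0 < HH F G x - HH F G (x - t) := by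
    have := HH_strictMono hF hG hd (show x - t < x by linarith)
    linarith
  have hNpos : 0 < HH F G (x + t) - HH F G x := by
    have := HH_strictMono hF hG hd (show x < x + t by linarith)
    linarith
  rcases lt_or_ge t 1 with ht1 | ht1
  · obtain ⟨h1, h2⟩ := key x t ht ht1
    constructor
    · calc HH F G (x + t) - HH F G x ≤ M1 * (HH F G x - HH F G (x - t)) := h1
        _ ≤ max 3 M1 * (HH F G x - HH F G (x - t)) := by
            apply mul_le_mul_of_nonneg_right (le_max_right _ _) hDpos.le
    · calc HH F G x - HH F G (x - t) ≤ M1 * (HH F G (x + t) - HH F G x) := h2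
        _ ≤ max 3 M1 * (HH F G (x + t) - HH F G x) := by
            apply mul_le_mul_of_nonneg_right (le_max_right _ _) hNpos.le
  · -- t ≥ 1
    set r : ℕ := ⌊t⌋₊ with hrdef
    have hr1 : 1 ≤ r := Nat.le_floor (by exact_mod_cast ht1)
    have hrt : (r:ℝ) ≤ t := Nat.floor_le ht.le
    have hrt2 : t < (r:ℝ) + 1 := Nat.lt_floor_add_one t
    have hNum1 : (r:ℝ) ≤ HH F G (x + t) - HH F G x := by
      have : HH F G (x + r) ≤ HH F G (x + t) := HH_mono hF hG (by linarith)
      rw [HH_add_nat hF hG hd] at this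
      linarith
    have hNum2 : HH F G (x + t) - HH F G x ≤ (r:ℝ) + 1 := by
      have : HH F G (x + t) ≤ HH F G (x + ((r:ℕ) + 1 : ℕ)) := by
        apply HH_mono hF hG
        push_cast
        linarith
      rw [HH_add_nat hF hG hd] at this
      push_cast at this
      linarith
    have hDen1 : (r:ℝ) ≤ HH F G x - HH F G (x - t) := by
      have : HH F G ((x - t) + r) ≤ HH F G x := HH_mono hF hG (by linarith)
      rw [HH_add_nat hF hG hd] at this
      linarith
    have hDen2 : HH F G x - HH F G (x - t) ≤ (r:ℝ) + 1 := by
      have : HH F G x ≤ HH F G ((x - t) + ((r:ℕ) + 1 : ℕ)) := by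
        apply HH_mono hF hG
        push_cast
        linarith
      rw [HH_add_nat hF hG hd] at this
      push_cast at this
      linarith
    have hr1' : (1:ℝ) ≤ (r:ℝ) := by exact_mod_cast hr1
    have h3 : (3:ℝ) ≤ max 3 M1 := le_max_left _ _
    constructor
    · calc HH F G (x + t) - HH F G x ≤ (r:ℝ) + 1 := hNum2
        _ ≤ 3 * (r:ℝ) := by linarith
        _ ≤ 3 * (HH F G x - HH F G (x - t)) := by linarith
        _ ≤ max 3 M1 * (HH F G x - HH F G (x - t)) := by
            apply mul_le_mul_of_nonneg_right h3 hDpos.le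
    · calc HH F G x - HH F G (x - t) ≤ (r:ℝ) + 1 := hDen2
        _ ≤ 3 * (r:ℝ) := by linarith
        _ ≤ 3 * (HH F G (x + t) - HH F G x) := by linarith
        _ ≤ max 3 M1 * (HH F G (x + t) - HH F G x) := by
            apply mul_le_mul_of_nonneg_right h3 hNpos.le

end Part7

end Stmt7

namespace Stmt7

variable {d : ℕ} {E : ℝ → ℝ}

theorem raw_finv_eq (hbij : Function.Bijective E) (n : ℕ) (y : ℝ) :
    E^[n] (Finv E n y) = y :=
  Function.invFun_eq ((hbij.iterate n).surjective y)

theorem raw_finv_mono (hmono : StrictMono E) (hbij : Function.Bijective E) (n : ℕ) :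
    StrictMono (Finv E n) := by
  intro a b hab
  by_contra hc
  push_neg at hc
  have h2 := (hmono.iterate n).monotone hc
  rw [raw_finv_eq hbij, raw_finv_eq hbij] at h2
  exact absurd h2 (not_le.2 hab)

theorem raw_finv_zero (hbij : Function.Bijective E) (y : ℝ) : Finv E 0 y = y := by
  have := raw_finv_eq hbij 0 y
  simpa using this

theorem nice_of_unifSymm (hmono : StrictMono E) (hbij : Function.Bijective E)
    (hdeg : ∀ x : ℝ, E (x + 1) = E x + d) (h0 : E 0 = 0) (hus : UnifSymm E) :
    ∃ K0 : ℝ, 1 < K0 ∧ ∀ K : ℝ, K0 ≤ K → Nice d E K := by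
  obtain ⟨ε, hεpos, ⟨B, hB⟩, -, hqs⟩ := hus
  have hB0 : 0 < B := lt_of_lt_of_le (hεpos 1 one_pos) (hB 1 one_pos)
  refine ⟨1 + B, by linarith, ?_⟩
  intro K hK
  have hK1 : (1:ℝ) ≤ K := by linarith
  refine ⟨hmono, hbij, hdeg, h0, by linarith, ?_⟩
  intro n x t ht
  rcases Nat.eq_zero_or_pos n with hn | hn
  · subst hn
    rw [raw_finv_zero hbij, raw_finv_zero hbij, raw_finv_zero hbij]
    constructor
    · have : x - (x - t) = t := by ring
      rw [this]
      nlinarith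
    · have : x + t - x = t := by ring
      rw [this]
      nlinarith
  · obtain ⟨hlow, hhigh⟩ := hqs x t ht n hn
    set N : ℝ := Finv E n (x + t) - Finv E n x with hN
    set D : ℝ := Finv E n x - Finv E n (x - t) with hD
    have hNpos : 0 < N := sub_pos.2 (raw_finv_mono hmono hbij n (by linarith))
    have hDpos : 0 < D := sub_pos.2 (raw_finv_mono hmono hbij n (by linarith))
    have hεt : 0 < ε t := hεpos t ht
    have hεB : ε t ≤ B := hB t ht
    have h1 : N ≤ (1 + ε t) * D := (div_le_iff₀ hDpos).1 hhigh
    have h2 : (1 / (1 + ε t)) * D ≤ N := by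
      rw [← le_div_iff₀ hDpos]
      exact hlow
    constructor
    · -- D ≤ K * N
      have h3 : D ≤ (1 + ε t) * N := by
        have hpos : (0:ℝ) < 1 + ε t := by linarith
        have := mul_le_mul_of_nonneg_left h2 hpos.le
        rw [← mul_assoc] at this
        rw [mul_one_div, div_self (ne_of_gt hpos), one_mul] at this
        exact this
      calc D ≤ (1 + ε t) * N := h3
        _ ≤ K * N := mul_le_mul_of_nonneg_right (by linarith) hNpos.le
    · calc N ≤ (1 + ε t) * D := h1
        _ ≤ K * D := mul_le_mul_of_nonneg_right (by linarith) hDpos.le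

end Stmt7


open Stmt7 in
/-- any two uniformly symmetric circle endomorphisms of the same
degree are topologically conjugate, and the conjugacy is quasisymmetric. -/
theorem stmt_7 (d : ℕ) (hd : 2 ≤ d) (F G : ℝ → ℝ)
    (hFmono : StrictMono F) (hFbij : Function.Bijective F)
    (hFdeg : ∀ x : ℝ, F (x + 1) = F x + d) (hF0 : F 0 = 0)
    (hGmono : StrictMono G) (hGbij : Function.Bijective G)
    (hGdeg : ∀ x : ℝ, G (x + 1) = G x + d) (hG0 : G 0 = 0)
    (hFus : UnifSymm F) (hGus : UnifSymm G) :
    ∃ H : ℝ → ℝ, StrictMono H ∧ Function.Bijective H ∧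
      (∀ x : ℝ, H (x + 1) = H x + 1) ∧ (∀ x : ℝ, F (H x) = H (G x)) ∧
      ∃ M : ℝ, 1 ≤ M ∧ ∀ x t : ℝ, 0 < t →
        M⁻¹ ≤ (H (x + t) - H x) / (H x - H (x - t)) ∧
          (H (x + t) - H x) / (H x - H (x - t)) ≤ M := by
  obtain ⟨KF, hKF1, hKF⟩ := nice_of_unifSymm hFmono hFbij hFdeg hF0 hFus
  obtain ⟨KG, hKG1, hKG⟩ := nice_of_unifSymm hGmono hGbij hGdeg hG0 hGus
  set K : ℝ := max KF KG with hKdef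
  have hF : Nice d F K := hKF K (le_max_left _ _)
  have hG : Nice d G K := hKG K (le_max_right _ _)
  refine ⟨HH F G, HH_strictMono hF hG hd, HH_bijective hF hG hd,
    HH_add_one hF hG, HH_conj hF hG, ?_⟩
  obtain ⟨M, hM1, hM⟩ := HH_qs hF hG hd
  have hM0 : 0 < M := by linarith
  refine ⟨M, hM1, ?_⟩
  intro x t ht
  obtain ⟨h1, h2⟩ := hM x t ht
  have hDpos : 0 < HH F G x - HH F G (x - t) := by
    have := HH_strictMono hF hG hd (show x - t < x by linarith)
    linarith
  constructor
  · rw [le_div_iff₀ hDpos]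
    calc M⁻¹ * (HH F G x - HH F G (x - t)) ≤ M⁻¹ * (M * (HH F G (x + t) - HH F G x)) := by
          apply mul_le_mul_of_nonneg_left h2 (by positivity)
      _ = HH F G (x + t) - HH F G x := by field_simp
  · rw [div_le_iff₀ hDpos]
    exact h1
end

section
/- Let d ≥ 2 and let F : ℝ → ℝ be an increasing homeomorphism with F(x+1) = F(x) + d for all x, F(0) = 0, which is continuously differentiable with α-Hölder derivative (0 < α ≤ 1) and expanding ((Fⁿ)′(x) ≥ Cλⁿ for some C > 0, λ > 1 and all x, n). Then the dual derivative D*(F) : Σ* → ℝ exists and is Hölder continuous: there are constants C′ > 0 and 0 < τ < 1 such that |D*(F)(w) − D*(F)(w′)| ≤ C′ τⁿ whenever w(q) = w′(q) for all q < n. -/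
open Filter

/-- `kseq d w n = Σ_{q<n} w(q) d^q`. -/
def kseq (d : ℕ) (w : ℕ → Fin d) (n : ℕ) : ℕ :=
  ∑ q ∈ Finset.range n, (w q : ℕ) * d ^ q

/-- The shift `σ*` on the dual symbolic space. -/
def shft {d : ℕ} (w : ℕ → Fin d) : ℕ → Fin d := fun q => w (q + 1)

/-- The `n`-th approximant `D*_n(F)(w)` of the dual derivative. -/
noncomputable def DstarSeq (F : ℝ → ℝ) {d : ℕ} (w : ℕ → Fin d) (n : ℕ) : ℝ :=
  (Finv F (n - 1) ((kseq d (shft w) (n - 1) : ℝ) + 1) -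
      Finv F (n - 1) (kseq d (shft w) (n - 1) : ℝ)) /
  (Finv F n ((kseq d w n : ℝ) + 1) - Finv F n (kseq d w n : ℝ))

set_option maxHeartbeats 2000000 in
/-- for a `C^{1+α}` expanding circle endomorphism, the dual
derivative exists and is Hölder continuous on the dual symbolic space. -/
theorem stmt_9 (d : ℕ) (hd : 2 ≤ d) (F F' : ℝ → ℝ)
    (hmono : StrictMono F) (hbij : Function.Bijective F)
    (hdeg : ∀ x : ℝ, F (x + 1) = F x + d) (hF0 : F 0 = 0)
    (hderiv : ∀ x : ℝ, HasDerivAt F (F' x) x) (hcont : Continuous F')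
    (α : ℝ) (hα0 : 0 < α) (hα1 : α ≤ 1) (L : ℝ)
    (hHolder : ∀ x y : ℝ, |F' x - F' y| ≤ L * |x - y| ^ α)
    (C lam : ℝ) (hC : 0 < C) (hlam : 1 < lam)
    (hexp : ∀ (n : ℕ) (x : ℝ), 1 ≤ n → C * lam ^ n ≤ deriv (F^[n]) x) :
    ∃ DF : (ℕ → Fin d) → ℝ,
      (∀ w : ℕ → Fin d, Tendsto (fun n => DstarSeq F w n) atTop (nhds (DF w))) ∧
      ∃ C' τ : ℝ, 0 < C' ∧ 0 < τ ∧ τ < 1 ∧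
        ∀ (w w' : ℕ → Fin d) (n : ℕ), (∀ q < n, w q = w' q) →
          |DF w - DF w'| ≤ C' * τ ^ n := by
  classical
  have hlam0 : (0:ℝ) < lam := lt_trans one_pos hlam
  have hd0 : (0:ℝ) < (d:ℝ) := by
    have : (2:ℝ) ≤ (d:ℝ) := by exact_mod_cast hd
    linarith
  set G : ℝ → ℝ := Function.invFun F with hGdef
  have hFG : ∀ y, F (G y) = y := fun y => Function.rightInverse_invFun hbij.2 y
  have hGF : ∀ x, G (F x) = x := fun x => Function.leftInverse_invFun hbij.1 x
  have hGmono : StrictMono G := by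
    intro u v huv
    rcases lt_trichotomy (G u) (G v) with h | h | h
    · exact h
    · exfalso
      have h2 := congrArg F h
      rw [hFG, hFG] at h2
      exact absurd h2 (ne_of_lt huv)
    · exfalso
      have h2 := hmono h
      rw [hFG, hFG] at h2
      linarith
  have hGmono' : Monotone G := hGmono.monotone
  have hFGiter : ∀ (m : ℕ) (y : ℝ), F^[m] (G^[m] y) = y := fun m y =>
    (Function.LeftInverse.iterate hFG m) y
  have hFinv : ∀ m, Finv F m = G^[m] := by
    intro m
    funext y
    have hsur : Function.Surjective (F^[m]) := hbij.2.iterate m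
    have hinj : Function.Injective (F^[m]) := hbij.1.iterate m
    apply hinj
    rw [hFGiter]
    exact Function.rightInverse_invFun hsur y
  have hperN : ∀ (j : ℕ) (x : ℝ), F (x + j) = F x + d * j := by
    intro j
    induction j with
    | zero => simp
    | succ n ih =>
      intro x
      have h1 : (x + ((n+1 : ℕ) : ℝ)) = (x + n) + 1 := by push_cast; ring
      rw [h1, hdeg, ih]
      push_cast; ring
  have hGper : ∀ (y : ℝ) (j : ℕ), G (y + d * j) = G y + j := by
    intro y j
    have h : F (G y + j) = y + d * j := by rw [hperN, hFG]
    rw [← h, hGF]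
  have hGiterper : ∀ (m : ℕ) (y : ℝ) (j : ℕ), G^[m] (y + (d:ℝ)^m * j) = G^[m] y + j := by
    intro m
    induction m with
    | zero => intro y j; simp
    | succ n ih =>
      intro y j
      rw [Function.iterate_succ_apply, Function.iterate_succ_apply]
      have h1 : y + (d:ℝ)^(n+1) * j = y + (d:ℝ) * ((d^n * j : ℕ) : ℝ) := by push_cast; ring
      rw [h1, hGper]
      have h2 : G y + ((d^n * j : ℕ) : ℝ) = G y + (d:ℝ)^n * j := by push_cast; ring
      rw [h2, ih]
  -- analysis basics
  have hFdiff : Differentiable ℝ F := fun x => (hderiv x).differentiableAt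
  have hFcont : Continuous F := hFdiff.continuous
  have hiterdiff : ∀ m, Differentiable ℝ (F^[m]) := by
    intro m
    induction m with
    | zero => simpa [Function.iterate_zero] using differentiable_id
    | succ n ih =>
      rw [Function.iterate_succ]
      exact ih.comp hFdiff
  have hF'lb : ∀ x, C * lam ≤ F' x := by
    intro x
    have h := hexp 1 x le_rfl
    rwa [pow_one, Function.iterate_one, (hderiv x).deriv] at h
  have hF'pos : ∀ x, 0 < F' x := fun x => lt_of_lt_of_le (by positivity) (hF'lb x)
  have hL0 : 0 ≤ L := by
    have h := hHolder 1 0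
    have h2 : |(1:ℝ) - 0| ^ α = 1 := by
      rw [show |(1:ℝ) - 0| = 1 by norm_num, Real.one_rpow]
    rw [h2, mul_one] at h
    exact le_trans (abs_nonneg _) h
  have mvt1 : ∀ u v : ℝ, u < v → ∃ θ, G u ≤ θ ∧ θ ≤ G v ∧ G v - G u = (v - u) / F' θ := by
    intro u v huv
    have hab : G u < G v := hGmono huv
    obtain ⟨θ, hθ, heq⟩ := exists_hasDerivAt_eq_slope F F' hab hFcont.continuousOn
      (fun x _ => hderiv x)
    refine ⟨θ, hθ.1.le, hθ.2.le, ?_⟩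
    rw [hFG, hFG] at heq
    have h1 : F' θ ≠ 0 := ne_of_gt (hF'pos θ)
    have h2 : G v - G u ≠ 0 := sub_ne_zero.2 (ne_of_gt hab)
    have h3 : v - u ≠ 0 := sub_ne_zero.2 (ne_of_gt huv)
    rw [heq, div_div_eq_mul_div, mul_comm, mul_div_assoc, div_self h3, mul_one]
  have mvtm : ∀ (m : ℕ), 1 ≤ m → ∀ u v : ℝ, u < v →
      G^[m] v - G^[m] u ≤ (v - u) / (C * lam ^ m) := by
    intro m hm u v huv
    have hab : G^[m] u < G^[m] v := (hGmono.iterate m) huv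
    obtain ⟨θ, hθ, heq⟩ := exists_hasDerivAt_eq_slope (F^[m]) (deriv (F^[m])) hab
      (hiterdiff m).continuous.continuousOn (fun x _ => ((hiterdiff m) x).hasDerivAt)
    rw [hFGiter, hFGiter] at heq
    have h1 := hexp m θ hm
    rw [heq] at h1
    have hΔ : 0 < G^[m] v - G^[m] u := sub_pos.2 hab
    have hcl : 0 < C * lam ^ m := by positivity
    rw [le_div_iff₀ hΔ] at h1
    rw [le_div_iff₀ hcl, mul_comm]
    exact h1
  -- constants
  set M : ℝ := F' 0 + L with hMdef
  have hMpos : 0 < M := by have := hF'pos 0; linarith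
  set τ : ℝ := lam⁻¹ ^ α with hτdef
  have hτ0 : 0 < τ := Real.rpow_pos_of_pos (inv_pos.2 hlam0) α
  have hτ1 : τ < 1 := Real.rpow_lt_one (inv_nonneg.2 hlam0.le) (inv_lt_one_of_one_lt₀ hlam) hα0
  set Kc : ℝ := L / (C * lam) * ((C * lam)⁻¹) ^ α with hKcdef
  have hKc0 : 0 ≤ Kc :=
    mul_nonneg (div_nonneg hL0 (by positivity)) (Real.rpow_nonneg (by positivity) α)
  set Mψ : ℝ := M * Real.exp (Kc * (1 - τ)⁻¹) with hMψdef
  have hMψpos : 0 < Mψ := mul_pos hMpos (Real.exp_pos _)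
  set K3 : ℝ := Mψ * Kc with hK3def
  have hK30 : 0 ≤ K3 := mul_nonneg hMψpos.le hKc0
  set Kt : ℝ := K3 / (1 - τ) with hKtdef
  have hKt0 : 0 ≤ Kt := div_nonneg hK30 (by linarith)
  have hpow : ∀ m : ℕ, ((C * lam ^ (m+1))⁻¹ : ℝ) ^ α = ((C * lam)⁻¹) ^ α * τ ^ m := by
    intro m
    have h1 : (C * lam ^ (m+1))⁻¹ = (C * lam)⁻¹ * (lam⁻¹) ^ m := by
      rw [pow_succ]
      field_simp
      simp [← mul_pow, hlam0.ne']
    rw [h1, Real.mul_rpow (by positivity) (by positivity)]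
    congr 1
    rw [← Real.rpow_natCast lam⁻¹ m, ← Real.rpow_mul (by positivity),
      mul_comm (m:ℝ) α, Real.rpow_mul (by positivity), Real.rpow_natCast]
  have hgeom : ∀ m : ℕ, ∑ j ∈ Finset.range m, τ ^ j ≤ (1 - τ)⁻¹ := by
    intro m
    rw [geom_sum_eq (ne_of_lt hτ1)]
    rw [div_le_iff_of_neg (by linarith : τ - 1 < 0)]
    have hτm : 0 < τ ^ m := pow_pos hτ0 m
    have h1τ : (0:ℝ) < 1 - τ := by linarith
    have heq : (1 - τ)⁻¹ * (τ - 1) = -1 := by field_simp; ring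
    rw [heq]
    linarith
  -- the key pointwise construction
  have key : ∀ w : ℕ → Fin d, ∃ l : ℝ,
      Tendsto (fun n => DstarSeq F w n) atTop (nhds l) ∧ 0 ≤ l ∧ l ≤ Mψ ∧
      ∀ m, |DstarSeq F w (m+1) - l| ≤ Kt * τ ^ m := by
    intro w
    set w0 : ℝ := ((w 0 : ℕ) : ℝ) with hw0def
    have hw0nn : (0:ℝ) ≤ w0 := by rw [hw0def]; positivity
    have hw0lt : w0 + 1 ≤ (d:ℝ) := by
      rw [hw0def]
      have h2 : (w 0 : ℕ) + 1 ≤ d := (w 0).isLt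
      exact_mod_cast h2
    have hG0 : G 0 = 0 := by
      have h := hGF 0
      rw [hF0] at h
      exact h
    have hF1 : F 1 = d := by
      have h := hdeg 0
      rw [hF0, zero_add] at h
      simpa using h
    have hGd : G (d:ℝ) = 1 := by rw [← hF1, hGF]
    set a0 : ℝ := G w0 with ha0def
    set b0 : ℝ := G (w0 + 1) with hb0def
    have ha0 : 0 ≤ a0 := by rw [← hG0]; exact hGmono' hw0nn
    have hb0 : b0 ≤ 1 := by rw [← hGd]; exact hGmono' hw0lt
    have hab0 : a0 < b0 := hGmono (lt_add_one w0)
    set k : ℕ → ℝ := fun m => ((kseq d (shft w) m : ℕ) : ℝ) with hkdef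
    set A : ℕ → ℝ := fun m => G^[m] (k m) with hAdef
    set B : ℕ → ℝ := fun m => G^[m] (k m + 1) with hBdef
    set aa : ℕ → ℝ := fun m => G^[m] (k m + a0) with haadef
    set bb : ℕ → ℝ := fun m => G^[m] (k m + b0) with hbbdef
    set ψ : ℕ → ℝ := fun m => (B m - A m) / (bb m - aa m) with hψdef
    have hAa : ∀ m, A m ≤ aa m := fun m => (hGmono'.iterate m) (by linarith)
    have hab : ∀ m, aa m < bb m := fun m => (hGmono.iterate m) (by linarith)
    have hbB : ∀ m, bb m ≤ B m := fun m => (hGmono'.iterate m) (by linarith)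
    have hAB : ∀ m, A m < B m := fun m => (hGmono.iterate m) (by linarith)
    have hψpos : ∀ m, 0 < ψ m := fun m =>
      div_pos (by have := hAB m; linarith) (by have := hab m; linarith)
    have hlen : ∀ m, B (m+1) - A (m+1) ≤ (C * lam ^ (m+1))⁻¹ := by
      intro m
      have h := mvtm (m+1) (by omega) (k (m+1)) (k (m+1) + 1) (lt_add_one _)
      have e : k (m+1) + 1 - k (m+1) = 1 := by ring
      rw [e, one_div] at h
      exact h
    -- ψ equals DstarSeq
    have hψeq : ∀ m, ψ m = DstarSeq F w (m+1) := by
      intro m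
      have hks : ((kseq d w (m+1) : ℕ) : ℝ) = w0 + (d:ℝ) * k m := by
        simp only [kseq, hkdef]
        rw [Finset.sum_range_succ']
        push_cast
        rw [Finset.mul_sum]
        rw [Finset.sum_congr rfl (fun q _ => by
          show ((w (q+1) : ℕ) : ℝ) * (d:ℝ)^(q+1) = (d:ℝ) * (((shft w q : ℕ):ℝ) * (d:ℝ)^q)
          simp only [shft]
          ring)]
        ring
      have hden : ∀ s : ℝ, G^[m+1] (((kseq d w (m+1) : ℕ) : ℝ) + s)
          = G^[m] (k m + G (w0 + s)) := by
        intro s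
        rw [Function.iterate_succ_apply]
        congr 1
        rw [hks]
        rw [show w0 + (d:ℝ) * k m + s = (w0 + s) + (d:ℝ) * ((kseq d (shft w) m : ℕ) : ℝ)
          from by rw [hkdef]; ring]
        rw [hGper]
        rw [hkdef]
        ring
      have hd1 : G^[m+1] (((kseq d w (m+1) : ℕ) : ℝ) + 1) = bb m := by
        rw [hden 1]
      have hd0 : G^[m+1] (((kseq d w (m+1) : ℕ) : ℝ)) = aa m := by
        rw [show ((kseq d w (m+1) : ℕ) : ℝ) = ((kseq d w (m+1) : ℕ) : ℝ) + 0 from by ring,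
          hden 0, add_zero]
      simp only [DstarSeq, Nat.add_sub_cancel]
      rw [hFinv m, hFinv (m+1), hd1, hd0]
    -- recursion
    have hkrec : ∀ m : ℕ, k (m+1) = k m + (d:ℝ)^m * ((w (m+1) : ℕ) : ℝ) := by
      intro m
      simp only [hkdef, kseq, Finset.sum_range_succ]
      push_cast
      simp only [shft]
      ring
    have hrec : ∀ (m : ℕ) (s : ℝ),
        G^[m+1] (k (m+1) + s) = G (G^[m] (k m + s) + ((w (m+1) : ℕ) : ℝ)) := by
      intro m s
      rw [Function.iterate_succ_apply']
      congr 1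
      rw [hkrec]
      rw [show k m + (d:ℝ)^m * ((w (m+1):ℕ):ℝ) + s = (k m + s) + (d:ℝ)^m * ((w (m+1):ℕ):ℝ)
        from by ring]
      rw [hGiterper]
    have hArec : ∀ m, A (m+1) = G (A m + ((w (m+1) : ℕ) : ℝ)) := by
      intro m
      have h := hrec m 0
      simp only [add_zero] at h
      exact h
    have hBrec : ∀ m, B (m+1) = G (B m + ((w (m+1) : ℕ) : ℝ)) := fun m => hrec m 1
    have haarec : ∀ m, aa (m+1) = G (aa m + ((w (m+1) : ℕ) : ℝ)) := fun m => hrec m a0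
    have hbbrec : ∀ m, bb (m+1) = G (bb m + ((w (m+1) : ℕ) : ℝ)) := fun m => hrec m b0
    -- step estimate
    have hstep : ∀ m, |ψ (m+1) - ψ m| ≤ ψ m * (Kc * τ ^ m) := by
      intro m
      set j : ℝ := ((w (m+1) : ℕ) : ℝ) with hjdef
      obtain ⟨θ₁, h1a, h1b, h1e⟩ := mvt1 (A m + j) (B m + j) (by have := hAB m; linarith)
      obtain ⟨θ₂, h2a, h2b, h2e⟩ := mvt1 (aa m + j) (bb m + j) (by have := hab m; linarith)
      have e1 : B (m+1) - A (m+1) = (B m - A m) / F' θ₁ := by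
        rw [hArec m, hBrec m, h1e]
        congr 1
        ring
      have e2 : bb (m+1) - aa (m+1) = (bb m - aa m) / F' θ₂ := by
        rw [haarec m, hbbrec m, h2e]
        congr 1
        ring
      have hθ1l : A (m+1) ≤ θ₁ := by rw [hArec m]; exact h1a
      have hθ1r : θ₁ ≤ B (m+1) := by rw [hBrec m]; exact h1b
      have hθ2l : A (m+1) ≤ θ₂ := by
        rw [hArec m]
        exact le_trans (hGmono' (by have := hAa m; linarith)) h2a
      have hθ2r : θ₂ ≤ B (m+1) := by
        rw [hBrec m]
        exact le_trans h2b (hGmono' (by have := hbB m; linarith))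
      have habs : |θ₂ - θ₁| ≤ B (m+1) - A (m+1) :=
        abs_le.2 ⟨by linarith, by linarith⟩
      have hrp : |θ₂ - θ₁| ^ α ≤ ((C * lam)⁻¹) ^ α * τ ^ m := by
        calc |θ₂ - θ₁| ^ α ≤ ((C * lam ^ (m+1))⁻¹) ^ α := by
              apply Real.rpow_le_rpow (abs_nonneg _) _ hα0.le
              exact le_trans habs (hlen m)
          _ = ((C * lam)⁻¹) ^ α * τ ^ m := hpow m
      have hθ1pos := hF'pos θ₁
      have hθ2pos := hF'pos θ₂
      have hd2 : bb m - aa m ≠ 0 := ne_of_gt (by have := hab m; linarith)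
      have hiden : ψ (m+1) = ψ m * (F' θ₂ / F' θ₁) := by
        simp only [hψdef]
        rw [e1, e2, div_div_div_comm, div_div_eq_mul_div, mul_div_assoc]
      have hiden2 : ψ (m+1) - ψ m = ψ m * ((F' θ₂ - F' θ₁) / F' θ₁) := by
        rw [hiden]
        field_simp
      rw [hiden2, abs_mul, abs_of_pos (hψpos m), abs_div, abs_of_pos hθ1pos]
      apply mul_le_mul_of_nonneg_left _ (hψpos m).le
      have hden : C * lam ≤ F' θ₁ := hF'lb θ₁
      calc |F' θ₂ - F' θ₁| / F' θ₁ ≤ (L * (((C * lam)⁻¹) ^ α * τ ^ m)) / (C * lam) := by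
            apply div_le_div₀ (mul_nonneg hL0 (by positivity)) _ (by positivity) hden
            exact le_trans (hHolder θ₂ θ₁) (mul_le_mul_of_nonneg_left hrp hL0)
        _ = Kc * τ ^ m := by rw [hKcdef]; ring
    -- ψ 0 bound
    have hψ0 : ψ 0 ≤ M := by
      have hk0 : k 0 = 0 := by simp [hkdef, kseq]
      obtain ⟨θ, hta, htb, hte⟩ := mvt1 w0 (w0 + 1) (lt_add_one w0)
      have hθ01 : 0 ≤ θ ∧ θ ≤ 1 := ⟨le_trans ha0 hta, le_trans htb hb0⟩
      have hθM : F' θ ≤ M := by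
        have h := hHolder θ 0
        have habs1 : |θ - 0| ^ α ≤ 1 := by
          apply Real.rpow_le_one (abs_nonneg _) _ hα0.le
          rw [sub_zero, abs_of_nonneg hθ01.1]
          exact hθ01.2
        have h2 : |F' θ - F' 0| ≤ L := le_trans h (by nlinarith)
        have h3 := (abs_le.1 h2).2
        rw [hMdef]
        linarith
      have hb0a0 : b0 - a0 = 1 / F' θ := by
        rw [ha0def, hb0def]
        rw [hte]
        congr 1
        ring
      have hψ0eq : ψ 0 = F' θ := by
        simp only [hψdef, hAdef, hBdef, haadef, hbbdef, Function.iterate_zero_apply, hk0]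
        rw [show (0:ℝ) + 1 - 0 = 1 from by ring, show (0:ℝ) + b0 - (0 + a0) = b0 - a0 from by ring]
        rw [hb0a0]
        rw [one_div_one_div]
      rw [hψ0eq]
      exact hθM
    have hψbd : ∀ m, ψ m ≤ Mψ := by
      have hind : ∀ m, ψ m ≤ M * Real.exp (Kc * ∑ j ∈ Finset.range m, τ ^ j) := by
        intro m
        induction m with
        | zero =>
          rw [Finset.sum_range_zero, mul_zero, Real.exp_zero, mul_one]
          exact hψ0
        | succ n ih =>
          have h1 : ψ (n+1) ≤ ψ n * Real.exp (Kc * τ ^ n) := by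
            have h2 := (abs_le.1 (hstep n)).2
            have h4 := Real.add_one_le_exp (Kc * τ ^ n)
            have h5 : ψ (n+1) ≤ ψ n * (1 + Kc * τ ^ n) := by
              have he : ψ n * (1 + Kc * τ ^ n) = ψ n + ψ n * (Kc * τ ^ n) := by ring
              linarith
            calc ψ (n+1) ≤ ψ n * (1 + Kc * τ ^ n) := h5
              _ ≤ ψ n * Real.exp (Kc * τ ^ n) := by
                  apply mul_le_mul_of_nonneg_left _ (hψpos n).le
                  linarith
          calc ψ (n+1) ≤ ψ n * Real.exp (Kc * τ ^ n) := h1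
            _ ≤ (M * Real.exp (Kc * ∑ j ∈ Finset.range n, τ ^ j)) * Real.exp (Kc * τ ^ n) :=
                mul_le_mul_of_nonneg_right ih (Real.exp_pos _).le
            _ = M * Real.exp (Kc * ∑ j ∈ Finset.range (n+1), τ ^ j) := by
                rw [Finset.sum_range_succ, mul_add, Real.exp_add]
                ring
      intro m
      calc ψ m ≤ M * Real.exp (Kc * ∑ j ∈ Finset.range m, τ ^ j) := hind m
        _ ≤ Mψ := by
            rw [hMψdef]
            apply mul_le_mul_of_nonneg_left _ hMpos.le
            exact Real.exp_le_exp.2 (mul_le_mul_of_nonneg_left (hgeom m) hKc0)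
    have hstep' : ∀ m, dist (ψ m) (ψ (m+1)) ≤ K3 * τ ^ m := by
      intro m
      rw [Real.dist_eq, abs_sub_comm]
      calc |ψ (m+1) - ψ m| ≤ ψ m * (Kc * τ ^ m) := hstep m
        _ ≤ Mψ * (Kc * τ ^ m) := by
            exact mul_le_mul_of_nonneg_right (hψbd m) (mul_nonneg hKc0 (pow_nonneg hτ0.le m))
        _ = K3 * τ ^ m := by rw [hK3def]; ring
    have hcauchy : CauchySeq ψ := cauchySeq_of_le_geometric τ K3 hτ1 hstep'
    obtain ⟨l, hl⟩ := cauchySeq_tendsto_of_complete hcauchy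
    refine ⟨l, ?_, ?_, ?_, ?_⟩
    · have h1 : Tendsto (fun n => DstarSeq F w (n+1)) atTop (nhds l) :=
        hl.congr fun m => hψeq m
      exact (tendsto_add_atTop_iff_nat 1).mp h1
    · exact ge_of_tendsto' hl fun m => (hψpos m).le
    · exact le_of_tendsto' hl hψbd
    · intro m
      have h := dist_le_of_le_geometric_of_tendsto τ K3 hτ1 hstep' hl m
      rw [Real.dist_eq] at h
      rw [← hψeq m]
      calc |ψ m - l| ≤ K3 * τ ^ m / (1 - τ) := h
        _ = Kt * τ ^ m := by rw [hKtdef]; ring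
  -- dependence on finitely many coordinates
  have hdep : ∀ (w w' : ℕ → Fin d) (m : ℕ), (∀ q < m + 1, w q = w' q) →
      DstarSeq F w (m+1) = DstarSeq F w' (m+1) := by
    intro w w' m h
    have h1 : kseq d (shft w) m = kseq d (shft w') m := by
      apply Finset.sum_congr rfl
      intro q hq
      have hq' := Finset.mem_range.1 hq
      simp only [shft]
      rw [h (q+1) (by omega)]
    have h2 : kseq d w (m+1) = kseq d w' (m+1) := by
      apply Finset.sum_congr rfl
      intro q hq
      have hq' := Finset.mem_range.1 hq
      rw [h q (by omega)]
    simp only [DstarSeq, Nat.add_sub_cancel, h1, h2]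
  -- assemble
  choose DF hDF1 hDF2 hDF3 hDF4 using key
  refine ⟨DF, hDF1, 2 * Mψ + 2 * Kt / τ, τ, ?_, hτ0, hτ1, ?_⟩
  · have : 0 ≤ 2 * Kt / τ := div_nonneg (by linarith) hτ0.le
    linarith
  · intro w w' n hag
    match n with
    | 0 =>
      have b1 := hDF2 w
      have b2 := hDF3 w
      have b3 := hDF2 w'
      have b4 := hDF3 w'
      have h5 : |DF w - DF w'| ≤ 2 * Mψ := abs_le.2 ⟨by linarith, by linarith⟩
      have h6 : 0 ≤ 2 * Kt / τ := div_nonneg (by linarith) hτ0.le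
      calc |DF w - DF w'| ≤ 2 * Mψ := h5
        _ ≤ (2 * Mψ + 2 * Kt / τ) * τ ^ 0 := by rw [pow_zero]; linarith
    | (m+1) =>
      have hsame := hdep w w' m hag
      have t1 := hDF4 w m
      have t2 := hDF4 w' m
      have hτm : (0:ℝ) < τ ^ (m+1) := pow_pos hτ0 (m+1)
      calc |DF w - DF w'|
          = |(DstarSeq F w (m+1) - DF w') - (DstarSeq F w (m+1) - DF w)| := by
            congr 1
            ring
        _ ≤ |DstarSeq F w (m+1) - DF w'| + |DstarSeq F w (m+1) - DF w| := abs_sub _ _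
        _ ≤ Kt * τ ^ m + Kt * τ ^ m := by
            rw [← hsame] at t2
            exact add_le_add t2 t1
        _ = (2 * Kt / τ) * τ ^ (m+1) := by
            rw [pow_succ]
            field_simp
            ring
        _ ≤ (2 * Mψ + 2 * Kt / τ) * τ ^ (m+1) := by nlinarith [hMψpos]
end

section
/- Let F : ℝ → ℝ be an increasing homeomorphism with F(x+1) = F(x) + 2 for all x, F(0) = 0, which is uniformly symmetric (degree d = 2). Then the dual derivative satisfies the summation condition: for every w ∈ Σ* = ∏_{q∈ℕ}{0,1}, 1/D*(F)(0⌢w) + 1/D*(F)(1⌢w) = 1, where j⌢w denotes the sequence whose first entry is j and whose (q+1)-st entry is w(q). -/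
open Filter

/-- `j⌢w`: the sequence starting with the digit `j` followed by `w`. -/
def consSeq {d : ℕ} (j : Fin d) (w : ℕ → Fin d) : ℕ → Fin d :=
  fun n => Nat.casesOn n j fun q => w q

section basic
variable {F : ℝ → ℝ} (hmono : StrictMono F) (hbij : Function.Bijective F)
  (hdeg : ∀ x : ℝ, F (x + 1) = F x + 2) (hF0 : F 0 = 0)
include hbij

lemma Finv_left (n : ℕ) (x : ℝ) : Finv F n (F^[n] x) = x :=
  Function.leftInverse_invFun (hbij.iterate n).1 x

lemma Finv_right (n : ℕ) (y : ℝ) : F^[n] (Finv F n y) = y :=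
  Function.rightInverse_invFun (hbij.iterate n).2 y

include hmono in
lemma Finv_mono (n : ℕ) : StrictMono (Finv F n) := by
  intro y1 y2 h
  by_contra hc
  push_neg at hc
  have := (hmono.iterate n).monotone hc
  rw [Finv_right hbij, Finv_right hbij] at this
  linarith

lemma Finv_zero (y : ℝ) : Finv F 0 y = y := by
  have := Finv_left (F := F) hbij 0 y
  simpa using this

omit hbij in
include hdeg in
lemma F_add_nat (x : ℝ) (j : ℕ) : F (x + j) = F x + 2 * j := by
  induction j with
  | zero => simp
  | succ m ih =>
      have h : x + ((m : ℕ) + 1 : ℕ) = (x + m) + 1 := by push_cast; ring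
      rw [h, hdeg, ih]; push_cast; ring

omit hbij in
include hdeg in
lemma iter_add_nat (n : ℕ) (x : ℝ) (j : ℕ) : F^[n] (x + j) = F^[n] x + 2 ^ n * j := by
  induction n generalizing x j with
  | zero => simp
  | succ m ih =>
      rw [Function.iterate_succ_apply, Function.iterate_succ_apply, F_add_nat hdeg]
      have h2 : F x + 2 * j = F x + ((2 * j : ℕ) : ℝ) := by push_cast; ring
      rw [h2, ih]
      push_cast; ring

include hdeg in
lemma Finv_shift (n : ℕ) (y : ℝ) (j : ℕ) :
    Finv F n (y + 2 ^ n * j) = Finv F n y + j := by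
  have h1 : F^[n] (Finv F n y + j) = y + 2 ^ n * j := by
    rw [iter_add_nat hdeg, Finv_right hbij]
  have := congrArg (Finv F n) h1
  rw [Finv_left hbij] at this; exact this.symm

lemma Finv_comp (n m : ℕ) (y : ℝ) : Finv F (n + m) y = Finv F m (Finv F n y) := by
  have h1 : F^[n + m] (Finv F m (Finv F n y)) = y := by
    rw [Function.iterate_add_apply, Finv_right hbij, Finv_right hbij]
  have := congrArg (Finv F (n + m)) h1
  rw [Finv_left hbij] at this; exact this.symm

include hdeg hF0 in
lemma Finv_one_zero : Finv F 1 0 = 0 := by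
  have h1 : F^[1] (0:ℝ) = 0 := by simp [hF0]
  have := congrArg (Finv F 1) h1
  rw [Finv_left hbij] at this; exact this.symm

include hdeg hF0 in
lemma Finv_one_two : Finv F 1 (2:ℝ) = 1 := by
  have h1 : F^[1] (1:ℝ) = 2 := by
    have := F_add_nat hdeg 0 1
    simp at this
    simpa [this, hF0] using this
  have := congrArg (Finv F 1) h1
  rw [Finv_left hbij] at this; exact this.symm

include hmono hdeg hF0 in
lemma a_mem : 0 < Finv F 1 1 ∧ Finv F 1 1 < 1 := by
  have h0 := Finv_one_zero hbij hdeg hF0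
  have h2 := Finv_one_two hbij hdeg hF0
  have m := Finv_mono hmono hbij 1
  constructor
  · have := m (show (0:ℝ) < 1 by norm_num); rwa [h0] at this
  · have := m (show (1:ℝ) < 2 by norm_num); rwa [h2] at this

end basic


section dyadic

lemma lemA (H : ℝ → ℝ) (M : ℝ) (hM : 1 ≤ M)
    (hsym : ∀ x t : ℝ, 0 < t →
      H (x+t) - H x ≤ M * (H x - H (x-t)) ∧ H x - H (x-t) ≤ M * (H (x+t) - H x)) :
    ∀ N : ℕ, ∀ u v : ℝ, u < v →
      (1/(1+M))^N * (H v - H u) ≤ H (u + (v-u)/2^N) - H u ∧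
      (1/(1+M))^N * (H v - H u) ≤ H v - H (v - (v-u)/2^N) := by
  intro N
  induction N with
  | zero =>
      intro u v huv
      constructor
      · simp
      · simp
  | succ N ih =>
      intro u v huv
      have hM0 : (0:ℝ) < 1 + M := by linarith
      have hmid := hsym ((u+v)/2) ((v-u)/2) (by linarith)
      have he1 : (u+v)/2 + (v-u)/2 = v := by ring
      have he2 : (u+v)/2 - (v-u)/2 = u := by ring
      rw [he1, he2] at hmid
      set m := (u+v)/2 with hm
      have hum : u < m := by rw [hm]; linarith
      have hmv : m < v := by rw [hm]; linarith
      have h1 : (H v - H u) / (1 + M) ≤ H m - H u := by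
        rw [div_le_iff₀ hM0]
        nlinarith [hmid.1]
      have h2 : (H v - H u) / (1 + M) ≤ H v - H m := by
        rw [div_le_iff₀ hM0]
        nlinarith [hmid.2]
      constructor
      · have := (ih u m hum).1
        have harg : u + (m-u)/2^N = u + (v-u)/2^(N+1) := by
          rw [hm]; ring
        rw [harg] at this
        calc (1/(1+M))^(N+1) * (H v - H u)
            = (1/(1+M))^N * ((H v - H u)/(1+M)) := by ring
          _ ≤ (1/(1+M))^N * (H m - H u) := by
              apply mul_le_mul_of_nonneg_left h1 (by positivity)
          _ ≤ H (u + (v-u)/2^(N+1)) - H u := this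
      · have := (ih m v hmv).2
        have harg : v - (v-m)/2^N = v - (v-u)/2^(N+1) := by
          rw [hm]; ring
        rw [harg] at this
        calc (1/(1+M))^(N+1) * (H v - H u)
            = (1/(1+M))^N * ((H v - H u)/(1+M)) := by ring
          _ ≤ (1/(1+M))^N * (H v - H m) := by
              apply mul_le_mul_of_nonneg_left h2 (by positivity)
          _ ≤ H v - H (v - (v-u)/2^(N+1)) := this

end dyadic

section lemB
variable (H : ℝ → ℝ) (η δ : ℝ)

lemma claim_mid (hη : 0 < η)
    (hsym : ∀ x t : ℝ, 0 < t → t ≤ δ →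
      H (x+t) - H x ≤ (1+η) * (H x - H (x-t)) ∧ H x - H (x-t) ≤ (1+η) * (H (x+t) - H x))
    (p q : ℝ) (hpq : p < q) (hgap : q - p ≤ δ) :
    (H q - H p)/(2+η) ≤ H ((p+q)/2) - H p ∧
      H ((p+q)/2) - H p ≤ (1+η)/(2+η) * (H q - H p) := by
  have h2η : (0:ℝ) < 2 + η := by linarith
  have hs := hsym ((p+q)/2) ((q-p)/2) (by linarith) (by linarith)
  have he1 : (p+q)/2 + (q-p)/2 = q := by ring
  have he2 : (p+q)/2 - (q-p)/2 = p := by ring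
  rw [he1, he2] at hs
  constructor
  · rw [div_le_iff₀ h2η]; nlinarith [hs.1]
  · rw [div_mul_eq_mul_div, le_div_iff₀ h2η]; nlinarith [hs.2]

set_option maxHeartbeats 1000000 in
lemma lemB (hH : StrictMono H) (hη : 0 < η)
    (hsym : ∀ x t : ℝ, 0 < t → t ≤ δ →
      H (x+t) - H x ≤ (1+η) * (H x - H (x-t)) ∧ H x - H (x-t) ≤ (1+η) * (H (x+t) - H x))
    (x0 x1 x2 : ℝ) (h01 : x0 < x1) (h12 : x1 < x2) (hLδ : x2 - x0 ≤ δ) :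
    |(H x1 - H x0)/(H x2 - H x0) - (x1 - x0)/(x2 - x0)| ≤ η := by
  have h2η : (0:ℝ) < 2 + η := by linarith
  set L := x2 - x0 with hLdef
  have hL0 : 0 < L := by rw [hLdef]; linarith
  set D := H x2 - H x0 with hDdef
  have hD0 : 0 < D := by rw [hDdef]; have := hH (show x0 < x2 by linarith); linarith
  set lam := (1+η)/(2+η) with hlamdef
  have hlam0 : 0 < lam := by positivity
  have hlam1 : lam < 1 := by rw [hlamdef, div_lt_one h2η]; linarith
  -- dyadic points
  set pt : ℕ → ℕ → ℝ := fun N j => x0 + (j:ℝ)/2^N * L with hptdef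
  have hpt0 : ∀ N, pt N 0 = x0 := by intro N; simp [hptdef]
  have hpt_top : ∀ N, pt N (2^N) = x2 := by
    intro N
    have h2N : ((2:ℝ))^N ≠ 0 := by positivity
    simp only [hptdef]
    push_cast
    field_simp
    rw [hLdef]; ring
  have hpt_lt : ∀ N j, pt N j < pt N (j+1) := by
    intro N j
    have h2N : (0:ℝ) < 2^N := by positivity
    have hp : 0 < 1/2^N * L := by positivity
    simp only [hptdef]
    push_cast
    have heq : ((j:ℝ)+1)/2^N * L = (j:ℝ)/2^N * L + 1/2^N * L := by ring
    rw [heq]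
    linarith
  have hpt_gap : ∀ N j, pt N (j+1) - pt N j = 1/2^N * L := by
    intro N j
    simp only [hptdef]
    push_cast
    ring
  have hgapδ : ∀ N : ℕ, 1/(2:ℝ)^N * L ≤ δ := by
    intro N
    have h1 : 1/(2:ℝ)^N ≤ 1 := by
      rw [div_le_one (by positivity)]
      exact one_le_pow₀ (by norm_num)
    nlinarith
  have hpt_even : ∀ N i : ℕ, pt (N+1) (2*i) = pt N i := by
    intro N i
    simp only [hptdef]
    push_cast
    rw [pow_succ]
    field_simp
  have hpt_mid : ∀ N i : ℕ, pt (N+1) (2*i+1) = (pt N i + pt N (i+1))/2 := by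
    intro N i
    simp only [hptdef]
    push_cast
    rw [pow_succ]
    field_simp
    ring
  -- the main dyadic induction
  have main : ∀ N : ℕ,
      (∀ j : ℕ, j + 1 ≤ 2^N → H (pt N (j+1)) - H (pt N j) ≤ lam^N * D) ∧
      (∀ j : ℕ, j ≤ 2^N → |(H (pt N j) - H x0) - (j:ℝ)/2^N * D| ≤ η/2 * (1 - lam^N) * D) := by
    intro N
    induction N with
    | zero =>
        constructor
        · intro j hj
          norm_num at hj
          have hj0 : j = 0 := by omega
          subst hj0
          rw [hpt0, show pt 0 1 = x2 from hpt_top 0]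
          simp [hDdef]
        · intro j hj
          norm_num at hj
          interval_cases j
          · rw [hpt0]; simp
          · rw [show pt 0 1 = x2 from hpt_top 0]
            simp [hDdef]
    | succ N ih =>
        have hpow : (2:ℕ)^(N+1) = 2 * 2^N := by rw [pow_succ]; ring
        have hlamN0 : (0:ℝ) < lam^N := by positivity
        have hlam_mono : lam^(N+1) ≤ lam^N := by
          calc lam^(N+1) = lam^N * lam := by rw [pow_succ]
            _ ≤ lam^N * 1 := by nlinarith
            _ = lam^N := by ring
        constructor
        · -- part (i)
          intro j hj
          rcases Nat.even_or_odd j with ⟨i, hi⟩ | ⟨i, hi⟩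
          · -- j = 2i
            have hj' : i + 1 ≤ 2^N := by omega
            have hiq := (ih.1) i hj'
            have hmid := claim_mid H η δ hη hsym (pt N i) (pt N (i+1)) (hpt_lt N i)
              (by rw [hpt_gap]; exact hgapδ N)
            have h1 : pt (N+1) j = pt N i := by rw [hi, show i + i = 2*i by ring, hpt_even]
            have h2 : pt (N+1) (j+1) = (pt N i + pt N (i+1))/2 := by
              rw [hi, show i + i + 1 = 2*i+1 by ring, hpt_mid]
            rw [h1, h2]
            calc H ((pt N i + pt N (i+1))/2) - H (pt N i)
                ≤ (1+η)/(2+η) * (H (pt N (i+1)) - H (pt N i)) := hmid.2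
              _ ≤ lam * (lam^N * D) := by
                  rw [← hlamdef]
                  apply mul_le_mul_of_nonneg_left hiq (le_of_lt hlam0)
              _ = lam^(N+1) * D := by rw [pow_succ]; ring
          · -- j = 2i+1
            have hj' : i + 1 ≤ 2^N := by omega
            have hiq := (ih.1) i hj'
            have hmid := claim_mid H η δ hη hsym (pt N i) (pt N (i+1)) (hpt_lt N i)
              (by rw [hpt_gap]; exact hgapδ N)
            have h1 : pt (N+1) j = (pt N i + pt N (i+1))/2 := by rw [hi, hpt_mid]
            have h2 : pt (N+1) (j+1) = pt N (i+1) := by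
              rw [hi, show 2*i + 1 + 1 = 2*(i+1) by ring, hpt_even]
            rw [h1, h2]
            have hup := hmid.1
            have hlam_id : 1 - 1/(2+η) = lam := by
              rw [hlamdef]; field_simp; ring
            calc H (pt N (i+1)) - H ((pt N i + pt N (i+1))/2)
                = (H (pt N (i+1)) - H (pt N i)) - (H ((pt N i + pt N (i+1))/2) - H (pt N i)) := by ring
              _ ≤ (H (pt N (i+1)) - H (pt N i)) - (H (pt N (i+1)) - H (pt N i))/(2+η) := by linarith
              _ = lam * (H (pt N (i+1)) - H (pt N i)) := by rw [← hlam_id]; ring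
              _ ≤ lam * (lam^N * D) := by
                  apply mul_le_mul_of_nonneg_left hiq (le_of_lt hlam0)
              _ = lam^(N+1) * D := by rw [pow_succ]; ring
        · -- part (ii)
          intro j hj
          rcases Nat.even_or_odd j with ⟨i, hi⟩ | ⟨i, hi⟩
          · -- even
            have hj' : i ≤ 2^N := by omega
            have h1 : pt (N+1) j = pt N i := by rw [hi, show i + i = 2*i by ring, hpt_even]
            have h2 : ((j:ℝ))/2^(N+1) = (i:ℝ)/2^N := by
              rw [hi]; push_cast; rw [pow_succ]; field_simp; ring
            rw [h1, h2]
            calc |(H (pt N i) - H x0) - (i:ℝ)/2^N * D| ≤ η/2 * (1 - lam^N) * D := ih.2 i hj'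
              _ ≤ η/2 * (1 - lam^(N+1)) * D := by
                  nlinarith [mul_nonneg (mul_nonneg (show (0:ℝ) ≤ η/2 by linarith)
                    (sub_nonneg.mpr hlam_mono)) hD0.le]
          · -- odd
            have hj' : i + 1 ≤ 2^N := by omega
            have hiq := (ih.1) i hj'
            have hip := ih.2 i (by omega)
            have hiq2 := ih.2 (i+1) hj'
            have hmid := claim_mid H η δ hη hsym (pt N i) (pt N (i+1)) (hpt_lt N i)
              (by rw [hpt_gap]; exact hgapδ N)
            have h1 : pt (N+1) j = (pt N i + pt N (i+1))/2 := by rw [hi, hpt_mid]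
            have h2 : ((j:ℝ))/2^(N+1) = ((i:ℝ)/2^N + ((i:ℝ)+1)/2^N)/2 := by
              rw [hi]; push_cast; rw [pow_succ]; field_simp; ring
            rw [h1, h2]
            set ap := H (pt N i) - H x0 with hap
            set aq := H (pt N (i+1)) - H x0 with haq
            set am := H ((pt N i + pt N (i+1))/2) - H x0 with ham
            have hs0 : 0 ≤ aq - ap := by
              have := hH (hpt_lt N i)
              rw [hap, haq]; linarith
            have hc1 : (aq - ap)/(2+η) ≤ am - ap := by
              have := hmid.1
              have he : H (pt N (i+1)) - H (pt N i) = aq - ap := by rw [hap, haq]; ring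
              have he2 : H ((pt N i + pt N (i+1))/2) - H (pt N i) = am - ap := by
                rw [hap, ham]; ring
              rw [he, he2] at this; exact this
            have hc2 : am - ap ≤ lam * (aq - ap) := by
              have := hmid.2
              have he : H (pt N (i+1)) - H (pt N i) = aq - ap := by rw [hap, haq]; ring
              have he2 : H ((pt N i + pt N (i+1))/2) - H (pt N i) = am - ap := by
                rw [hap, ham]; ring
              rw [he, he2, ← hlamdef] at this; exact this
            have hc3 : aq - ap ≤ lam^N * D := by
              have := hiq
              have he : H (pt N (i+1)) - H (pt N i) = aq - ap := by rw [hap, haq]; ring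
              rw [he] at this; exact this
            have hcc : η/(2*(2+η)) * (aq - ap) ≤ η/(2*(2+η)) * (lam^N * D) := by
              apply mul_le_mul_of_nonneg_left hc3 (by positivity)
            have hup : am - (ap + aq)/2 ≤ η/(2*(2+η)) * (lam^N * D) := by
              have hid : lam * (aq-ap) - (aq-ap)/2 = η/(2*(2+η)) * (aq-ap) := by
                rw [hlamdef]; field_simp; ring
              linarith [hc2, hid, hcc]
            have hlo : -(η/(2*(2+η)) * (lam^N * D)) ≤ am - (ap + aq)/2 := by
              have hid : (aq-ap)/(2+η) - (aq-ap)/2 = -(η/(2*(2+η)) * (aq-ap)) := by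
                field_simp; ring
              linarith [hc1, hid, hcc]
            have hkey : η/(2*(2+η)) * (lam^N * D) + η/2*(1 - lam^N)*D
                = η/2*(1 - lam^(N+1))*D := by
              rw [pow_succ, hlamdef]; field_simp; ring
            have hipa := abs_le.mp hip
            have hiqa := abs_le.mp hiq2
            rw [abs_le]
            push_cast at hipa hiqa ⊢
            constructor
            · nlinarith [hipa.1, hiqa.1, hlo]
            · nlinarith [hipa.2, hiqa.2, hup]
  -- final assembly
  obtain ⟨N, hN⟩ : ∃ N : ℕ, (1/2:ℝ)^N < η/2 :=
    exists_pow_lt_of_lt_one (by linarith) (by norm_num)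
  have h2N : (0:ℝ) < 2^N := by positivity
  have hNη : 1/(2:ℝ)^N < η/2 := by
    rw [div_pow, one_pow] at hN; exact hN
  set r := (x1 - x0)/L with hrdef
  have hr0 : 0 < r := by rw [hrdef]; exact div_pos (by linarith) hL0
  have hr1 : r < 1 := by rw [hrdef, div_lt_one hL0, hLdef]; linarith
  set j := ⌊r * 2^N⌋₊ with hjdef
  have hj1 : (j:ℝ) ≤ r * 2^N := Nat.floor_le (by positivity)
  have hj2 : r * 2^N < (j:ℝ) + 1 := Nat.lt_floor_add_one _
  have hjlt : j + 1 ≤ 2^N := by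
    have : (j:ℝ) < (2:ℝ)^N := lt_of_le_of_lt hj1 (by nlinarith)
    have h2 : ((2:ℝ))^N = ((2^N : ℕ) : ℝ) := by push_cast; ring
    rw [h2, Nat.cast_lt] at this
    omega
  have hx1eq : x1 = x0 + r * L := by
    rw [hrdef]; field_simp; ring
  have hx_lo : pt N j ≤ x1 := by
    simp only [hptdef]
    rw [hx1eq]
    have : (j:ℝ)/2^N ≤ r := by rw [div_le_iff₀ h2N]; linarith
    nlinarith
  have hx_hi : x1 ≤ pt N (j+1) := by
    simp only [hptdef]
    rw [hx1eq]
    have : r ≤ ((j:ℝ)+1)/2^N := by rw [le_div_iff₀ h2N]; linarith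
    push_cast
    nlinarith
  have hm_lo := abs_le.mp ((main N).2 j (by omega))
  have hm_hi := abs_le.mp ((main N).2 (j+1) hjlt)
  have hH_lo : H (pt N j) ≤ H x1 := hH.monotone hx_lo
  have hH_hi : H x1 ≤ H (pt N (j+1)) := hH.monotone hx_hi
  have hE : η/2 * (1 - lam^N) * D ≤ η/2 * D := by
    have h0 : (0:ℝ) ≤ lam^N := by positivity
    nlinarith [mul_nonneg (mul_nonneg (show (0:ℝ) ≤ η/2 by linarith) h0) hD0.le]
  have hjr_hi : ((j:ℝ)+1)/2^N * D ≤ (r + 1/2^N) * D := by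
    have : ((j:ℝ)+1)/2^N ≤ r + 1/2^N := by
      rw [div_le_iff₀ h2N]
      have : (r + 1/2^N) * 2^N = r * 2^N + 1 := by field_simp
      rw [this]; linarith
    exact mul_le_mul_of_nonneg_right this hD0.le
  have hjr_lo : (r - 1/2^N) * D ≤ (j:ℝ)/2^N * D := by
    have : r - 1/2^N ≤ (j:ℝ)/2^N := by
      rw [le_div_iff₀ h2N]
      have : (r - 1/2^N) * 2^N = r * 2^N - 1 := by field_simp
      rw [this]; linarith
    exact mul_le_mul_of_nonneg_right this hD0.le
  have hηD : 1/(2:ℝ)^N * D ≤ η/2 * D :=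
    mul_le_mul_of_nonneg_right hNη.le hD0.le
  rw [abs_le]
  have hcast : ((j+1 : ℕ) : ℝ) = (j:ℝ) + 1 := by push_cast; ring
  rw [hcast] at hm_hi
  clear_value L D lam pt r j
  have g1 : (r - η) * D ≤ H x1 - H x0 := by
    linarith [hjr_lo, hηD, hE, hm_lo.1, hH_lo]
  have g2 : H x1 - H x0 ≤ (r + η) * D := by
    linarith [hjr_hi, hηD, hE, hm_hi.2, hH_hi]
  constructor
  · have : r - η ≤ (H x1 - H x0)/D := by rw [le_div_iff₀ hD0]; linarith
    linarith
  · have : (H x1 - H x0)/D ≤ r + η := by rw [div_le_iff₀ hD0]; linarith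
    linarith
end lemB

lemma shft_cons (j : Fin 2) (w : ℕ → Fin 2) : shft (consSeq j w) = w := by
  funext q; rfl

lemma cons_shft (v : ℕ → Fin 2) : consSeq (v 0) (shft v) = v := by
  funext q; cases q <;> rfl

lemma kseq_low (v : ℕ → Fin 2) (n : ℕ) :
    kseq 2 v (n+1) = (v 0 : ℕ) + 2 * kseq 2 (shft v) n := by
  unfold kseq shft
  rw [Finset.sum_range_succ' (fun q => ((v q : ℕ) * 2^q)) n]
  have h : ∀ q, (v (q+1) : ℕ) * 2^(q+1) = 2 * ((v (q+1) : ℕ) * 2^q) := fun q => by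
    rw [pow_succ]; ring
  rw [Finset.sum_congr rfl (fun q _ => h q), ← Finset.mul_sum]
  omega

lemma kseq_cons (j : Fin 2) (w : ℕ → Fin 2) (n : ℕ) :
    kseq 2 (consSeq j w) (n+1) = (j : ℕ) + 2 * kseq 2 w n := by
  rw [kseq_low, shft_cons]; rfl

lemma kseq_add (v : ℕ → Fin 2) (p m : ℕ) :
    kseq 2 v (p+m) = kseq 2 v p + 2^p * kseq 2 (fun q => v (p+q)) m := by
  induction m with
  | zero => simp [kseq]
  | succ m ih =>
      have h1 : p + (m+1) = (p+m) + 1 := by ring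
      rw [h1]
      unfold kseq at *
      rw [Finset.sum_range_succ, ih, Finset.sum_range_succ]
      rw [pow_add]
      ring

set_option maxHeartbeats 1600000 in
/-- summation condition for the dual derivative of a uniformly
symmetric circle endomorphism of degree 2:
`1/D*(F)(0⌢w) + 1/D*(F)(1⌢w) = 1`. -/
theorem stmt_14 (F : ℝ → ℝ)
    (hmono : StrictMono F) (hbij : Function.Bijective F)
    (hdeg : ∀ x : ℝ, F (x + 1) = F x + 2) (hF0 : F 0 = 0)
    (husym : UnifSymm F) :
    ∀ w : ℕ → Fin 2, ∃ D0 D1 : ℝ,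
      Tendsto (fun n => DstarSeq F (consSeq 0 w) n) atTop (nhds D0) ∧
      Tendsto (fun n => DstarSeq F (consSeq 1 w) n) atTop (nhds D1) ∧
      1 / D0 + 1 / D1 = 1 := by
  intro w
  obtain ⟨εf, hεpos, ⟨B, hB⟩, htend, hsym⟩ := husym
  have hB0 : 0 < B := lt_of_lt_of_le (hεpos 1 one_pos) (hB 1 one_pos)
  set M := 1 + B with hMdef
  have hM1 : 1 ≤ M := by rw [hMdef]; linarith
  have hFmono : ∀ m, StrictMono (Finv F m) := Finv_mono hmono hbij
  -- uniform product form of the symmetry condition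
  have hsymM : ∀ m : ℕ, ∀ x t : ℝ, 0 < t →
      Finv F m (x+t) - Finv F m x ≤ M * (Finv F m x - Finv F m (x-t)) ∧
      Finv F m x - Finv F m (x-t) ≤ M * (Finv F m (x+t) - Finv F m x) := by
    intro m x t ht
    rcases Nat.eq_zero_or_pos m with hm | hm
    · subst hm
      rw [Finv_zero hbij, Finv_zero hbij, Finv_zero hbij]
      constructor <;> nlinarith
    · have hs := hsym x t ht m hm
      have hden : 0 < Finv F m x - Finv F m (x-t) := by
        have := hFmono m (show x - t < x by linarith); linarith
      have hnum : 0 < Finv F m (x+t) - Finv F m x := by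
        have := hFmono m (show x < x + t by linarith); linarith
      have hε1 : 0 < 1 + εf t := by have := hεpos t ht; linarith
      have hεB : 1 + εf t ≤ M := by have := hB t ht; rw [hMdef]; linarith
      constructor
      · have h2 := hs.2
        rw [div_le_iff₀ hden] at h2
        nlinarith
      · have h1 := hs.1
        rw [div_le_div_iff₀ hε1 hden] at h1
        nlinarith
  -- local (small scale) product form
  have hsymloc : ∀ η > (0:ℝ), ∀ δ₀ > (0:ℝ),
      (∀ t : ℝ, 0 < t → t < δ₀ → εf t ≤ η) →
      ∀ m : ℕ, 1 ≤ m → ∀ x t : ℝ, 0 < t → t < δ₀ →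
      Finv F m (x+t) - Finv F m x ≤ (1+η) * (Finv F m x - Finv F m (x-t)) ∧
      Finv F m x - Finv F m (x-t) ≤ (1+η) * (Finv F m (x+t) - Finv F m x) := by
    intro η hη δ₀ hδ₀ hloc m hm x t ht htδ
    have hs := hsym x t ht m hm
    have hden : 0 < Finv F m x - Finv F m (x-t) := by
      have := hFmono m (show x - t < x by linarith); linarith
    have hnum : 0 < Finv F m (x+t) - Finv F m x := by
      have := hFmono m (show x < x + t by linarith); linarith
    have hε1 : 0 < 1 + εf t := by have := hεpos t ht; linarith
    have hεη : 1 + εf t ≤ 1 + η := by have := hloc t ht htδ; linarith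
    constructor
    · have h2 := hs.2
      rw [div_le_iff₀ hden] at h2
      nlinarith
    · have h1 := hs.1
      rw [div_le_div_iff₀ hε1 hden] at h1
      nlinarith
  -- the point a = F⁻¹(1) and dyadic depth N₀
  have ha := a_mem hmono hbij hdeg hF0
  set a := Finv F 1 1 with hadef
  obtain ⟨N₀, hN₀⟩ : ∃ N : ℕ, (1/2:ℝ)^N < min a (1-a) :=
    exists_pow_lt_of_lt_one (lt_min ha.1 (by linarith [ha.2])) (by norm_num)
  have h1M : (0:ℝ) < 1 + M := by linarith
  set μ := ((1:ℝ)/(1+M))^N₀ with hμdef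
  have hμ0 : 0 < μ := by positivity
  have hμ1 : μ ≤ 1 := by
    rw [hμdef]
    apply pow_le_one₀ (by positivity)
    rw [div_le_one h1M]; linarith
  have hhalf : ((1:ℝ)/2)^N₀ = 1/2^N₀ := by rw [div_pow, one_pow]
  have haN1 : (1:ℝ)/2^N₀ ≤ a := by
    rw [← hhalf]; exact le_of_lt (lt_of_lt_of_le hN₀ (min_le_left _ _))
  have haN2 : (1:ℝ)/2^N₀ ≤ 1 - a := by
    rw [← hhalf]; exact le_of_lt (lt_of_lt_of_le hN₀ (min_le_right _ _))
  -- lower bounds for the two pieces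
  have lb0 : ∀ (m : ℕ) (y : ℝ),
      μ * (Finv F m (y+1) - Finv F m y) ≤ Finv F m (y+a) - Finv F m y := by
    intro m y
    have h := (lemA (Finv F m) M hM1 (hsymM m) N₀ y (y+1) (by linarith)).1
    have harg : y + (y+1-y)/2^N₀ = y + 1/2^N₀ := by ring
    rw [harg] at h
    have hm' := (hFmono m).monotone (show y + 1/2^N₀ ≤ y + a by linarith)
    rw [← hμdef] at h
    linarith
  have lb1 : ∀ (m : ℕ) (y : ℝ),
      μ * (Finv F m (y+1) - Finv F m y) ≤ Finv F m (y+1) - Finv F m (y+a) := by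
    intro m y
    have h := (lemA (Finv F m) M hM1 (hsymM m) N₀ y (y+1) (by linarith)).2
    have harg : y + 1 - (y+1-y)/2^N₀ = y + 1 - 1/2^N₀ := by ring
    rw [harg] at h
    have hm' := (hFmono m).monotone (show y + a ≤ y + 1 - 1/2^N₀ by linarith)
    rw [← hμdef] at h
    linarith
  -- the step identity : Finv F (p+1) (c + 2k) = Finv F p (Finv F 1 c + k)
  have hstep : ∀ (p : ℕ) (k : ℕ) (c : ℝ),
      Finv F (p+1) (c + 2*(k:ℝ)) = Finv F p (Finv F 1 c + (k:ℝ)) := by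
    intro p k c
    rw [show p + 1 = 1 + p by omega, Finv_comp hbij 1 p]
    congr 1
    have h := Finv_shift hbij hdeg 1 c k
    norm_num at h
    exact h
  have hF1_0 : Finv F 1 (0:ℝ) = 0 := Finv_one_zero hbij hdeg hF0
  have hF1_2 : Finv F 1 (2:ℝ) = 1 := Finv_one_two hbij hdeg hF0
  -- decay of interval lengths
  have decay : ∀ (n : ℕ) (v : ℕ → Fin 2),
      Finv F n ((kseq 2 v n : ℝ) + 1) - Finv F n ((kseq 2 v n : ℝ)) ≤ (1-μ)^n := by
    intro n
    induction n with
    | zero =>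
        intro v
        have h0 : kseq 2 v 0 = 0 := by simp [kseq]
        rw [h0]
        norm_num [Finv_zero hbij]
    | succ n ih =>
        intro v
        have hk : kseq 2 v (n+1) = (v 0 : ℕ) + 2 * kseq 2 (shft v) n := kseq_low v n
        set k' := kseq 2 (shft v) n with hk'def
        have hΔ := ih (shft v)
        have hΔpos : 0 < Finv F n ((k' : ℝ) + 1) - Finv F n ((k' : ℝ)) := by
          have := hFmono n (show ((k':ℕ):ℝ) < (k':ℕ) + 1 by linarith)
          linarith
        have hv0 : (v 0 : ℕ) = 0 ∨ (v 0 : ℕ) = 1 := by omega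
        have hcast : ((kseq 2 v (n+1) : ℕ) : ℝ) = ((v 0 : ℕ) : ℝ) + 2 * (k' : ℝ) := by
          rw [hk]; push_cast; ring
        rcases hv0 with h0 | h0
    
        · -- v 0 = 0 : interval maps into [k', k'+a]
          rw [hcast, h0]
          have e1 : ((0:ℕ):ℝ) + 2*(k':ℝ) + 1 = 1 + 2*(k':ℝ) := by push_cast; ring
          have e2 : ((0:ℕ):ℝ) + 2*(k':ℝ) = (0:ℝ) + 2*(k':ℝ) := by push_cast; ring
          rw [e1, e2, hstep n k' 1, hstep n k' 0, hF1_0, ← hadef, zero_add]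
          have hq := lb1 n ((k':ℕ):ℝ)
          have hcomm : a + ((k':ℕ):ℝ) = ((k':ℕ):ℝ) + a := by ring
          rw [hcomm]
          have : Finv F n ((k':ℝ) + a) - Finv F n ((k':ℝ))
              ≤ (1-μ) * (Finv F n ((k':ℝ)+1) - Finv F n ((k':ℝ))) := by nlinarith
          calc Finv F n ((k':ℝ) + a) - Finv F n ((k':ℝ))
              ≤ (1-μ) * (Finv F n ((k':ℝ)+1) - Finv F n ((k':ℝ))) := this
            _ ≤ (1-μ) * (1-μ)^n := by
                apply mul_le_mul_of_nonneg_left hΔ (by linarith)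
            _ = (1-μ)^(n+1) := by rw [pow_succ]; ring
        · -- v 0 = 1 : interval maps into [k'+a, k'+1]
          rw [hcast, h0]
          have e1 : ((1:ℕ):ℝ) + 2*(k':ℝ) + 1 = 2 + 2*(k':ℝ) := by push_cast; ring
          have e2 : ((1:ℕ):ℝ) + 2*(k':ℝ) = (1:ℝ) + 2*(k':ℝ) := by push_cast; ring
          rw [e1, e2, hstep n k' 2, hstep n k' 1, hF1_2, ← hadef]
          have hq := lb0 n ((k':ℕ):ℝ)
          have hcomm : a + ((k':ℕ):ℝ) = ((k':ℕ):ℝ) + a := by ring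
          have hcomm2 : (1:ℝ) + ((k':ℕ):ℝ) = ((k':ℕ):ℝ) + 1 := by ring
          rw [hcomm, hcomm2]
          have : Finv F n ((k':ℝ) + 1) - Finv F n ((k':ℝ) + a)
              ≤ (1-μ) * (Finv F n ((k':ℝ)+1) - Finv F n ((k':ℝ))) := by nlinarith
          calc Finv F n ((k':ℝ) + 1) - Finv F n ((k':ℝ) + a)
              ≤ (1-μ) * (Finv F n ((k':ℝ)+1) - Finv F n ((k':ℝ))) := this
            _ ≤ (1-μ) * (1-μ)^n := by
                apply mul_le_mul_of_nonneg_left hΔ (by linarith)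
            _ = (1-μ)^(n+1) := by rw [pow_succ]; ring
  -- three-point data along w
  set P : ℕ → ℝ := fun p => Finv F p ((kseq 2 w p : ℝ)) with hPdef
  set Q : ℕ → ℝ := fun p => Finv F p ((kseq 2 w p : ℝ) + a) with hQdef
  set R : ℕ → ℝ := fun p => Finv F p ((kseq 2 w p : ℝ) + 1) with hRdef
  have hPQ : ∀ p, P p < Q p := fun p =>
    hFmono p (show ((kseq 2 w p : ℕ):ℝ) < (kseq 2 w p : ℕ) + a by linarith [ha.1])
  have hQR : ∀ p, Q p < R p := fun p =>
    hFmono p (show ((kseq 2 w p : ℕ):ℝ) + a < (kseq 2 w p : ℕ) + 1 by linarith [ha.2])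
  have hPR : ∀ p, P p < R p := fun p => lt_trans (hPQ p) (hQR p)
  have hΔdecay : ∀ p, R p - P p ≤ (1-μ)^p := fun p => decay p w
  set s : ℕ → ℝ := fun p => (Q p - P p)/(R p - P p) with hsdef
  have hs_lb : ∀ p, μ ≤ s p := by
    intro p
    have h := lb0 p ((kseq 2 w p : ℕ):ℝ)
    rw [hsdef]
    rw [le_div_iff₀ (by linarith [hPR p])]
    calc μ * (R p - P p) = μ * (Finv F p ((kseq 2 w p:ℝ)+1) - Finv F p ((kseq 2 w p:ℝ))) := rfl
      _ ≤ Finv F p ((kseq 2 w p:ℝ)+a) - Finv F p ((kseq 2 w p:ℝ)) := h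
      _ = Q p - P p := rfl
  have hs_ub : ∀ p, s p ≤ 1 - μ := by
    intro p
    have h := lb1 p ((kseq 2 w p : ℕ):ℝ)
    rw [hsdef]
    rw [div_le_iff₀ (by linarith [hPR p])]
    have h2 : μ * (R p - P p) ≤ R p - Q p := h
    nlinarith [hPR p]
  -- shift identity
  have hshift : ∀ (p m : ℕ) (c : ℝ),
      Finv F (p+m) ((kseq 2 w (p+m) : ℝ) + c)
        = Finv F m (Finv F p ((kseq 2 w p : ℝ) + c) + ((kseq 2 (fun q => w (p+q)) m : ℕ):ℝ)) := by
    intro p m c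
    rw [Finv_comp hbij p m]
    congr 1
    have hK : ((kseq 2 w (p+m) : ℕ) : ℝ)
        = ((kseq 2 w p : ℕ):ℝ) + 2^p * ((kseq 2 (fun q => w (p+q)) m : ℕ):ℝ) := by
      rw [kseq_add w p m]; push_cast; ring
    rw [hK, show ((kseq 2 w p : ℕ):ℝ) + 2^p * ((kseq 2 (fun q => w (p+q)) m : ℕ):ℝ) + c
        = (((kseq 2 w p : ℕ):ℝ) + c) + 2^p * ((kseq 2 (fun q => w (p+q)) m : ℕ):ℝ) by ring,
      Finv_shift hbij hdeg]
  -- Cauchy property of s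
  have hcauchy : CauchySeq s := by
    rw [Metric.cauchySeq_iff']
    intro ε hε
    have hη0 : 0 < ε/2 := by linarith
    obtain ⟨δ₀, hδ₀, hδ⟩ := Metric.tendsto_nhdsWithin_nhds.mp htend (ε/2) hη0
    have hloc : ∀ t : ℝ, 0 < t → t < δ₀ → εf t ≤ ε/2 := by
      intro t ht htδ
      have := hδ (Set.mem_Ioi.mpr ht) (by rwa [Real.dist_eq, sub_zero, abs_of_pos ht])
      rw [Real.dist_eq, sub_zero] at this
      calc εf t ≤ |εf t| := le_abs_self _
        _ ≤ ε/2 := le_of_lt this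
    obtain ⟨N, hNδ⟩ : ∃ N : ℕ, (1-μ)^N < δ₀ := by
      have h := tendsto_pow_atTop_nhds_zero_of_lt_one (by linarith : (0:ℝ) ≤ 1-μ)
        (by linarith : 1-μ < 1)
      exact (h.eventually (gt_mem_nhds hδ₀)).exists
    refine ⟨N, ?_⟩
    intro n hn
    obtain ⟨m, rfl⟩ := Nat.exists_eq_add_of_le hn
    rcases Nat.eq_zero_or_pos m with hm | hm
    · subst hm; simpa using hε
    -- apply the distortion lemma with H = Finv F m at scale R N - P N
    set RM := ((kseq 2 (fun q => w (N+q)) m : ℕ):ℝ) with hRMdef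
    have hΔNδ : R N - P N < δ₀ := lt_of_le_of_lt (hΔdecay N) hNδ
    have hsymB : ∀ x t : ℝ, 0 < t → t ≤ R N - P N →
        Finv F m (x+t) - Finv F m x ≤ (1+ε/2) * (Finv F m x - Finv F m (x-t)) ∧
        Finv F m x - Finv F m (x-t) ≤ (1+ε/2) * (Finv F m (x+t) - Finv F m x) := by
      intro x t ht htle
      exact hsymloc (ε/2) hη0 δ₀ hδ₀ hloc m hm x t ht (lt_of_le_of_lt htle hΔNδ)
    have hlB := lemB (Finv F m) (ε/2) (R N - P N) (hFmono m) hη0 hsymB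
      (P N + RM) (Q N + RM) (R N + RM)
      (by linarith [hPQ N]) (by linarith [hQR N]) (by linarith)
    -- identify the three images
    have e0 : Finv F m (P N + RM) = P (N+m) := by
      have h := hshift N m 0
      rw [add_zero, add_zero] at h
      rw [hPdef]; exact h.symm
    have e1 : Finv F m (Q N + RM) = Q (N+m) := (hshift N m a).symm
    have e2 : Finv F m (R N + RM) = R (N+m) := (hshift N m 1).symm
    rw [e0, e1, e2] at hlB
    have eq1 : (Q (N+m) - P (N+m))/(R (N+m) - P (N+m)) = s (N+m) := rfl
    have eq2 : (Q N + RM - (P N + RM))/(R N + RM - (P N + RM)) = s N := by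
      rw [hsdef]
      congr 1 <;> ring
    rw [eq1, eq2] at hlB
    rw [Real.dist_eq]
    calc |s (N+m) - s N| ≤ ε/2 := hlB
      _ < ε := by linarith
  obtain ⟨L0, hL0⟩ := cauchySeq_tendsto_of_complete hcauchy
  have hL0lb : μ ≤ L0 := ge_of_tendsto hL0 (Filter.Eventually.of_forall hs_lb)
  have hL0ub : L0 ≤ 1 - μ := le_of_tendsto hL0 (Filter.Eventually.of_forall hs_ub)
  have hL0ne : L0 ≠ 0 := by intro h; rw [h] at hL0lb; linarith
  have h1L0ne : 1 - L0 ≠ 0 := by intro h; linarith [hL0ub, hμ0]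
  -- identification of DstarSeq with 1/s and 1/(1-s)
  have hlink0 : ∀ p : ℕ, DstarSeq F (consSeq 0 w) (p+1) = (R p - P p)/(Q p - P p) := by
    intro p
    have hnum : DstarSeq F (consSeq 0 w) (p+1)
        = (Finv F p ((kseq 2 w p : ℝ) + 1) - Finv F p ((kseq 2 w p : ℝ))) /
          (Finv F (p+1) ((kseq 2 (consSeq 0 w) (p+1) : ℝ) + 1) -
            Finv F (p+1) ((kseq 2 (consSeq 0 w) (p+1) : ℝ))) := by
      simp only [DstarSeq, Nat.add_sub_cancel, shft_cons]
    rw [hnum]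
    have hk : ((kseq 2 (consSeq 0 w) (p+1) : ℕ) : ℝ) = 0 + 2*((kseq 2 w p : ℕ):ℝ) := by
      rw [kseq_cons]; push_cast; simp
    rw [hk]
    have hd1 : Finv F (p+1) ((0:ℝ) + 2*((kseq 2 w p : ℕ):ℝ) + 1) = Q p := by
      rw [show (0:ℝ) + 2*((kseq 2 w p : ℕ):ℝ) + 1 = (1:ℝ) + 2*((kseq 2 w p : ℕ):ℝ) by ring,
        hstep p _ 1, ← hadef, add_comm a]
    have hd0 : Finv F (p+1) ((0:ℝ) + 2*((kseq 2 w p : ℕ):ℝ)) = P p := by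
      rw [zero_add,
        show 2*((kseq 2 w p : ℕ):ℝ) = (0:ℝ) + 2*((kseq 2 w p : ℕ):ℝ) by ring,
        hstep p _ 0, hF1_0, zero_add]
    rw [hd1, hd0]
  have hlink1 : ∀ p : ℕ, DstarSeq F (consSeq 1 w) (p+1) = (R p - P p)/(R p - Q p) := by
    intro p
    have hnum : DstarSeq F (consSeq 1 w) (p+1)
        = (Finv F p ((kseq 2 w p : ℝ) + 1) - Finv F p ((kseq 2 w p : ℝ))) /
          (Finv F (p+1) ((kseq 2 (consSeq 1 w) (p+1) : ℝ) + 1) -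
            Finv F (p+1) ((kseq 2 (consSeq 1 w) (p+1) : ℝ))) := by
      simp only [DstarSeq, Nat.add_sub_cancel, shft_cons]
    rw [hnum]
    have hk : ((kseq 2 (consSeq 1 w) (p+1) : ℕ) : ℝ) = 1 + 2*((kseq 2 w p : ℕ):ℝ) := by
      rw [kseq_cons]; push_cast; simp
    rw [hk]
    have hd1 : Finv F (p+1) ((1:ℝ) + 2*((kseq 2 w p : ℕ):ℝ) + 1) = R p := by
      rw [show (1:ℝ) + 2*((kseq 2 w p : ℕ):ℝ) + 1 = (2:ℝ) + 2*((kseq 2 w p : ℕ):ℝ) by ring,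
        hstep p _ 2, hF1_2, add_comm (1:ℝ)]
    have hd0 : Finv F (p+1) ((1:ℝ) + 2*((kseq 2 w p : ℕ):ℝ)) = Q p := by
      rw [hstep p _ 1, ← hadef, add_comm a]
    rw [hd1, hd0]
  have hone : ∀ p, 1 - s p = (R p - Q p)/(R p - P p) := by
    intro p
    have hne : R p - P p ≠ 0 := ne_of_gt (by linarith [hPR p])
    rw [hsdef]
    field_simp
    ring
  -- final limits
  refine ⟨L0⁻¹, (1-L0)⁻¹, ?_, ?_, ?_⟩
  · have t1 : Tendsto (fun p => (s p)⁻¹) atTop (nhds L0⁻¹) := hL0.inv₀ hL0ne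
    have t1' : Tendsto (fun n : ℕ => (s (n-1))⁻¹) atTop (nhds L0⁻¹) := by
      rw [← tendsto_add_atTop_iff_nat 1]
      simpa using t1
    apply t1'.congr'
    filter_upwards [eventually_ge_atTop 1] with n hn
    obtain ⟨p, rfl⟩ := Nat.exists_eq_add_of_le hn
    rw [show 1 + p = p + 1 by ring, Nat.add_sub_cancel, hlink0 p, hsdef]
    rw [inv_div]
  · have t2 : Tendsto (fun p => (1 - s p)⁻¹) atTop (nhds (1-L0)⁻¹) :=
      (tendsto_const_nhds.sub hL0).inv₀ h1L0ne
    have t2' : Tendsto (fun n : ℕ => (1 - s (n-1))⁻¹) atTop (nhds (1-L0)⁻¹) := by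
      rw [← tendsto_add_atTop_iff_nat 1]
      simpa using t2
    apply t2'.congr'
    filter_upwards [eventually_ge_atTop 1] with n hn
    obtain ⟨p, rfl⟩ := Nat.exists_eq_add_of_le hn
    rw [show 1 + p = p + 1 by ring, Nat.add_sub_cancel, hlink1 p, hone p]
    rw [inv_div]
  · rw [one_div, one_div, inv_inv, inv_inv]; ring
end

section
/- Let F : ℝ → ℝ be an increasing homeomorphism with F(x+1) = F(x) + 2 for all x, F(0) = 0, which is uniformly symmetric (degree d = 2). For w ∈ Σ* and i ≥ 0 let a_i(w) ∈ Σ* be the sequence consisting of i entries equal to 1, then an entry 0, then the entries of w, and let b_i(w) be the sequence consisting of i entries equal to 0, then an entry 1, then the entries of w. Then the infinite product ∏_{i=0}^{∞} D*(F)(a_i(w))/D*(F)(b_i(w)) converges for every w ∈ Σ*, the convergence of the partial products is uniform in w, and its value is a constant independent of w. -/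
set_option maxHeartbeats 1000000


open Filter

/-- `a_i(w)`: `i` ones, then a zero, then the entries of `w`. -/
def aseq (i : ℕ) (w : ℕ → Fin 2) : ℕ → Fin 2 :=
  fun q => if q < i then 1 else if q = i then 0 else w (q - i - 1)

/-- `b_i(w)`: `i` zeros, then a one, then the entries of `w`. -/
def bseq (i : ℕ) (w : ℕ → Fin 2) : ℕ → Fin 2 :=
  fun q => if q < i then 0 else if q = i then 1 else w (q - i - 1)



namespace Stmt15Aux

variable {F : ℝ → ℝ} {ee : ℝ → ℝ} {B : ℝ}

structure Hyp (F : ℝ → ℝ) : Prop where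
  mono : StrictMono F
  bij : Function.Bijective F
  deg : ∀ x : ℝ, F (x + 1) = F x + 2
  f0 : F 0 = 0


lemma Hyp.iterBij (h : Hyp F) (n : ℕ) : Function.Bijective (F^[n]) := h.bij.iterate n
lemma Hyp.iterMono (h : Hyp F) (n : ℕ) : StrictMono (F^[n]) := h.mono.iterate n

lemma Hyp.fr (h : Hyp F) (n : ℕ) (y : ℝ) : F^[n] (Finv F n y) = y :=
  Function.rightInverse_invFun (h.iterBij n).2 y

lemma Hyp.fl (h : Hyp F) (n : ℕ) (x : ℝ) : Finv F n (F^[n] x) = x :=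
  Function.leftInverse_invFun (h.iterBij n).1 x

lemma Hyp.finv_unique (h : Hyp F) {n : ℕ} {x y : ℝ} (hxy : F^[n] x = y) : Finv F n y = x := by
  rw [← hxy, h.fl]

lemma Hyp.finvMono (h : Hyp F) (n : ℕ) : StrictMono (Finv F n) := by
  intro a b hab
  have h2 : F^[n] (Finv F n a) < F^[n] (Finv F n b) := by rw [h.fr, h.fr]; exact hab
  exact (h.iterMono n).lt_iff_lt.mp h2

lemma Hyp.deg_nat (h : Hyp F) (m : ℕ) (x : ℝ) : F (x + m) = F x + 2 * m := by
  induction m with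
  | zero => simp
  | succ m ih =>
    have : x + (m + 1 : ℕ) = (x + m) + 1 := by push_cast; ring
    rw [this, h.deg, ih]; push_cast; ring

lemma Hyp.iter_one (h : Hyp F) (n : ℕ) (x : ℝ) : F^[n] (x + 1) = F^[n] x + 2 ^ n := by
  induction n generalizing x with
  | zero => simp
  | succ n ih =>
    rw [Function.iterate_succ_apply', Function.iterate_succ_apply', ih]
    have := h.deg_nat (2 ^ n) (F^[n] x)
    push_cast at this ⊢
    rw [this]; ring

lemma Hyp.iter_nat_add (h : Hyp F) (n j : ℕ) (x : ℝ) :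
    F^[n] (x + j) = F^[n] x + j * 2 ^ n := by
  induction j with
  | zero => simp
  | succ j ih =>
    have : x + (j + 1 : ℕ) = (x + j) + 1 := by push_cast; ring
    rw [this, h.iter_one, ih]; push_cast; ring

lemma Hyp.iter_zero (h : Hyp F) (n : ℕ) : F^[n] 0 = 0 := by
  induction n with
  | zero => simp
  | succ n ih => rw [Function.iterate_succ_apply', ih, h.f0]

lemma Hyp.iter_nat (h : Hyp F) (n j : ℕ) : F^[n] (j : ℝ) = (j : ℝ) * 2 ^ n := by
  have := h.iter_nat_add n j 0
  rw [zero_add, h.iter_zero] at this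
  rw [this]; ring

lemma Hyp.finv_zero (h : Hyp F) (n : ℕ) : Finv F n 0 = 0 :=
  h.finv_unique (h.iter_zero n)

lemma Hyp.finv_nat_add (h : Hyp F) (n j : ℕ) (y : ℝ) :
    Finv F n (y + j * 2 ^ n) = Finv F n y + j := by
  refine h.finv_unique ?_
  rw [h.iter_nat_add, h.fr]

lemma Hyp.finv_pow_mul (h : Hyp F) (n j : ℕ) : Finv F n ((j : ℝ) * 2 ^ n) = (j : ℝ) := by
  have := h.finv_nat_add n j 0
  rw [zero_add, h.finv_zero] at this
  rw [this]; ring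

lemma Hyp.finv_comp (h : Hyp F) (m n : ℕ) (y : ℝ) :
    Finv F (m + n) y = Finv F n (Finv F m y) := by
  refine h.finv_unique ?_
  rw [Function.iterate_add_apply, h.fr, h.fr]

lemma Hyp.finv_one_id (h : Hyp F) (y : ℝ) : Finv F 0 y = y := by
  have := h.fr 0 y
  simpa using this


structure USD (F : ℝ → ℝ) (ee : ℝ → ℝ) (B : ℝ) : Prop where
  pos : ∀ t : ℝ, 0 < t → 0 < ee t
  bdd : ∀ t : ℝ, 0 < t → ee t ≤ B
  tend : Tendsto ee (nhdsWithin 0 (Set.Ioi 0)) (nhds 0)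
  sym : ∀ x t : ℝ, 0 < t → ∀ n : ℕ, 1 ≤ n →
      1 / (1 + ee t) ≤ (Finv F n (x + t) - Finv F n x) / (Finv F n x - Finv F n (x - t)) ∧
      (Finv F n (x + t) - Finv F n x) / (Finv F n x - Finv F n (x - t)) ≤ 1 + ee t

lemma USD.Bpos (us : USD F ee B) : 0 < B := lt_of_lt_of_le (us.pos 1 one_pos) (us.bdd 1 one_pos)

lemma Hyp.diff_pos (h : Hyp F) {n : ℕ} {a b : ℝ} (hab : a < b) : 0 < Finv F n b - Finv F n a :=
  sub_pos.mpr (h.finvMono n hab)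

/-- two-sided difference form of uniform symmetry -/
lemma USD.two_sided (h : Hyp F) (us : USD F ee B) {n : ℕ} (hn : 1 ≤ n) {t : ℝ} (ht : 0 < t)
    (x : ℝ) :
    Finv F n (x + t) - Finv F n x ≤ (1 + ee t) * (Finv F n x - Finv F n (x - t)) ∧
    Finv F n x - Finv F n (x - t) ≤ (1 + ee t) * (Finv F n (x + t) - Finv F n x) := by
  obtain ⟨h1, h2⟩ := us.sym x t ht n hn
  have hC : 0 < Finv F n x - Finv F n (x - t) := h.diff_pos (by linarith)
  have hA : 0 < Finv F n (x + t) - Finv F n x := h.diff_pos (by linarith)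
  have he : 0 < 1 + ee t := by have := us.pos t ht; linarith
  constructor
  · exact (div_le_iff₀ hC).mp h2
  · have h3 : 1 / (1 + ee t) * (Finv F n x - Finv F n (x - t)) ≤ Finv F n (x + t) - Finv F n x :=
      (le_div_iff₀ hC).mp h1
    have h4 := mul_le_mul_of_nonneg_left h3 he.le
    have h5 : (1 + ee t) * (1 / (1 + ee t) * (Finv F n x - Finv F n (x - t)))
        = Finv F n x - Finv F n (x - t) := by field_simp
    linarith [h4, h5.le, h5.symm.le]

noncomputable def vs (F : ℝ → ℝ) (n : ℕ) : ℝ := Finv F n 1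
noncomputable def usq (F : ℝ → ℝ) (n : ℕ) : ℝ := -(Finv F n (-1))

lemma Hyp.vs_pos (h : Hyp F) (n : ℕ) : 0 < vs F n := by
  have := h.diff_pos (n := n) (a := 0) (b := 1) one_pos
  rw [h.finv_zero] at this; simpa [vs] using this

lemma Hyp.usq_pos (h : Hyp F) (n : ℕ) : 0 < usq F n := by
  have := h.diff_pos (n := n) (a := -1) (b := 0) (by norm_num)
  rw [h.finv_zero] at this; simpa [usq] using this

lemma Hyp.finv_two_mul (h : Hyp F) (n j : ℕ) (y : ℝ) :
    Finv F (n + 1) (y + j * 2 ^ (n + 1)) = Finv F (n + 1) y + j := h.finv_nat_add (n+1) j y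

/-- `Finv (n+1) 2 = vs n`, `Finv (n+1) (-2) = -usq n`. -/
lemma Hyp.finv_succ_two (h : Hyp F) (n : ℕ) : Finv F (n + 1) 2 = vs F n := by
  have h1 : Finv F (1 + n) 2 = Finv F n (Finv F 1 2) := h.finv_comp 1 n 2
  have h2 : Finv F 1 2 = 1 := by
    have := h.finv_pow_mul 1 1; norm_num at this; exact this
  rw [h2] at h1
  rw [show n + 1 = 1 + n by ring, h1]; rfl

lemma Hyp.finv_succ_negtwo (h : Hyp F) (n : ℕ) : Finv F (n + 1) (-2) = -(usq F n) := by
  have h1 : Finv F (1 + n) (-2) = Finv F n (Finv F 1 (-2)) := h.finv_comp 1 n (-2)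
  have h2 : Finv F 1 (-2) = -1 := by
    have := h.finv_nat_add 1 1 (-2)
    norm_num at this
    -- Finv F 1 (-2 + 2) = Finv F 1 (-2) + 1 ; Finv F 1 0 = 0
    rw [h.finv_zero] at this
    linarith
  rw [h2] at h1
  rw [show n + 1 = 1 + n by ring, h1]; simp [usq]

lemma helper_ratio {U u e b : ℝ} (hU : 0 < U) (hu : 0 < u) (he : 0 < e) (heb : e ≤ b)
    (key : U * (2 + e) ≤ (1 + e) * u) : U ≤ (1 + b) / (2 + b) * u := by
  have hb : 0 < b := lt_of_lt_of_le he heb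
  rw [div_mul_eq_mul_div, le_div_iff₀ (by linarith)]
  have hS : (0:ℝ) ≤ (1 + e) * u - U * (2 + e) := by linarith
  nlinarith [mul_nonneg (sub_nonneg.mpr heb) hS, mul_nonneg (sub_nonneg.mpr heb) hU.le]

/-- contraction of scales -/
lemma decay (h : Hyp F) (us : USD F ee B) (n : ℕ) :
    usq F (n + 1) ≤ (1 + B) / (2 + B) * usq F n ∧
    vs F (n + 1) ≤ (1 + B) / (2 + B) * vs F n := by
  have he1 : 0 < ee 1 := us.pos 1 one_pos
  have heB : ee 1 ≤ B := us.bdd 1 one_pos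
  constructor
  · have h2 := (us.two_sided h (n := n + 1) le_add_self one_pos (-1)).1
    rw [show (-1 : ℝ) + 1 = 0 by ring, show (-1 : ℝ) - 1 = -2 by ring, h.finv_zero,
      h.finv_succ_negtwo] at h2
    have hu1 : Finv F (n + 1) (-1) = -usq F (n + 1) := by simp [usq]
    rw [hu1] at h2
    refine helper_ratio (h.usq_pos (n+1)) (h.usq_pos n) he1 heB ?_
    nlinarith [h2]
  · have h2 := (us.two_sided h (n := n + 1) le_add_self one_pos 1).2
    rw [show (1 : ℝ) + 1 = 2 by ring, show (1 : ℝ) - 1 = 0 by ring, h.finv_zero,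
      h.finv_succ_two] at h2
    have hv1 : Finv F (n + 1) 1 = vs F (n + 1) := rfl
    rw [hv1] at h2
    refine helper_ratio (h.vs_pos (n+1)) (h.vs_pos n) he1 heB ?_
    nlinarith [h2]


lemma half_bounds {a b P e γ : ℝ} (ha : 0 < a) (hb : 0 < b) (hP : a + b = P)
    (h1 : a ≤ (1 + e) * b) (h2 : b ≤ (1 + e) * a) (he0 : 0 ≤ e) (heγ : e ≤ γ) :
    P * (1 + γ)⁻¹ / 2 ≤ a ∧ a ≤ P * (1 + γ) / 2 := by
  have hγ0 : 0 ≤ γ := le_trans he0 heγ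
  constructor
  · have hq : P * (1 + γ)⁻¹ / 2 = P / (2 * (1 + γ)) := by
      rw [div_eq_div_iff (by norm_num) (by positivity)]
      field_simp
    rw [hq, div_le_iff₀ (by positivity)]
    nlinarith [mul_nonneg (sub_nonneg.mpr heγ) ha.le, mul_nonneg hγ0 ha.le]
  · rw [show P * (1 + γ) / 2 = P * (1 + γ) * (1/2) by ring]
    nlinarith [mul_nonneg (sub_nonneg.mpr heγ) hb.le, mul_nonneg hγ0 ha.le]

lemma pow_one_add_le {γ : ℝ} (hγ0 : 0 ≤ γ) (hγ1 : γ ≤ 1) (L : ℕ) :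
    (1 + γ) ^ L ≤ 1 + ((2:ℝ) ^ L - 1) * γ := by
  induction L with
  | zero => norm_num
  | succ L ih =>
    have h1 : (1:ℝ) ≤ (2:ℝ) ^ L := one_le_pow₀ (by norm_num)
    have h2 : (0:ℝ) ≤ (1 + γ) ^ L := pow_nonneg (by linarith) L
    calc (1 + γ) ^ (L + 1) = (1 + γ) ^ L * (1 + γ) := by ring
    _ ≤ (1 + ((2:ℝ) ^ L - 1) * γ) * (1 + γ) := by nlinarith
    _ ≤ 1 + ((2:ℝ) ^ (L + 1) - 1) * γ := by
        rw [pow_succ]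
        nlinarith [mul_nonneg (mul_nonneg (by linarith : (0:ℝ) ≤ (2:ℝ)^L - 1) hγ0) (sub_nonneg.mpr hγ1)]


/-- the point `Finv F M (x - s u)` -/
noncomputable def pnt (F : ℝ → ℝ) (M : ℕ) (x u s : ℝ) : ℝ := Finv F M (x - s * u)

/-- the `i`-th dyadic leaf at depth `l` -/
noncomputable def lfr (F : ℝ → ℝ) (M : ℕ) (x u : ℝ) (l i : ℕ) : ℝ :=
  pnt F M x u ((i : ℝ) / 2 ^ l) - pnt F M x u (((i : ℝ) + 1) / 2 ^ l)

lemma pnt_lt (h : Hyp F) {M : ℕ} {x u : ℝ} (hu : 0 < u) {s s' : ℝ} (hss : s < s') :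
    pnt F M x u s' < pnt F M x u s := by
  have hx : x - s' * u < x - s * u := by nlinarith
  exact h.finvMono M hx

lemma pnt_le (h : Hyp F) {M : ℕ} {x u : ℝ} (hu : 0 < u) {s s' : ℝ} (hss : s ≤ s') :
    pnt F M x u s' ≤ pnt F M x u s := by
  rcases eq_or_lt_of_le hss with rfl | hlt
  · exact le_refl _
  · exact (pnt_lt h hu hlt).le

lemma lfr_pos (h : Hyp F) {M : ℕ} {x u : ℝ} (hu : 0 < u) (l i : ℕ) :
    0 < lfr F M x u l i := by
  refine sub_pos.mpr (pnt_lt h hu ?_)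
  have h2 : (0:ℝ) < 2 ^ l := by positivity
  rw [div_lt_div_iff₀ h2 h2]
  nlinarith

lemma leaf_bounds (h : Hyp F) (us : USD F ee B) {M : ℕ} (hM1 : 1 ≤ M) {x u γ : ℝ}
    (hu : 0 < u) (hγ0 : 0 < γ) (hsc : ∀ t : ℝ, 0 < t → t ≤ u / 2 → ee t ≤ γ) :
    ∀ l i : ℕ, i < 2 ^ l →
      (pnt F M x u 0 - pnt F M x u 1) * ((1 + γ) ^ l)⁻¹ / 2 ^ l ≤ lfr F M x u l i ∧
      lfr F M x u l i ≤ (pnt F M x u 0 - pnt F M x u 1) * (1 + γ) ^ l / 2 ^ l := by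
  intro l
  induction l with
  | zero =>
    intro i hi
    have hi0 : i = 0 := by omega
    subst hi0
    have : lfr F M x u 0 0 = pnt F M x u 0 - pnt F M x u 1 := by
      unfold lfr; norm_num
    rw [this]
    norm_num
  | succ l ih =>
    intro i hi
    obtain ⟨j, hj⟩ : ∃ j : ℕ, i = 2 * j ∨ i = 2 * j + 1 := ⟨i / 2, by omega⟩
    have hj2 : j < 2 ^ l := by
      have : 2 ^ (l + 1) = 2 * 2 ^ l := by ring
      omega
    obtain ⟨pl, pu⟩ := ih j hj2
    -- the two siblings
    set a : ℝ := lfr F M x u (l + 1) (2 * j) with hadef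
    set b : ℝ := lfr F M x u (l + 1) (2 * j + 1) with hbdef
    have hapos : 0 < a := lfr_pos h hu _ _
    have hbpos : 0 < b := lfr_pos h hu _ _
    have hsum : a + b = lfr F M x u l j := by
      rw [hadef, hbdef]; unfold lfr
      have e1 : ((2 * j : ℕ) : ℝ) / 2 ^ (l + 1) = (j : ℝ) / 2 ^ l := by
        push_cast; rw [pow_succ]; field_simp
      have e2 : (((2 * j + 1 : ℕ) : ℝ) + 1) / 2 ^ (l + 1) = ((j : ℝ) + 1) / 2 ^ l := by
        push_cast; rw [pow_succ]; field_simp; ring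
      have e3 : (((2 * j : ℕ) : ℝ) + 1) / 2 ^ (l + 1) = ((2 * j + 1 : ℕ) : ℝ) / 2 ^ (l + 1) := by
        push_cast; ring
      rw [e1, e2, e3]; ring
    -- uniform symmetry at the midpoint
    have ht : (0:ℝ) < u / 2 ^ (l + 1) := by positivity
    have hts : u / 2 ^ (l + 1) ≤ u / 2 := by
      apply div_le_div_of_nonneg_left hu.le (by norm_num)
      exact le_self_pow₀ (by norm_num) (by omega)
    have hee : ee (u / 2 ^ (l + 1)) ≤ γ := hsc _ ht hts
    have hee0 : 0 ≤ ee (u / 2 ^ (l + 1)) := (us.pos _ ht).le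
    have hUS := us.two_sided h hM1 ht (x - (((2 * j : ℕ) : ℝ) + 1) / 2 ^ (l + 1) * u)
    have ea : x - (((2 * j : ℕ) : ℝ) + 1) / 2 ^ (l + 1) * u + u / 2 ^ (l + 1)
        = x - ((2 * j : ℕ) : ℝ) / 2 ^ (l + 1) * u := by push_cast; ring
    have eb : x - (((2 * j : ℕ) : ℝ) + 1) / 2 ^ (l + 1) * u - u / 2 ^ (l + 1)
        = x - (((2 * j + 1 : ℕ) : ℝ) + 1) / 2 ^ (l + 1) * u := by push_cast; ring
    have ec : x - (((2 * j : ℕ) : ℝ) + 1) / 2 ^ (l + 1) * u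
        = x - ((2 * j + 1 : ℕ) : ℝ) / 2 ^ (l + 1) * u := by push_cast; ring
    rw [ea, eb, ec] at hUS
    have hUSa : a ≤ (1 + ee (u / 2 ^ (l + 1))) * b := by
      have := hUS.1
      rw [hadef, hbdef]; unfold lfr pnt
      convert this using 3 <;> push_cast <;> ring
    have hUSb : b ≤ (1 + ee (u / 2 ^ (l + 1))) * a := by
      have := hUS.2
      rw [hadef, hbdef]; unfold lfr pnt
      convert this using 3 <;> push_cast <;> ring
    -- combine
    have key : ∀ c : ℝ, c = a ∨ c = b →
        (pnt F M x u 0 - pnt F M x u 1) * ((1 + γ) ^ (l+1))⁻¹ / 2 ^ (l+1) ≤ c ∧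
        c ≤ (pnt F M x u 0 - pnt F M x u 1) * (1 + γ) ^ (l+1) / 2 ^ (l+1) := by
      intro c hc
      have hhb : lfr F M x u l j * (1 + γ)⁻¹ / 2 ≤ c ∧ c ≤ lfr F M x u l j * (1 + γ) / 2 := by
        rcases hc with rfl | rfl
        · exact half_bounds hapos hbpos hsum hUSa hUSb hee0 hee
        · exact half_bounds hbpos hapos (by linarith [hsum]) hUSb hUSa hee0 hee
      have hγp : (0:ℝ) < 1 + γ := by linarith
      constructor
      · calc (pnt F M x u 0 - pnt F M x u 1) * ((1 + γ) ^ (l+1))⁻¹ / 2 ^ (l+1)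
            = ((pnt F M x u 0 - pnt F M x u 1) * ((1 + γ) ^ l)⁻¹ / 2 ^ l) * (1 + γ)⁻¹ / 2 := by
              rw [pow_succ, pow_succ, mul_inv]
              ring
        _ ≤ lfr F M x u l j * (1 + γ)⁻¹ / 2 := by
              have h1 : (0:ℝ) < (1 + γ)⁻¹ := by positivity
              have := mul_le_mul_of_nonneg_right pl h1.le
              linarith [mul_le_mul_of_nonneg_right this (by norm_num : (0:ℝ) ≤ (2:ℝ)⁻¹)]
        _ ≤ c := hhb.1
      · calc c ≤ lfr F M x u l j * (1 + γ) / 2 := hhb.2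
        _ ≤ ((pnt F M x u 0 - pnt F M x u 1) * (1 + γ) ^ l / 2 ^ l) * (1 + γ) / 2 := by
              have := mul_le_mul_of_nonneg_right pu hγp.le
              linarith [mul_le_mul_of_nonneg_right this (by norm_num : (0:ℝ) ≤ (2:ℝ)⁻¹)]
        _ = (pnt F M x u 0 - pnt F M x u 1) * (1 + γ) ^ (l+1) / 2 ^ (l+1) := by
              rw [pow_succ, pow_succ]; ring
    rcases hj with h' | h'
    · rw [h']; exact key a (Or.inl rfl)
    · rw [h']; exact key b (Or.inr rfl)


lemma sum_bounds (h : Hyp F) (us : USD F ee B) {M : ℕ} (hM1 : 1 ≤ M) {x u γ : ℝ}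
    (hu : 0 < u) (hγ0 : 0 < γ) (hsc : ∀ t : ℝ, 0 < t → t ≤ u / 2 → ee t ≤ γ) (L : ℕ) :
    ∀ i : ℕ, i ≤ 2 ^ L →
      (i : ℝ) / 2 ^ L * ((pnt F M x u 0 - pnt F M x u 1) * ((1 + γ) ^ L)⁻¹) ≤
        pnt F M x u 0 - pnt F M x u ((i : ℝ) / 2 ^ L) ∧
      pnt F M x u 0 - pnt F M x u ((i : ℝ) / 2 ^ L) ≤
        (i : ℝ) / 2 ^ L * ((pnt F M x u 0 - pnt F M x u 1) * (1 + γ) ^ L) := by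
  intro i
  induction i with
  | zero => intro _; norm_num
  | succ i ih =>
    intro hi
    obtain ⟨l1, l2⟩ := ih (by omega)
    obtain ⟨m1, m2⟩ := leaf_bounds h us (x := x) hM1 hu hγ0 hsc L i (by omega)
    have hcast : ((i + 1 : ℕ) : ℝ) = (i : ℝ) + 1 := by push_cast; ring
    have hsplit : pnt F M x u 0 - pnt F M x u (((i : ℝ) + 1) / 2 ^ L)
        = (pnt F M x u 0 - pnt F M x u ((i : ℝ) / 2 ^ L)) + lfr F M x u L i := by
      unfold lfr; ring
    rw [hcast, hsplit]
    constructor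
    · have e : ((i : ℝ) + 1) / 2 ^ L * ((pnt F M x u 0 - pnt F M x u 1) * ((1 + γ) ^ L)⁻¹)
          = (i : ℝ) / 2 ^ L * ((pnt F M x u 0 - pnt F M x u 1) * ((1 + γ) ^ L)⁻¹)
            + (pnt F M x u 0 - pnt F M x u 1) * ((1 + γ) ^ L)⁻¹ / 2 ^ L := by ring
      rw [e]; exact add_le_add l1 m1
    · have e : ((i : ℝ) + 1) / 2 ^ L * ((pnt F M x u 0 - pnt F M x u 1) * (1 + γ) ^ L)
          = (i : ℝ) / 2 ^ L * ((pnt F M x u 0 - pnt F M x u 1) * (1 + γ) ^ L)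
            + (pnt F M x u 0 - pnt F M x u 1) * (1 + γ) ^ L / 2 ^ L := by ring
      rw [e]; exact add_le_add l2 m2

lemma master (h : Hyp F) (us : USD F ee B) {δ : ℝ} (hδ : 0 < δ) :
    ∃ u₀ : ℝ, 0 < u₀ ∧ ∀ (M : ℕ) (x u θ : ℝ), 0 < u → u ≤ u₀ → 0 ≤ θ → θ ≤ 1 →
      |(Finv F M x - Finv F M (x - θ * u)) - θ * (Finv F M x - Finv F M (x - u))| ≤
        δ * (Finv F M x - Finv F M (x - u)) := by
  obtain ⟨L, hL⟩ : ∃ L : ℕ, ((1:ℝ)/2) ^ L < δ / 8 :=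
    exists_pow_lt_of_lt_one (by linarith) (by norm_num)
  have hL' : (1:ℝ) / 2 ^ L < δ / 8 := by rwa [div_pow, one_pow] at hL
  have hP2 : (1:ℝ) ≤ (2:ℝ) ^ L := one_le_pow₀ (by norm_num)
  set γ : ℝ := min ((1:ℝ) / 2 ^ L) (δ / (4 * 2 ^ L)) with hγdef
  have hγ0 : 0 < γ := lt_min (by positivity) (by positivity)
  have hγ1 : γ ≤ 1 := le_trans (min_le_left _ _) (by rw [div_le_one (by positivity)]; exact hP2)
  have hPione : (1:ℝ) ≤ (1 + γ) ^ L := one_le_pow₀ (by linarith)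
  have hPidelta : (1 + γ) ^ L - 1 ≤ δ / 4 := by
    have h1 := pow_one_add_le hγ0.le hγ1 L
    have h2 : γ ≤ δ / (4 * 2 ^ L) := min_le_right _ _
    have h3 : ((2:ℝ) ^ L - 1) * γ ≤ 2 ^ L * γ := by nlinarith
    have h4 : (2:ℝ) ^ L * γ ≤ 2 ^ L * (δ / (4 * 2 ^ L)) :=
      mul_le_mul_of_nonneg_left h2 (by positivity)
    have h5 : (2:ℝ) ^ L * (δ / (4 * 2 ^ L)) = δ / 4 := by field_simp
    linarith
  have hPitwo : (1 + γ) ^ L ≤ 2 := by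
    have h1 := pow_one_add_le hγ0.le hγ1 L
    have h2 : γ ≤ 1 / 2 ^ L := min_le_left _ _
    have h3 : ((2:ℝ) ^ L - 1) * γ ≤ 2 ^ L * γ := by nlinarith
    have h4 : (2:ℝ) ^ L * γ ≤ 2 ^ L * (1 / 2 ^ L) := mul_le_mul_of_nonneg_left h2 (by positivity)
    have h5 : (2:ℝ) ^ L * ((1:ℝ) / 2 ^ L) = 1 := by field_simp
    linarith
  obtain ⟨r, hr0, hr⟩ : ∃ r, 0 < r ∧ ∀ t : ℝ, 0 < t → t < r → ee t ≤ γ := by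
    have hball := Metric.tendsto_nhdsWithin_nhds.mp us.tend γ hγ0
    obtain ⟨r, hr0, hrr⟩ := hball
    refine ⟨r, hr0, fun t ht htr => ?_⟩
    have h1 : dist t 0 < r := by rw [Real.dist_eq, sub_zero, abs_of_pos ht]; exact htr
    have h2 := hrr (Set.mem_Ioi.mpr ht) h1
    rw [Real.dist_eq, sub_zero] at h2
    exact (lt_of_abs_lt h2).le
  refine ⟨r / 2, by positivity, ?_⟩
  intro M x u θ hu huu hθ0 hθ1
  rcases Nat.eq_zero_or_pos M with hM | hM
  · subst hM
    simp only [h.finv_one_id]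
    rw [show (x - (x - θ * u)) - θ * (x - (x - u)) = 0 by ring, abs_zero,
      show x - (x - u) = u by ring]
    positivity
  have hM1 : 1 ≤ M := hM
  have hsc : ∀ t : ℝ, 0 < t → t ≤ u / 2 → ee t ≤ γ := fun t ht htu => hr t ht (by linarith)
  have hpnt0 : Finv F M x = pnt F M x u 0 := by unfold pnt; norm_num
  have hpnt1 : Finv F M (x - u) = pnt F M x u 1 := by unfold pnt; norm_num
  have hpntθ : Finv F M (x - θ * u) = pnt F M x u θ := rfl
  have hDen : 0 < pnt F M x u 0 - pnt F M x u 1 := sub_pos.mpr (pnt_lt h hu one_pos)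
  set i : ℕ := min ⌊θ * 2 ^ L⌋₊ (2 ^ L - 1) with hidef
  have h2L1 : 1 ≤ 2 ^ L := Nat.one_le_two_pow
  have hiL : i + 1 ≤ 2 ^ L := by omega
  have hfl : (i : ℝ) ≤ θ * 2 ^ L := by
    have h1 : (⌊θ * 2 ^ L⌋₊ : ℝ) ≤ θ * 2 ^ L := Nat.floor_le (by positivity)
    have h2 : i ≤ ⌊θ * 2 ^ L⌋₊ := min_le_left _ _
    have h3 : (i : ℝ) ≤ (⌊θ * 2 ^ L⌋₊ : ℝ) := Nat.cast_le.mpr h2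
    linarith
  have hfu : θ * 2 ^ L ≤ (i : ℝ) + 1 := by
    have h1 : θ * 2 ^ L < (⌊θ * 2 ^ L⌋₊ : ℝ) + 1 := Nat.lt_floor_add_one _
    have hpow : θ * 2 ^ L ≤ (2:ℝ) ^ L := by nlinarith [pow_pos (by norm_num : (0:ℝ) < 2) L]
    rcases le_total (⌊θ * 2 ^ L⌋₊) (2 ^ L - 1) with hc | hc
    · have he : i = ⌊θ * 2 ^ L⌋₊ := min_eq_left hc
      rw [he]; linarith
    · have he : i = 2 ^ L - 1 := min_eq_right hc
      have e1 : ((i : ℕ) : ℝ) + 1 = ((i + 1 : ℕ) : ℝ) := by push_cast; ring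
      have e2 : i + 1 = 2 ^ L := by omega
      rw [e1, e2]
      push_cast
      exact hpow
  have hg1 : (i : ℝ) / 2 ^ L ≤ θ := by
    rw [div_le_iff₀ (by positivity : (0:ℝ) < 2 ^ L)]; exact hfl
  have hg2 : θ ≤ ((i : ℝ) + 1) / 2 ^ L := by
    rw [le_div_iff₀ (by positivity : (0:ℝ) < 2 ^ L)]; exact hfu
  obtain ⟨c2l, -⟩ := sum_bounds h us (x := x) hM1 hu hγ0 hsc L i (by omega)
  obtain ⟨-, c2u⟩ := sum_bounds h us (x := x) hM1 hu hγ0 hsc L (i + 1) hiL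
  have hcast : ((i + 1 : ℕ) : ℝ) = (i : ℝ) + 1 := by push_cast; ring
  rw [hcast] at c2u
  have hmon1 : pnt F M x u 0 - pnt F M x u θ
      ≤ pnt F M x u 0 - pnt F M x u (((i : ℝ) + 1) / 2 ^ L) := by
    have := pnt_le h (M := M) (x := x) hu hg2; linarith
  have hmon2 : pnt F M x u 0 - pnt F M x u ((i : ℝ) / 2 ^ L)
      ≤ pnt F M x u 0 - pnt F M x u θ := by
    have := pnt_le h (M := M) (x := x) hu hg1; linarith
  set Pi : ℝ := (1 + γ) ^ L with hPidef
  have hPipos : 0 < Pi := by positivity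
  have hPiinv1 : Pi⁻¹ ≤ 1 := by
    have h2 := mul_le_mul_of_nonneg_left hPione (inv_nonneg.mpr hPipos.le)
    rw [mul_one, inv_mul_cancel₀ (ne_of_gt hPipos)] at h2
    exact h2
  have hPiinv0 : (0:ℝ) ≤ Pi⁻¹ := inv_nonneg.mpr hPipos.le
  have hPinv2 : 1 - Pi⁻¹ ≤ Pi - 1 := by
    have h0 : Pi * Pi⁻¹ = 1 := mul_inv_cancel₀ (ne_of_gt hPipos)
    nlinarith [sq_nonneg (Pi - 1)]
  have hp2L : (0:ℝ) < 1 / 2 ^ L := by positivity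
  rw [hpnt0, hpnt1, hpntθ, abs_le]
  constructor
  · have k1 : θ - 1 / 2 ^ L ≤ (i : ℝ) / 2 ^ L := by
      have e : ((i : ℝ) + 1) / 2 ^ L = (i : ℝ) / 2 ^ L + 1 / 2 ^ L := by ring
      rw [e] at hg2; linarith
    have q0 : (0:ℝ) ≤ (pnt F M x u 0 - pnt F M x u 1) * Pi⁻¹ :=
      mul_nonneg hDen.le hPiinv0
    have q1 : (θ - 1 / 2 ^ L) * ((pnt F M x u 0 - pnt F M x u 1) * Pi⁻¹)
        ≤ pnt F M x u 0 - pnt F M x u θ :=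
      le_trans (mul_le_mul_of_nonneg_right k1 q0) (le_trans c2l hmon2)
    have q4 : θ * (1 - Pi⁻¹) ≤ δ / 4 := by
      nlinarith [mul_le_mul_of_nonneg_right hθ1 (by linarith : (0:ℝ) ≤ 1 - Pi⁻¹)]
    have q5 : Pi⁻¹ * (1 / 2 ^ L) ≤ δ / 8 := by nlinarith
    nlinarith [mul_le_mul_of_nonneg_left q4 hDen.le, mul_le_mul_of_nonneg_left q5 hDen.le]
  · have k2 : ((i : ℝ) + 1) / 2 ^ L ≤ θ + 1 / 2 ^ L := by
      have e : ((i : ℝ) + 1) / 2 ^ L = (i : ℝ) / 2 ^ L + 1 / 2 ^ L := by ring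
      rw [e]; linarith
    have q0 : (0:ℝ) ≤ (pnt F M x u 0 - pnt F M x u 1) * Pi := mul_nonneg hDen.le hPipos.le
    have q1 : pnt F M x u 0 - pnt F M x u θ
        ≤ (θ + 1 / 2 ^ L) * ((pnt F M x u 0 - pnt F M x u 1) * Pi) :=
      le_trans (le_trans hmon1 c2u) (mul_le_mul_of_nonneg_right k2 q0)
    have q4 : θ * (Pi - 1) ≤ δ / 4 := by
      nlinarith [mul_le_mul_of_nonneg_right hθ1 (by linarith : (0:ℝ) ≤ Pi - 1)]
    have q5 : Pi * (1 / 2 ^ L) ≤ δ / 4 := by nlinarith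
    nlinarith [mul_le_mul_of_nonneg_left q4 hDen.le, mul_le_mul_of_nonneg_left q5 hDen.le]


lemma scale_le (h : Hyp F) (us : USD F ee B) (n : ℕ) :
    usq F n ≤ ((1 + B) / (2 + B)) ^ n ∧ vs F n ≤ ((1 + B) / (2 + B)) ^ n := by
  have hB := us.Bpos
  have hlam0 : 0 < (1 + B) / (2 + B) := by positivity
  induction n with
  | zero =>
    constructor
    · simp [usq, h.finv_one_id]
    · simp [vs, h.finv_one_id]
  | succ n ih =>
    obtain ⟨ih1, ih2⟩ := ih
    obtain ⟨d1, d2⟩ := decay h us n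
    constructor
    · calc usq F (n+1) ≤ (1 + B) / (2 + B) * usq F n := d1
      _ ≤ (1 + B) / (2 + B) * ((1 + B) / (2 + B)) ^ n :=
          mul_le_mul_of_nonneg_left ih1 hlam0.le
      _ = ((1 + B) / (2 + B)) ^ (n + 1) := by rw [pow_succ]; ring
    · calc vs F (n+1) ≤ (1 + B) / (2 + B) * vs F n := d2
      _ ≤ (1 + B) / (2 + B) * ((1 + B) / (2 + B)) ^ n :=
          mul_le_mul_of_nonneg_left ih2 hlam0.le
      _ = ((1 + B) / (2 + B)) ^ (n + 1) := by rw [pow_succ]; ring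

lemma ratio_vu (h : Hyp F) (us : USD F ee B) (n : ℕ) :
    vs F n ≤ (1 + B) * usq F n ∧ usq F n ≤ (1 + B) * vs F n := by
  have hB := us.Bpos
  rcases Nat.eq_zero_or_pos n with rfl | hn
  · have h1 : usq F 0 = 1 := by simp [usq, h.finv_one_id]
    have h2 : vs F 0 = 1 := by simp [vs, h.finv_one_id]
    rw [h1, h2]; constructor <;> nlinarith
  · have he1 : 0 < ee 1 := us.pos 1 one_pos
    have heB : ee 1 ≤ B := us.bdd 1 one_pos
    have hts := us.two_sided h hn one_pos 0
    rw [zero_add, zero_sub, h.finv_zero] at hts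
    have e1 : Finv F n 1 - 0 = vs F n := by rw [sub_zero]; rfl
    have e2 : 0 - Finv F n (-1) = usq F n := by rw [zero_sub]; rfl
    rw [e1, e2] at hts
    have hv := h.vs_pos n
    have hu := h.usq_pos n
    constructor
    · nlinarith [hts.1]
    · nlinarith [hts.2]

lemma pair_ratio (h : Hyp F) (us : USD F ee B) {δ : ℝ} (hδ : 0 < δ) :
    ∃ n₀ : ℕ, ∀ j : ℕ, n₀ ≤ j → ∀ (M : ℕ) (x : ℝ),
      |(Finv F M (x + vs F j) - Finv F M x) / (Finv F M x - Finv F M (x - usq F j)) -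
        vs F j / usq F j| ≤ δ := by
  have hB := us.Bpos
  set tm : ℝ := 1 / (2 + B) with htm
  have htm0 : 0 < tm := by positivity
  set d : ℝ := min (tm / 2) (δ * tm ^ 2 / 2) with hd
  have hd0 : 0 < d := lt_min (by positivity) (by positivity)
  obtain ⟨u₀, hu₀, hmas⟩ := master h us hd0
  set lam : ℝ := (1 + B) / (2 + B) with hlam
  have hlam0 : 0 < lam := by positivity
  have hlam1 : lam < 1 := by rw [hlam, div_lt_one (by linarith)]; linarith
  obtain ⟨n₀, hn₀⟩ : ∃ n₀ : ℕ, lam ^ n₀ < u₀ / 2 :=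
    exists_pow_lt_of_lt_one (by positivity) hlam1
  refine ⟨n₀, fun j hj M x => ?_⟩
  have hlamj : lam ^ j ≤ lam ^ n₀ := pow_le_pow_of_le_one hlam0.le hlam1.le hj
  obtain ⟨hsu, hsv⟩ := scale_le h us j
  set v : ℝ := vs F j with hvdef
  set u : ℝ := usq F j with hudef
  have hv0 : 0 < v := h.vs_pos j
  have hu0 : 0 < u := h.usq_pos j
  have hU0 : 0 < u + v := by linarith
  have hUu₀ : u + v ≤ u₀ := by
    have h2 : u + v ≤ 2 * lam ^ j := by rw [hlam]; linarith
    linarith [hlamj, hn₀]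
  obtain ⟨hr1, hr2⟩ := ratio_vu h us j
  -- apply master at x + v with width u + v and θ = v/(u+v)
  have hθ0 : 0 ≤ v / (u + v) := by positivity
  have hθ1 : v / (u + v) ≤ 1 := by rw [div_le_one hU0]; linarith
  have hmm := hmas M (x + v) (u + v) (v / (u + v)) hU0 hUu₀ hθ0 hθ1
  have e1 : x + v - v / (u + v) * (u + v) = x := by field_simp; ring
  have e2 : x + v - (u + v) = x - u := by ring
  rw [e1, e2] at hmm
  set A : ℝ := Finv F M (x + v) - Finv F M x with hA
  set S : ℝ := Finv F M (x + v) - Finv F M (x - u) with hS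
  set C : ℝ := Finv F M x - Finv F M (x - u) with hC
  have hA0 : 0 < A := h.diff_pos (by linarith)
  have hC0 : 0 < C := h.diff_pos (by linarith)
  have hS0 : 0 < S := h.diff_pos (by linarith)
  have hSAC : S = A + C := by rw [hA, hS, hC]; ring
  have hθ2 : tm ≤ u / (u + v) := by
    rw [htm, div_le_div_iff₀ (by linarith) hU0]
    linarith
  have hClb : tm / 2 * S ≤ C := by
    have hd1 : d ≤ tm / 2 := min_le_left _ _
    have hCd : |C - u / (u + v) * S| ≤ d * S := by
      have hdiv : u / (u + v) + v / (u + v) = 1 := by field_simp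
      have e3 : C - u / (u + v) * S = -(A - v / (u + v) * S) := by
        linear_combination (-S) * hdiv - hSAC
      rw [e3, abs_neg]; exact hmm
    have h4 := abs_le.mp hCd
    have h5 : u / (u + v) * S ≥ tm * S := mul_le_mul_of_nonneg_right hθ2 hS0.le
    nlinarith [h4.1]
  -- the difference identity
  have hCu : 0 < C * u := mul_pos hC0 hu0
  have hid : A / C - v / u = (A * u - C * v) / (C * u) :=
    div_sub_div A v (ne_of_gt hC0) (ne_of_gt hu0)
  have hCd : |C - u / (u + v) * S| ≤ d * S := by
    have hdiv : u / (u + v) + v / (u + v) = 1 := by field_simp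
    have e3 : C - u / (u + v) * S = -(A - v / (u + v) * S) := by
      linear_combination (-S) * hdiv - hSAC
    rw [e3, abs_neg]; exact hmm
  have hnum : |A * u - C * v| ≤ d * S * (u + v) := by
    have e4 : A * u - C * v = (A - v / (u + v) * S) * u - (C - u / (u + v) * S) * v := by
      field_simp; ring
    rw [e4]
    calc |(A - v / (u + v) * S) * u - (C - u / (u + v) * S) * v|
        ≤ |(A - v / (u + v) * S) * u| + |(C - u / (u + v) * S) * v| := abs_sub _ _
    _ = |A - v / (u + v) * S| * u + |C - u / (u + v) * S| * v := by
        rw [abs_mul, abs_mul, abs_of_pos hu0, abs_of_pos hv0]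
    _ ≤ d * S * u + d * S * v := by
        have w1 := mul_le_mul_of_nonneg_right hmm hu0.le
        have w2 := mul_le_mul_of_nonneg_right hCd hv0.le
        linarith
    _ = d * S * (u + v) := by ring
  have hden : tm ^ 2 / 2 * (S * (u + v)) ≤ C * u := by
    have hub : tm * (u + v) ≤ u := (le_div_iff₀ hU0).mp hθ2
    have hmm2 := mul_le_mul hClb hub (by positivity) hC0.le
    nlinarith [hmm2]
  rw [hid, abs_div, abs_of_pos hCu, div_le_iff₀ hCu]
  calc |A * u - C * v| ≤ d * S * (u + v) := hnum
  _ ≤ δ * (C * u) := by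
      have hd2 : d ≤ δ * tm ^ 2 / 2 := min_le_right _ _
      have h7 : d * (S * (u + v)) ≤ δ * tm ^ 2 / 2 * (S * (u + v)) :=
        mul_le_mul_of_nonneg_right hd2 (by positivity)
      have h8 : δ * (tm ^ 2 / 2 * (S * (u + v))) ≤ δ * (C * u) :=
        mul_le_mul_of_nonneg_left hden hδ.le
      have e9 : d * S * (u + v) = d * (S * (u + v)) := by ring
      rw [e9]
      exact le_trans h7 (le_trans (le_of_eq (by ring)) h8)


/-- length of the `k`-th interval at level `m` -/
noncomputable def lgt (F : ℝ → ℝ) (m k : ℕ) : ℝ := Finv F m ((k : ℝ) + 1) - Finv F m (k : ℝ)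

lemma lgt_pos (h : Hyp F) (m k : ℕ) : 0 < lgt F m k := h.diff_pos (by linarith)

lemma Dstar_eq (v : ℕ → Fin 2) (m : ℕ) :
    DstarSeq F v (m + 1) = lgt F m (kseq 2 (shft v) m) / lgt F (m + 1) (kseq 2 v (m + 1)) := by
  unfold DstarSeq lgt
  simp only [Nat.add_sub_cancel]

lemma kseq_succ (v : ℕ → Fin 2) (n : ℕ) :
    kseq 2 v (n + 1) = (v 0 : ℕ) + 2 * kseq 2 (shft v) n := by
  unfold kseq shft
  rw [Finset.sum_range_succ', Finset.mul_sum]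
  simp only [pow_zero, mul_one]
  rw [Nat.add_comm]
  congr 1
  apply Finset.sum_congr rfl
  intro q _
  rw [pow_succ]
  ring

lemma shft_aseq (i : ℕ) (w : ℕ → Fin 2) : shft (aseq (i + 1) w) = aseq i w := by
  funext q
  simp only [shft, aseq]
  rcases lt_trichotomy q i with hq | rfl | hq
  · rw [if_pos (by omega), if_pos hq]
  · rw [if_neg (by omega), if_pos rfl, if_neg (by omega), if_pos rfl]
  · rw [if_neg (by omega), if_neg (by omega), if_neg (by omega), if_neg (by omega)]
    congr 1
    omega

lemma shft_bseq (i : ℕ) (w : ℕ → Fin 2) : shft (bseq (i + 1) w) = bseq i w := by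
  funext q
  simp only [shft, bseq]
  rcases lt_trichotomy q i with hq | rfl | hq
  · rw [if_pos (by omega), if_pos hq]
  · rw [if_neg (by omega), if_pos rfl, if_neg (by omega), if_pos rfl]
  · rw [if_neg (by omega), if_neg (by omega), if_neg (by omega), if_neg (by omega)]
    congr 1
    omega

lemma shft_aseq0 (w : ℕ → Fin 2) : shft (aseq 0 w) = w := by
  funext q
  simp only [shft, aseq]
  rw [if_neg (by omega), if_neg (by omega)]
  congr 1

lemma shft_bseq0 (w : ℕ → Fin 2) : shft (bseq 0 w) = w := by
  funext q
  simp only [shft, bseq]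
  rw [if_neg (by omega), if_neg (by omega)]
  congr 1

lemma Dstar_ge_one (h : Hyp F) (v : ℕ → Fin 2) (m : ℕ) : 1 ≤ DstarSeq F v (m + 1) := by
  rw [Dstar_eq, le_div_iff₀ (lgt_pos h _ _), one_mul]
  set k' := kseq 2 (shft v) m with hk'
  have hk : kseq 2 v (m + 1) = (v 0 : ℕ) + 2 * k' := kseq_succ v m
  have c1 : ((2 * k' : ℕ) : ℝ) = ((k' : ℕ) : ℝ) * 2 ^ 1 := by push_cast; ring
  have c2 : ((2 * k' + 2 : ℕ) : ℝ) = ((k' + 1 : ℕ) : ℝ) * 2 ^ 1 := by push_cast; ring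
  have e1 : Finv F (m + 1) ((2 * k' : ℕ) : ℝ) = Finv F m ((k' : ℕ) : ℝ) := by
    rw [show m + 1 = 1 + m from by omega, h.finv_comp 1 m, c1, h.finv_pow_mul 1 k']
  have e2 : Finv F (m + 1) ((2 * k' + 2 : ℕ) : ℝ) = Finv F m ((k' + 1 : ℕ) : ℝ) := by
    rw [show m + 1 = 1 + m from by omega, h.finv_comp 1 m, c2, h.finv_pow_mul 1 (k' + 1)]
  have hpar : lgt F m k' = Finv F (m + 1) ((2 * k' + 2 : ℕ) : ℝ)
      - Finv F (m + 1) ((2 * k' : ℕ) : ℝ) := by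
    rw [e1, e2]
    unfold lgt
    push_cast
    ring
  rw [hpar]
  unfold lgt
  have hv0 : (v 0 : ℕ) < 2 := (v 0).is_lt
  have hmono := (h.finvMono (m + 1)).monotone
  have h1 : Finv F (m + 1) ((kseq 2 v (m + 1) : ℝ) + 1)
      ≤ Finv F (m + 1) ((2 * k' + 2 : ℕ) : ℝ) := by
    apply hmono
    rw [hk]
    push_cast
    have : (v 0 : ℕ) ≤ 1 := by omega
    have := (Nat.cast_le (α := ℝ)).mpr this
    push_cast at this
    linarith
  have h2 : Finv F (m + 1) ((2 * k' : ℕ) : ℝ) ≤ Finv F (m + 1) ((kseq 2 v (m + 1) : ℝ)) := by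
    apply hmono
    rw [hk]
    push_cast
    have hnn : (0:ℝ) ≤ ((v 0 : ℕ) : ℝ) := Nat.cast_nonneg _
    linarith
  linarith

lemma telescope (h : Hyp F) (w : ℕ → Fin 2) (N : ℕ) : ∀ m : ℕ,
    ∏ i ∈ Finset.range (N + 1),
        (DstarSeq F (aseq i w) (m + 1 + i) / DstarSeq F (bseq i w) (m + 1 + i))
      = lgt F (m + 1 + N) (kseq 2 (bseq N w) (m + 1 + N)) /
        lgt F (m + 1 + N) (kseq 2 (aseq N w) (m + 1 + N)) := by
  induction N with
  | zero =>
    intro m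
    rw [Finset.prod_range_one]
    simp only [Nat.add_zero]
    rw [Dstar_eq, Dstar_eq, shft_aseq0, shft_bseq0]
    have hP := (lgt_pos h m (kseq 2 w m)).ne'
    have hCa := (lgt_pos h (m + 1) (kseq 2 (aseq 0 w) (m + 1))).ne'
    have hCb := (lgt_pos h (m + 1) (kseq 2 (bseq 0 w) (m + 1))).ne'
    field_simp
  | succ N ih =>
    intro m
    rw [Finset.prod_range_succ, ih m]
    have e : m + 1 + (N + 1) = (m + 1 + N) + 1 := by omega
    rw [e, Dstar_eq, Dstar_eq, shft_aseq, shft_bseq]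
    have hLa := (lgt_pos h (m + 1 + N) (kseq 2 (aseq N w) (m + 1 + N))).ne'
    have hLb := (lgt_pos h (m + 1 + N) (kseq 2 (bseq N w) (m + 1 + N))).ne'
    have hCa := (lgt_pos h (m + 1 + N + 1) (kseq 2 (aseq (N + 1) w) (m + 1 + N + 1))).ne'
    have hCb := (lgt_pos h (m + 1 + N + 1) (kseq 2 (bseq (N + 1) w) (m + 1 + N + 1))).ne'
    field_simp

lemma geom2 (N : ℕ) : (∑ q ∈ Finset.range N, 2 ^ q) + 1 = 2 ^ N := by
  induction N with
  | zero => simp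
  | succ N ih =>
    rw [Finset.sum_range_succ, pow_succ]
    omega

lemma kseq_aseq (N : ℕ) (w : ℕ → Fin 2) : ∀ n : ℕ,
    kseq 2 (aseq N w) (N + 1 + n) + 1 = 2 ^ N + 2 ^ (N + 1) * kseq 2 w n := by
  intro n
  induction n with
  | zero =>
    rw [Nat.add_zero]
    unfold kseq
    rw [Finset.sum_range_succ]
    have hN : aseq N w N = 0 := by simp [aseq]
    rw [hN]
    simp only [Fin.val_zero, zero_mul, add_zero, Finset.range_zero, Finset.sum_empty, mul_zero]
    have hsum : ∑ q ∈ Finset.range N, ((aseq N w q : ℕ) * 2 ^ q) = ∑ q ∈ Finset.range N, 2 ^ q := by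
      apply Finset.sum_congr rfl
      intro q hq
      have hq' : q < N := Finset.mem_range.mp hq
      have : aseq N w q = 1 := by simp only [aseq]; rw [if_pos hq']
      rw [this]
      simp
    rw [hsum]
    have := geom2 N
    omega
  | succ n ihn =>
    have e : N + 1 + (n + 1) = (N + 1 + n) + 1 := by omega
    rw [e]
    unfold kseq
    rw [Finset.sum_range_succ, Finset.sum_range_succ]
    have hterm : aseq N w (N + 1 + n) = w n := by
      simp only [aseq]
      rw [if_neg (by omega), if_neg (by omega)]
      congr 1
      omega
    rw [hterm]
    have hpow : 2 ^ (N + 1) * ((w n : ℕ) * 2 ^ n) = (w n : ℕ) * 2 ^ (N + 1 + n) := by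
      rw [pow_add]
      ring
    unfold kseq at ihn
    rw [Nat.mul_add, hpow]
    linarith [ihn]

lemma kseq_bseq (N : ℕ) (w : ℕ → Fin 2) : ∀ n : ℕ,
    kseq 2 (bseq N w) (N + 1 + n) = 2 ^ N + 2 ^ (N + 1) * kseq 2 w n := by
  intro n
  induction n with
  | zero =>
    rw [Nat.add_zero]
    unfold kseq
    rw [Finset.sum_range_succ]
    have hN : bseq N w N = 1 := by simp [bseq]
    rw [hN]
    simp only [Finset.range_zero, Finset.sum_empty, mul_zero]
    have hsum : ∑ q ∈ Finset.range N, ((bseq N w q : ℕ) * 2 ^ q) = 0 := by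
      apply Finset.sum_eq_zero
      intro q hq
      have hq' : q < N := Finset.mem_range.mp hq
      have : bseq N w q = 0 := by simp only [bseq]; rw [if_pos hq']
      rw [this]
      simp
    rw [hsum]
    simp
  | succ n ihn =>
    have e : N + 1 + (n + 1) = (N + 1 + n) + 1 := by omega
    rw [e]
    unfold kseq
    rw [Finset.sum_range_succ, Finset.sum_range_succ]
    have hterm : bseq N w (N + 1 + n) = w n := by
      simp only [bseq]
      rw [if_neg (by omega), if_neg (by omega)]
      congr 1
      omega
    rw [hterm]
    have hpow : 2 ^ (N + 1) * ((w n : ℕ) * 2 ^ n) = (w n : ℕ) * 2 ^ (N + 1 + n) := by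
      rw [pow_add]
      ring
    unfold kseq at ihn
    rw [Nat.mul_add, hpow]
    linarith [ihn]


noncomputable def alpha (F : ℝ → ℝ) (n : ℕ) : ℝ := vs F n / usq F n

lemma alpha_pair_eq (h : Hyp F) {j n : ℕ} (hjn : j ≤ n) :
    (Finv F (n - j) (0 + vs F j) - Finv F (n - j) 0) /
      (Finv F (n - j) 0 - Finv F (n - j) (0 - usq F j)) = alpha F n := by
  have e1 : Finv F (n - j) (vs F j) = vs F n := by
    unfold vs
    rw [← h.finv_comp j (n - j) 1, show j + (n - j) = n from by omega]
  have e2 : Finv F (n - j) (-(usq F j)) = -(usq F n) := by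
    unfold usq
    simp only [neg_neg]
    rw [← h.finv_comp j (n - j) (-1), show j + (n - j) = n from by omega]
  rw [zero_add, zero_sub, h.finv_zero, e1, e2]
  unfold alpha
  rw [sub_zero, zero_sub, neg_neg]

lemma alpha_cauchy (h : Hyp F) (us : USD F ee B) {δ : ℝ} (hδ : 0 < δ) :
    ∃ n₀ : ℕ, ∀ j : ℕ, n₀ ≤ j → ∀ n : ℕ, j ≤ n → |alpha F n - alpha F j| ≤ δ := by
  obtain ⟨n₀, hn₀⟩ := pair_ratio h us hδ
  refine ⟨n₀, fun j hj n hn => ?_⟩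
  have := hn₀ j hj (n - j) 0
  rw [alpha_pair_eq h hn] at this
  exact this

lemma alpha_limit (h : Hyp F) (us : USD F ee B) :
    ∃ c : ℝ, ∀ δ : ℝ, 0 < δ → ∃ n₀ : ℕ, ∀ j : ℕ, n₀ ≤ j → |alpha F j - c| ≤ δ := by
  have hcs : CauchySeq (alpha F) := by
    rw [Metric.cauchySeq_iff']
    intro ε hε
    obtain ⟨n₀, hn₀⟩ := alpha_cauchy h us (half_pos hε)
    refine ⟨n₀, fun n hn => ?_⟩
    rw [Real.dist_eq]
    have := hn₀ n₀ le_rfl n hn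
    linarith
  obtain ⟨c, hc⟩ := cauchySeq_tendsto_of_complete hcs
  refine ⟨c, fun δ hδ => ?_⟩
  obtain ⟨n₀, hn₀⟩ := alpha_cauchy h us hδ
  refine ⟨n₀, fun j hj => ?_⟩
  have h1 : Tendsto (fun n => |alpha F n - alpha F j|) atTop (nhds |c - alpha F j|) :=
    (hc.sub_const _).abs
  have h2 := le_of_tendsto h1 (eventually_atTop.mpr ⟨j, fun n hn => hn₀ j hj n hn⟩)
  rw [abs_sub_comm]
  exact h2

/-- bridge: the telescoped ratio equals the pair expression -/
lemma ratio_to_pair (h : Hyp F) (w : ℕ → Fin 2) (N m : ℕ) :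
    lgt F (m + 1 + N) (kseq 2 (bseq N w) (m + 1 + N)) /
      lgt F (m + 1 + N) (kseq 2 (aseq N w) (m + 1 + N))
    = (Finv F (m + 1) (((2 * kseq 2 w m + 1 : ℕ) : ℝ) + vs F N) -
        Finv F (m + 1) ((2 * kseq 2 w m + 1 : ℕ) : ℝ)) /
      (Finv F (m + 1) ((2 * kseq 2 w m + 1 : ℕ) : ℝ) -
        Finv F (m + 1) (((2 * kseq 2 w m + 1 : ℕ) : ℝ) - usq F N)) := by
  set k : ℕ := kseq 2 w m with hk
  have hTa : m + 1 + N = N + 1 + m := by omega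
  have hKa := kseq_aseq N w m
  have hKb := kseq_bseq N w m
  set Ka : ℕ := kseq 2 (aseq N w) (m + 1 + N) with hKadef
  set Kb : ℕ := kseq 2 (bseq N w) (m + 1 + N) with hKbdef
  have hKa' : Ka + 1 = 2 ^ N + 2 ^ (N + 1) * k := by rw [hKadef, hTa]; exact hKa
  have hKb' : Kb = 2 ^ N + 2 ^ (N + 1) * k := by rw [hKbdef, hTa]; exact hKb
  have hcomp : ∀ y : ℝ, Finv F (m + 1 + N) y = Finv F (m + 1) (Finv F N y) := by
    intro y
    rw [show m + 1 + N = N + (m + 1) from by omega, h.finv_comp N (m + 1) y]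
  -- key values of Finv F N
  have hK1 : ((2 ^ N + 2 ^ (N + 1) * k : ℕ) : ℝ) = ((2 * k + 1 : ℕ) : ℝ) * 2 ^ N := by
    push_cast
    ring
  have ha : Finv F N ((2 ^ N + 2 ^ (N + 1) * k : ℕ) : ℝ) = ((2 * k + 1 : ℕ) : ℝ) := by
    rw [hK1, h.finv_pow_mul N (2 * k + 1)]
  have hb : Finv F N (((2 ^ N + 2 ^ (N + 1) * k : ℕ) : ℝ) + 1)
      = ((2 * k + 1 : ℕ) : ℝ) + vs F N := by
    have h2 := h.finv_nat_add N (2 * k + 1) 1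
    rw [hK1, show ((2 * k + 1 : ℕ) : ℝ) * 2 ^ N + 1
        = (1 : ℝ) + ((2 * k + 1 : ℕ) : ℝ) * 2 ^ N from by ring, h2]
    unfold vs
    ring
  have hc : Finv F N (((2 ^ N + 2 ^ (N + 1) * k : ℕ) : ℝ) - 1)
      = ((2 * k + 1 : ℕ) : ℝ) - usq F N := by
    have h2 := h.finv_nat_add N (2 * k + 1) (-1)
    rw [hK1, show ((2 * k + 1 : ℕ) : ℝ) * 2 ^ N - 1
        = (-1 : ℝ) + ((2 * k + 1 : ℕ) : ℝ) * 2 ^ N from by ring, h2]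
    unfold usq
    ring
  have eKb : lgt F (m + 1 + N) Kb
      = Finv F (m + 1) (((2 * k + 1 : ℕ) : ℝ) + vs F N)
        - Finv F (m + 1) ((2 * k + 1 : ℕ) : ℝ) := by
    unfold lgt
    rw [hcomp, hcomp,
      show ((Kb : ℕ) : ℝ) = ((2 ^ N + 2 ^ (N + 1) * k : ℕ) : ℝ) from by rw [hKb'],
      hb, ha]
  have eKa : lgt F (m + 1 + N) Ka
      = Finv F (m + 1) ((2 * k + 1 : ℕ) : ℝ)
        - Finv F (m + 1) (((2 * k + 1 : ℕ) : ℝ) - usq F N) := by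
    unfold lgt
    rw [hcomp, hcomp]
    have c1 : ((Ka : ℕ) : ℝ) + 1 = ((2 ^ N + 2 ^ (N + 1) * k : ℕ) : ℝ) := by
      rw [← hKa']
      push_cast
      ring
    have c2 : ((Ka : ℕ) : ℝ) = ((2 ^ N + 2 ^ (N + 1) * k : ℕ) : ℝ) - 1 := by
      rw [← hKa']
      push_cast
      ring
    rw [c1, ha, c2, hc]
  rw [eKa, eKb]


lemma DF_ge_one (h : Hyp F) {DF : (ℕ → Fin 2) → ℝ}
    (hDF : ∀ w : ℕ → Fin 2, Tendsto (fun n => DstarSeq F w n) atTop (nhds (DF w)))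
    (v : ℕ → Fin 2) : 1 ≤ DF v := by
  refine ge_of_tendsto (hDF v) (eventually_atTop.mpr ⟨1, fun m hm => ?_⟩)
  obtain ⟨m', rfl⟩ : ∃ m', m = m' + 1 := ⟨m - 1, by omega⟩
  exact Dstar_ge_one h v m'

lemma prod_tendsto (h : Hyp F) {DF : (ℕ → Fin 2) → ℝ}
    (hDF : ∀ w : ℕ → Fin 2, Tendsto (fun n => DstarSeq F w n) atTop (nhds (DF w)))
    (w : ℕ → Fin 2) (N : ℕ) :
    Tendsto (fun m : ℕ =>
        lgt F (m + 1 + N) (kseq 2 (bseq N w) (m + 1 + N)) /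
          lgt F (m + 1 + N) (kseq 2 (aseq N w) (m + 1 + N))) atTop
      (nhds (∏ i ∈ Finset.range (N + 1), DF (aseq i w) / DF (bseq i w))) := by
  have hfac : ∀ i : ℕ, Tendsto
      (fun m : ℕ => DstarSeq F (aseq i w) (m + 1 + i) / DstarSeq F (bseq i w) (m + 1 + i))
      atTop (nhds (DF (aseq i w) / DF (bseq i w))) := by
    intro i
    have hshift : Tendsto (fun m : ℕ => m + 1 + i) atTop atTop := by
      have := tendsto_add_atTop_nat (1 + i)
      refine this.congr fun m => by omega
    have ha : Tendsto (fun m : ℕ => DstarSeq F (aseq i w) (m + 1 + i)) atTop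
        (nhds (DF (aseq i w))) := (hDF (aseq i w)).comp hshift
    have hb : Tendsto (fun m : ℕ => DstarSeq F (bseq i w) (m + 1 + i)) atTop
        (nhds (DF (bseq i w))) := (hDF (bseq i w)).comp hshift
    exact ha.div hb (by linarith [DF_ge_one h hDF (bseq i w)])
  have hprod := tendsto_finset_prod (Finset.range (N + 1)) (fun i _ => hfac i)
  exact hprod.congr (fun m => telescope h w N m)


end Stmt15Aux

open Stmt15Aux

/-- compatibility condition: the infinite product
`∏_{i=0}^∞ D*(F)(a_i(w))/D*(F)(b_i(w))` converges uniformly in `w` to a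
constant independent of `w`. -/
theorem stmt_15 (F : ℝ → ℝ)
    (hmono : StrictMono F) (hbij : Function.Bijective F)
    (hdeg : ∀ x : ℝ, F (x + 1) = F x + 2) (hF0 : F 0 = 0)
    (husym : UnifSymm F)
    (DF : (ℕ → Fin 2) → ℝ)
    (hDF : ∀ w : ℕ → Fin 2, Tendsto (fun n => DstarSeq F w n) atTop (nhds (DF w))) :
    ∃ c : ℝ,
      TendstoUniformly
        (fun (n : ℕ) (w : ℕ → Fin 2) =>
          ∏ i ∈ Finset.range n, DF (aseq i w) / DF (bseq i w))
        (fun _ => c) atTop := by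
  obtain ⟨ee, hp, ⟨B, hB⟩, htd, hsym⟩ := husym
  have h : Hyp F := ⟨hmono, hbij, hdeg, hF0⟩
  have usd : USD F ee B := ⟨hp, hB, htd, hsym⟩
  obtain ⟨c, hc⟩ := alpha_limit h usd
  refine ⟨c, ?_⟩
  rw [Metric.tendstoUniformly_iff]
  intro η hη
  obtain ⟨n₁, hn₁⟩ := pair_ratio h usd (show (0:ℝ) < η / 3 by linarith)
  obtain ⟨n₂, hn₂⟩ := hc (η / 3) (by linarith)
  rw [eventually_atTop]
  refine ⟨max n₁ n₂ + 1, fun n hn w => ?_⟩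
  obtain ⟨N, rfl⟩ : ∃ N, n = N + 1 := ⟨n - 1, by omega⟩
  have hN1 : n₁ ≤ N := by omega
  have hN2 : n₂ ≤ N := by omega
  have hbnd : ∀ m : ℕ,
      |lgt F (m + 1 + N) (kseq 2 (bseq N w) (m + 1 + N)) /
        lgt F (m + 1 + N) (kseq 2 (aseq N w) (m + 1 + N)) - alpha F N| ≤ η / 3 := by
    intro m
    rw [ratio_to_pair h w N m]
    exact hn₁ N hN1 (m + 1) ((2 * kseq 2 w m + 1 : ℕ) : ℝ)
  have hten := prod_tendsto h hDF w N
  have hlim : |(∏ i ∈ Finset.range (N + 1), DF (aseq i w) / DF (bseq i w)) - alpha F N|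
      ≤ η / 3 := by
    have h1 : Tendsto
        (fun m : ℕ => |lgt F (m + 1 + N) (kseq 2 (bseq N w) (m + 1 + N)) /
          lgt F (m + 1 + N) (kseq 2 (aseq N w) (m + 1 + N)) - alpha F N|) atTop
        (nhds |(∏ i ∈ Finset.range (N + 1), DF (aseq i w) / DF (bseq i w)) - alpha F N|) :=
      (hten.sub_const _).abs
    exact le_of_tendsto h1 (Eventually.of_forall hbnd)
  have hz := hn₂ N hN2
  rw [Real.dist_eq]
  have htri : |c - ∏ i ∈ Finset.range (N + 1), DF (aseq i w) / DF (bseq i w)|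
      ≤ |c - alpha F N| + |alpha F N - ∏ i ∈ Finset.range (N + 1), DF (aseq i w) / DF (bseq i w)| :=
    abs_sub_le _ _ _
  have e1 : |c - alpha F N| = |alpha F N - c| := abs_sub_comm _ _
  have e2 : |alpha F N - ∏ i ∈ Finset.range (N + 1), DF (aseq i w) / DF (bseq i w)|
      = |(∏ i ∈ Finset.range (N + 1), DF (aseq i w) / DF (bseq i w)) - alpha F N| :=
    abs_sub_comm _ _
  calc |c - ∏ i ∈ Finset.range (N + 1), DF (aseq i w) / DF (bseq i w)|
      ≤ η / 3 + η / 3 := by linarith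
  _ < η := by linarith
end
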